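/- arXiv:2604.26729 — 6 statements merged into one kernel-verified Lean document; each statement's English description precedes it below -/
import Mathlib

section
/- Let D, Z be {0,1}-valued random variables and X a random variable. Suppose the pair (D(0), D(1)) of potential treatments is conditionally independent of Z given X, that D = Z·D(1) + (1-Z)·D(0), that 0 < P(Z = 1 | X) < 1 a.s., and that P(D(1) ≥ D(0) | X) = 1 (monotonicity). Then P(D(1) > D(0) | X) = P(D = 1 | X, Z = 1) - P(D = 1 | X, Z = 0) almost surely. -/
open MeasureTheory Real

/-- The σ-algebra generated by a map X. -/
def sigmaX {Ω 𝓧 : Type*} [MeasurableSpace 𝓧] (X : Ω → 𝓧) : MeasurableSpace Ω :=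
  MeasurableSpace.comap X inferInstance

/-- Identification of the conditional complier probability:
P(D(1)>D(0) | X) = P(D=1 | X, Z=1) - P(D=1 | X, Z=0), where the conditional
probabilities given (X, Z=z) are expressed as ratios of conditional
expectations given X. -/
theorem stmt4 {Ω 𝓧 : Type*} [MeasurableSpace Ω] [MeasurableSpace 𝓧]
    (P : Measure Ω) [IsProbabilityMeasure P]
    (X : Ω → 𝓧) (hX : Measurable X)
    (Z D D0 D1 : Ω → ℝ)
    (hZm : Measurable Z) (hD0m : Measurable D0) (hD1m : Measurable D1)
    (hZ01 : ∀ ω, Z ω = 0 ∨ Z ω = 1)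
    (hD0 : ∀ ω, D0 ω = 0 ∨ D0 ω = 1) (hD1 : ∀ ω, D1 ω = 0 ∨ D1 ω = 1)
    (hcons : ∀ ω, D ω = Z ω * D1 ω + (1 - Z ω) * D0 ω)
    (hmono : ∀ᵐ ω ∂P, D0 ω ≤ D1 ω)
    (g₀ : Ω → ℝ) (hg₀ : g₀ =ᵐ[P] P[Z | sigmaX X])
    (hpos : ∀ᵐ ω ∂P, 0 < g₀ ω ∧ g₀ ω < 1)
    -- conditional independence of (D0, D1) and Z given X
    (hindep : ∀ φ : ℝ × ℝ → ℝ, Measurable φ → (∃ K, ∀ v, |φ v| ≤ K) →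
      P[fun ω => φ (D0 ω, D1 ω) * Z ω | sigmaX X]
        =ᵐ[P] fun ω => (P[fun ω' => φ (D0 ω', D1 ω') | sigmaX X]) ω * g₀ ω) :
    P[fun ω => if D0 ω < D1 ω then (1 : ℝ) else 0 | sigmaX X]
      =ᵐ[P] fun ω =>
        (P[fun ω' => D ω' * Z ω' | sigmaX X]) ω / g₀ ω
          - (P[fun ω' => D ω' * (1 - Z ω') | sigmaX X]) ω / (1 - g₀ ω) := by

  have hm : sigmaX X ≤ ‹MeasurableSpace Ω› := hX.comap_le
  -- integrability helper
  have hint : ∀ f : Ω → ℝ, Measurable f → (∀ ω, |f ω| ≤ 1) → Integrable f P :=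
    fun f hf hb => (integrable_const (1:ℝ)).mono' hf.aestronglyMeasurable
      (Filter.Eventually.of_forall (by simpa using hb))
  have hbD0 : ∀ ω, |D0 ω| ≤ 1 := fun ω => by rcases hD0 ω with h | h <;> simp [h]
  have hbD1 : ∀ ω, |D1 ω| ≤ 1 := fun ω => by rcases hD1 ω with h | h <;> simp [h]
  have hiD0 : Integrable D0 P := hint _ hD0m hbD0
  have hiD1 : Integrable D1 P := hint _ hD1m hbD1
  have hiD0Z : Integrable (fun ω => D0 ω * Z ω) P := by
    refine hint _ (hD0m.mul hZm) fun ω => ?_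
    rcases hD0 ω with h | h <;> rcases hZ01 ω with h' | h' <;> simp [h, h']
  -- φ for D1 component
  have hφ1 : P[fun ω => D1 ω * Z ω | sigmaX X]
      =ᵐ[P] fun ω => (P[D1 | sigmaX X]) ω * g₀ ω := by
    have h := hindep (fun v => min (max v.2 0) 1)
      (by fun_prop)
      ⟨1, fun v => abs_le.mpr ⟨le_min (by nlinarith [le_max_right v.2 0]) (by norm_num),
        min_le_right _ _⟩⟩
    have e : (fun ω => min (max (D1 ω) 0) 1) = D1 := by
      funext ω; rcases hD1 ω with h1 | h1 <;> simp [h1]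
    have e' : (fun ω => min (max (D1 ω) 0) 1 * Z ω) = fun ω => D1 ω * Z ω := by
      funext ω; rcases hD1 ω with h1 | h1 <;> simp [h1]
    simpa [e, e'] using h
  have hφ0 : P[fun ω => D0 ω * Z ω | sigmaX X]
      =ᵐ[P] fun ω => (P[D0 | sigmaX X]) ω * g₀ ω := by
    have h := hindep (fun v => min (max v.1 0) 1)
      (by fun_prop)
      ⟨1, fun v => abs_le.mpr ⟨le_min (by nlinarith [le_max_right v.1 0]) (by norm_num),
        min_le_right _ _⟩⟩
    have e : (fun ω => min (max (D0 ω) 0) 1) = D0 := by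
      funext ω; rcases hD0 ω with h1 | h1 <;> simp [h1]
    have e' : (fun ω => min (max (D0 ω) 0) 1 * Z ω) = fun ω => D0 ω * Z ω := by
      funext ω; rcases hD0 ω with h1 | h1 <;> simp [h1]
    simpa [e, e'] using h
  -- D*Z = D1*Z pointwise
  have eDZ : (fun ω => D ω * Z ω) = fun ω => D1 ω * Z ω := by
    funext ω; rcases hZ01 ω with h | h <;> simp [hcons, h]
  -- D*(1-Z) = D0 - D0*Z pointwise
  have eD1Z : (fun ω => D ω * (1 - Z ω)) = D0 - fun ω => D0 ω * Z ω := by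
    funext ω; rcases hZ01 ω with h | h <;> simp [hcons, h]
  have e2 : P[fun ω => D ω * (1 - Z ω) | sigmaX X]
      =ᵐ[P] fun ω => (P[D0 | sigmaX X]) ω - (P[D0 | sigmaX X]) ω * g₀ ω := by
    calc P[fun ω => D ω * (1 - Z ω) | sigmaX X]
        = P[D0 - (fun ω => D0 ω * Z ω) | sigmaX X] := by rw [eD1Z]
      _ =ᵐ[P] P[D0 | sigmaX X] - P[fun ω => D0 ω * Z ω | sigmaX X] :=
          condExp_sub hiD0 hiD0Z _
      _ =ᵐ[P] fun ω => (P[D0 | sigmaX X]) ω - (P[D0 | sigmaX X]) ω * g₀ ω := by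
          filter_upwards [hφ0] with ω h; simp [h]
  -- indicator = D1 - D0 a.e.
  have eInd : (fun ω => if D0 ω < D1 ω then (1:ℝ) else 0) =ᵐ[P] D1 - D0 := by
    filter_upwards [hmono] with ω hle
    rcases hD0 ω with h0 | h0 <;> rcases hD1 ω with h1 | h1 <;>
      simp [h0, h1] at hle ⊢ <;> norm_num at hle
  have e3 : P[fun ω => if D0 ω < D1 ω then (1:ℝ) else 0 | sigmaX X]
      =ᵐ[P] fun ω => (P[D1 | sigmaX X]) ω - (P[D0 | sigmaX X]) ω := by
    calc P[fun ω => if D0 ω < D1 ω then (1:ℝ) else 0 | sigmaX X]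
        =ᵐ[P] P[D1 - D0 | sigmaX X] := condExp_congr_ae eInd
      _ =ᵐ[P] P[D1 | sigmaX X] - P[D0 | sigmaX X] := condExp_sub hiD1 hiD0 _
      _ = fun ω => (P[D1 | sigmaX X]) ω - (P[D0 | sigmaX X]) ω := rfl
  have e1 : P[fun ω => D ω * Z ω | sigmaX X]
      =ᵐ[P] fun ω => (P[D1 | sigmaX X]) ω * g₀ ω := by rw [eDZ]; exact hφ1
  filter_upwards [e1, e2, e3, hpos] with ω h1 h2 h3 hp
  rw [h3, h1, h2]
  have hg0 : g₀ ω ≠ 0 := ne_of_gt hp.1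
  have hg1 : (1 : ℝ) - g₀ ω ≠ 0 := ne_of_gt (by linarith [hp.2] : (0:ℝ) < 1 - g₀ ω)
  field_simp
end

section
/- Let (Y(0), Y(1), D(0), D(1)) be potential outcomes/treatments, Z a {0,1}-valued instrument, X covariates, with observed D = Z D(1) + (1-Z) D(0) and Y = D Y(1) + (1-D) Y(0). Assume: (i) (Y(0), Y(1), D(0), D(1)) ⫫ Z | X; (ii) g₀(X) := P(Z=1|X) satisfies 0 < g₀(X) < 1 a.s.; (iii) P(D(1) ≥ D(0) | X) = 1. Define κ⁽¹⁾ = D(Z - g₀(X))/(g₀(X)(1-g₀(X))). Then for every measurable function h with E|h(Y,X)| < ∞, E[κ⁽¹⁾ h(Y, X)] = E[h(Y(1), X)·1{D(1) > D(0)}]. -/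
open MeasureTheory Real

lemma ofReal_norm_eq_coe_nnnorm {E : Type*} [NormedAddCommGroup E] (x : E) :
    ENNReal.ofReal ‖x‖ = (‖x‖₊ : ENNReal) := by
  rw [ofReal_norm]; rfl

section AbadieAux

open MeasurableSpace Set ENNReal NNReal

variable {Ω : Type*} [MeasurableSpace Ω]

/-- Master lintegral lemma: if two nonnegative bounded densities have equal integrals over
preimages of a generating π-system of `V`, then weighted lintegrals of `comap V`-measurable
functions agree. -/
lemma abadie_master {α : Type*} [mα : MeasurableSpace α] (P : Measure Ω) [IsProbabilityMeasure P]
    (V : Ω → α) (hV : Measurable V)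
    (C : Set (Set α)) (hCpi : IsPiSystem C) (hgen : mα = MeasurableSpace.generateFrom C)
    (huniv : Set.univ ∈ C)
    (ζ γ : Ω → ℝ) (hζm : Measurable ζ) (hγm : Measurable γ)
    (hζ0 : ∀ ω, 0 ≤ ζ ω) (hζ1 : ∀ ω, ζ ω ≤ 1)
    (hγ01 : ∀ᵐ ω ∂P, 0 ≤ γ ω ∧ γ ω ≤ 1)
    (hsets : ∀ s ∈ C, ∫ ω in V ⁻¹' s, ζ ω ∂P = ∫ ω in V ⁻¹' s, γ ω ∂P)
    {f : Ω → ℝ≥0∞} (hf : Measurable[MeasurableSpace.comap V mα] f) :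
    ∫⁻ ω, ENNReal.ofReal (ζ ω) * f ω ∂P = ∫⁻ ω, ENNReal.ofReal (γ ω) * f ω ∂P := by
  have hm : MeasurableSpace.comap V mα ≤ ‹MeasurableSpace Ω› := by
    rintro _ ⟨s, hs, rfl⟩; exact hV hs
  have hmeasV : ∀ s : Set α, MeasurableSet s →
      MeasurableSet[MeasurableSpace.comap V mα] (V ⁻¹' s) := fun s hs => ⟨s, hs, rfl⟩
  have hdζ : Measurable fun ω => ENNReal.ofReal (ζ ω) := hζm.ennreal_ofReal
  have hdγ : Measurable fun ω => ENNReal.ofReal (γ ω) := hγm.ennreal_ofReal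
  set ν₁ := P.withDensity (fun ω => ENNReal.ofReal (ζ ω)) with hν₁
  set ν₂ := P.withDensity (fun ω => ENNReal.ofReal (γ ω)) with hν₂
  have hν₁fin : IsFiniteMeasure ν₁ := by
    constructor
    rw [hν₁, withDensity_apply _ MeasurableSet.univ, setLIntegral_univ]
    calc ∫⁻ ω, ENNReal.ofReal (ζ ω) ∂P ≤ ∫⁻ _, 1 ∂P :=
          lintegral_mono fun ω => ENNReal.ofReal_le_one.mpr (hζ1 ω)
      _ < ⊤ := by simp
  have hζint : Integrable ζ P := by
    refine (integrable_const (1:ℝ)).mono' hζm.aestronglyMeasurable ?_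
    exact Filter.Eventually.of_forall fun ω => by
      rw [Real.norm_eq_abs, abs_of_nonneg (hζ0 ω)]; exact hζ1 ω
  have hγint : Integrable γ P := by
    refine (integrable_const (1:ℝ)).mono' hγm.aestronglyMeasurable ?_
    filter_upwards [hγ01] with ω hω
    rw [Real.norm_eq_abs, abs_of_nonneg hω.1]; exact hω.2
  have key : ∀ s : Set α, MeasurableSet s →
      (∫ ω in V ⁻¹' s, ζ ω ∂P = ∫ ω in V ⁻¹' s, γ ω ∂P) → ν₁ (V ⁻¹' s) = ν₂ (V ⁻¹' s) := by
    intro s hs hint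
    have hVs : MeasurableSet (V ⁻¹' s) := hV hs
    rw [hν₁, hν₂, withDensity_apply _ hVs, withDensity_apply _ hVs,
      ← ofReal_integral_eq_lintegral_ofReal hζint.integrableOn
        (ae_restrict_of_ae (Filter.Eventually.of_forall hζ0)),
      ← ofReal_integral_eq_lintegral_ofReal hγint.integrableOn
        (ae_restrict_of_ae (hγ01.mono fun ω hω => hω.1)), hint]
  have htrim : ν₁.trim hm = ν₂.trim hm := by
    haveI := hν₁fin
    haveI : IsFiniteMeasure (ν₁.trim hm) := isFiniteMeasure_trim hm
    have hA : MeasurableSpace.comap V mα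
        = MeasurableSpace.generateFrom (Set.preimage V '' C) := by
      conv_lhs => rw [hgen]
      exact MeasurableSpace.comap_generateFrom
    refine ext_of_generate_finite _ hA (hCpi.comap V) ?_ ?_
    · rintro _ ⟨s, hsC, rfl⟩
      have hsm : MeasurableSet s := hgen ▸ measurableSet_generateFrom hsC
      rw [trim_measurableSet_eq hm (hmeasV s hsm), trim_measurableSet_eq hm (hmeasV s hsm)]
      exact key s hsm (hsets s hsC)
    · rw [trim_measurableSet_eq hm MeasurableSet.univ,
        trim_measurableSet_eq hm MeasurableSet.univ]
      have := key Set.univ MeasurableSet.univ (hsets _ huniv)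
      simpa using this
  calc ∫⁻ ω, ENNReal.ofReal (ζ ω) * f ω ∂P
      = ∫⁻ ω, f ω ∂ν₁ := (lintegral_withDensity_eq_lintegral_mul P hdζ (hf.mono hm le_rfl)).symm
    _ = ∫⁻ ω, f ω ∂(ν₁.trim hm) := (lintegral_trim hm hf).symm
    _ = ∫⁻ ω, f ω ∂(ν₂.trim hm) := by rw [htrim]
    _ = ∫⁻ ω, f ω ∂ν₂ := lintegral_trim hm hf
    _ = ∫⁻ ω, ENNReal.ofReal (γ ω) * f ω ∂P :=
        lintegral_withDensity_eq_lintegral_mul P hdγ (hf.mono hm le_rfl)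

/-- Bochner-integral version of the master lemma. -/
lemma abadie_masterReal {α : Type*} [mα : MeasurableSpace α] (P : Measure Ω)
    [IsProbabilityMeasure P] (V : Ω → α) (hV : Measurable V)
    (ζ γ : Ω → ℝ) (hζm : Measurable ζ) (hγm : Measurable γ)
    (hζ0 : ∀ ω, 0 ≤ ζ ω) (hγ0 : ∀ᵐ ω ∂P, 0 ≤ γ ω)
    (HL : ∀ f : Ω → ℝ≥0∞, Measurable[MeasurableSpace.comap V mα] f →
      ∫⁻ ω, ENNReal.ofReal (ζ ω) * f ω ∂P = ∫⁻ ω, ENNReal.ofReal (γ ω) * f ω ∂P)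
    (F : Ω → ℝ) (hF : Measurable[MeasurableSpace.comap V mα] F)
    (hfin : ∫⁻ ω, ENNReal.ofReal (ζ ω) * (‖F ω‖₊ : ℝ≥0∞) ∂P ≠ ⊤) :
    Integrable (fun ω => ζ ω * F ω) P ∧ Integrable (fun ω => γ ω * F ω) P ∧
      ∫ ω, ζ ω * F ω ∂P = ∫ ω, γ ω * F ω ∂P := by
  have hm : MeasurableSpace.comap V mα ≤ ‹MeasurableSpace Ω› := by
    rintro _ ⟨s, hs, rfl⟩; exact hV hs
  have hFm : Measurable F := hF.mono hm le_rfl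
  have hFnn : Measurable[MeasurableSpace.comap V mα] fun ω => (‖F ω‖₊ : ℝ≥0∞) := by
    letI : MeasurableSpace Ω := MeasurableSpace.comap V mα
    exact hF.nnnorm.coe_nnreal_ennreal
  have Hnorm := HL _ hFnn
  have hζe : ∀ ω, (‖ζ ω * F ω‖₊ : ℝ≥0∞) = ENNReal.ofReal (ζ ω) * (‖F ω‖₊ : ℝ≥0∞) := by
    intro ω
    rw [← ofReal_norm_eq_coe_nnnorm (ζ ω * F ω), ← ofReal_norm_eq_coe_nnnorm (F ω), norm_mul,
      ENNReal.ofReal_mul (norm_nonneg _), Real.norm_of_nonneg (hζ0 ω)]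
  have hγe : ∀ᵐ ω ∂P, (‖γ ω * F ω‖₊ : ℝ≥0∞) = ENNReal.ofReal (γ ω) * (‖F ω‖₊ : ℝ≥0∞) := by
    filter_upwards [hγ0] with ω hω
    rw [← ofReal_norm_eq_coe_nnnorm (γ ω * F ω), ← ofReal_norm_eq_coe_nnnorm (F ω), norm_mul,
      ENNReal.ofReal_mul (norm_nonneg _), Real.norm_of_nonneg hω]
  have hIζ : Integrable (fun ω => ζ ω * F ω) P := by
    refine ⟨(hζm.mul hFm).aestronglyMeasurable, ?_⟩
    rw [hasFiniteIntegral_def]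
    calc ∫⁻ ω, (‖ζ ω * F ω‖₊ : ℝ≥0∞) ∂P
        = ∫⁻ ω, ENNReal.ofReal (ζ ω) * (‖F ω‖₊ : ℝ≥0∞) ∂P := lintegral_congr hζe
      _ < ⊤ := lt_top_iff_ne_top.mpr hfin
  have hIγ : Integrable (fun ω => γ ω * F ω) P := by
    refine ⟨(hγm.mul hFm).aestronglyMeasurable, ?_⟩
    rw [hasFiniteIntegral_def]
    calc ∫⁻ ω, (‖γ ω * F ω‖₊ : ℝ≥0∞) ∂P
        = ∫⁻ ω, ENNReal.ofReal (γ ω) * (‖F ω‖₊ : ℝ≥0∞) ∂P := lintegral_congr_ae hγe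
      _ = ∫⁻ ω, ENNReal.ofReal (ζ ω) * (‖F ω‖₊ : ℝ≥0∞) ∂P := Hnorm.symm
      _ < ⊤ := lt_top_iff_ne_top.mpr hfin
  refine ⟨hIζ, hIγ, ?_⟩
  rw [integral_eq_lintegral_pos_part_sub_lintegral_neg_part hIζ,
    integral_eq_lintegral_pos_part_sub_lintegral_neg_part hIγ]
  have hposeq : ∫⁻ ω, ENNReal.ofReal (ζ ω * F ω) ∂P = ∫⁻ ω, ENNReal.ofReal (γ ω * F ω) ∂P := by
    calc ∫⁻ ω, ENNReal.ofReal (ζ ω * F ω) ∂P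
        = ∫⁻ ω, ENNReal.ofReal (ζ ω) * ENNReal.ofReal (F ω) ∂P :=
          lintegral_congr fun ω => ENNReal.ofReal_mul (hζ0 ω)
      _ = ∫⁻ ω, ENNReal.ofReal (γ ω) * ENNReal.ofReal (F ω) ∂P := by
          refine HL _ ?_
          letI : MeasurableSpace Ω := MeasurableSpace.comap V mα
          exact hF.ennreal_ofReal
      _ = ∫⁻ ω, ENNReal.ofReal (γ ω * F ω) ∂P := by
          refine lintegral_congr_ae ?_
          filter_upwards [hγ0] with ω hω
          rw [ENNReal.ofReal_mul hω]
  have hnegeq : ∫⁻ ω, ENNReal.ofReal (-(ζ ω * F ω)) ∂P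
      = ∫⁻ ω, ENNReal.ofReal (-(γ ω * F ω)) ∂P := by
    calc ∫⁻ ω, ENNReal.ofReal (-(ζ ω * F ω)) ∂P
        = ∫⁻ ω, ENNReal.ofReal (ζ ω) * ENNReal.ofReal (-F ω) ∂P := by
          refine lintegral_congr fun ω => ?_
          rw [← ENNReal.ofReal_mul (hζ0 ω), mul_neg]
      _ = ∫⁻ ω, ENNReal.ofReal (γ ω) * ENNReal.ofReal (-F ω) ∂P := by
          refine HL _ ?_
          letI : MeasurableSpace Ω := MeasurableSpace.comap V mα
          exact hF.neg.ennreal_ofReal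
      _ = ∫⁻ ω, ENNReal.ofReal (-(γ ω * F ω)) ∂P := by
          refine lintegral_congr_ae ?_
          filter_upwards [hγ0] with ω hω
          rw [← ENNReal.ofReal_mul hω, mul_neg]
  rw [hposeq, hnegeq]

/-- Equality of integrals of `Z` and its conditional expectation over π-system sets. -/
lemma abadie_setEq {𝓧 : Type*} [MeasurableSpace 𝓧] (P : Measure Ω) [IsProbabilityMeasure P]
    (X : Ω → 𝓧) (hX : Measurable X) (Z : Ω → ℝ) (hZm : Measurable Z)
    (hZ01 : ∀ ω, Z ω = 0 ∨ Z ω = 1)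
    (W : Ω → ℝ × ℝ × ℝ × ℝ) (hW : Measurable W)
    (hind : ∀ φ : ℝ × ℝ × ℝ × ℝ → ℝ, Measurable φ → Integrable (fun ω => φ (W ω)) P →
      P[fun ω => φ (W ω) * Z ω | sigmaX X]
        =ᵐ[P] fun ω => (P[fun ω' => φ (W ω') | sigmaX X]) ω * (P[Z | sigmaX X]) ω)
    (s : Set (ℝ × ℝ × ℝ × ℝ)) (hs : MeasurableSet s) (t : Set 𝓧) (ht : MeasurableSet t) :
    ∫ ω in W ⁻¹' s ∩ X ⁻¹' t, Z ω ∂P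
      = ∫ ω in W ⁻¹' s ∩ X ⁻¹' t, (P[Z | sigmaX X]) ω ∂P := by
  have hmX : sigmaX X ≤ ‹MeasurableSpace Ω› := by
    rintro _ ⟨v, hv, rfl⟩; exact hX hv
  haveI : IsFiniteMeasure (P.trim hmX) := isFiniteMeasure_trim hmX
  have hB : MeasurableSet (W ⁻¹' s) := hW hs
  have hCmX : MeasurableSet[sigmaX X] (X ⁻¹' t) := ⟨t, ht, rfl⟩
  set g' : Ω → ℝ := P[Z | sigmaX X] with hg'
  set φ : ℝ × ℝ × ℝ × ℝ → ℝ := s.indicator (fun _ => 1) with hφdef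
  have hφ : Measurable φ := measurable_const.indicator hs
  have hφW : (fun ω => φ (W ω)) = (W ⁻¹' s).indicator (fun _ => (1:ℝ)) := by
    funext ω; by_cases hmem : W ω ∈ s <;> simp [hφdef, hmem]
  have hφWZ : (fun ω => φ (W ω) * Z ω) = (W ⁻¹' s).indicator Z := by
    funext ω; by_cases hmem : W ω ∈ s <;> simp [hφdef, hmem]
  have hφWg : (g' * fun ω => φ (W ω)) = (W ⁻¹' s).indicator g' := by
    funext ω; by_cases hmem : W ω ∈ s <;> simp [hφdef, hmem]
  have hint1 : Integrable (fun ω => φ (W ω)) P := by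
    rw [hφW]; exact (integrable_const 1).indicator hB
  have hintZ : Integrable Z P := by
    refine (integrable_const (1:ℝ)).mono' hZm.aestronglyMeasurable
      (Filter.Eventually.of_forall fun ω => ?_)
    rcases hZ01 ω with hz | hz <;> simp [hz]
  have hint2 : Integrable (fun ω => φ (W ω) * Z ω) P := by
    rw [hφWZ]; exact hintZ.indicator hB
  have hint3 : Integrable (g' * fun ω => φ (W ω)) P := by
    rw [hφWg]; exact integrable_condExp.indicator hB
  have hpull : P[g' * fun ω => φ (W ω) | sigmaX X]
      =ᵐ[P] g' * P[fun ω => φ (W ω) | sigmaX X] :=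
    condExp_mul_of_stronglyMeasurable_left stronglyMeasurable_condExp hint3 hint1
  calc ∫ ω in W ⁻¹' s ∩ X ⁻¹' t, Z ω ∂P
      = ∫ ω in X ⁻¹' t, (W ⁻¹' s).indicator Z ω ∂P := by
        rw [setIntegral_indicator hB, Set.inter_comm]
    _ = ∫ ω in X ⁻¹' t, (fun ω => φ (W ω) * Z ω) ω ∂P := by rw [hφWZ]
    _ = ∫ ω in X ⁻¹' t, (P[fun ω => φ (W ω) * Z ω | sigmaX X]) ω ∂P :=
        (setIntegral_condExp hmX hint2 hCmX).symm
    _ = ∫ ω in X ⁻¹' t, (P[fun ω' => φ (W ω') | sigmaX X]) ω * g' ω ∂P :=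
        integral_congr_ae (ae_restrict_of_ae (hind φ hφ hint1))
    _ = ∫ ω in X ⁻¹' t, (P[g' * fun ω => φ (W ω) | sigmaX X]) ω ∂P := by
        refine integral_congr_ae (ae_restrict_of_ae ?_)
        filter_upwards [hpull] with ω hω
        rw [hω, Pi.mul_apply, mul_comm]
    _ = ∫ ω in X ⁻¹' t, (g' * fun ω => φ (W ω)) ω ∂P := setIntegral_condExp hmX hint3 hCmX
    _ = ∫ ω in X ⁻¹' t, (W ⁻¹' s).indicator g' ω ∂P := by rw [hφWg]
    _ = ∫ ω in W ⁻¹' s ∩ X ⁻¹' t, g' ω ∂P := by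
        rw [setIntegral_indicator hB, Set.inter_comm]

/-- The σ-algebra generated by the potential outcomes and covariates. -/
def abadieM {Ω 𝓧 : Type*} [MeasurableSpace 𝓧] (Y0 Y1 D0 D1 : Ω → ℝ) (X : Ω → 𝓧) :
    MeasurableSpace Ω :=
  MeasurableSpace.comap (fun ω => ((Y0 ω, Y1 ω, D0 ω, D1 ω), X ω)) inferInstance

end AbadieAux

section StmtFive

open ENNReal NNReal

/-- Abadie's kappa-weighting identity (treated arm):
E[κ¹ h(Y,X)] = E[h(Y(1),X) 1{D(1)>D(0)}]. -/
theorem stmt5 {Ω 𝓧 : Type*} [MeasurableSpace Ω] [MeasurableSpace 𝓧]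
    (P : Measure Ω) [IsProbabilityMeasure P]
    (X : Ω → 𝓧) (hX : Measurable X)
    (Z D D0 D1 Y Y0 Y1 : Ω → ℝ)
    (hZm : Measurable Z) (hD0m : Measurable D0) (hD1m : Measurable D1)
    (hY0m : Measurable Y0) (hY1m : Measurable Y1)
    (hZ01 : ∀ ω, Z ω = 0 ∨ Z ω = 1)
    (hD0 : ∀ ω, D0 ω = 0 ∨ D0 ω = 1) (hD1 : ∀ ω, D1 ω = 0 ∨ D1 ω = 1)
    (hconsD : ∀ ω, D ω = Z ω * D1 ω + (1 - Z ω) * D0 ω)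
    (hconsY : ∀ ω, Y ω = D ω * Y1 ω + (1 - D ω) * Y0 ω)
    (hmono : ∀ᵐ ω ∂P, D0 ω ≤ D1 ω)
    (g₀ : Ω → ℝ) (hg₀ : g₀ =ᵐ[P] P[Z | sigmaX X])
    (hpos : ∀ᵐ ω ∂P, 0 < g₀ ω ∧ g₀ ω < 1)
    -- conditional independence of (Y0, Y1, D0, D1) and Z given X
    (hindep : ∀ φ : ℝ × ℝ × ℝ × ℝ → ℝ, Measurable φ →
      Integrable (fun ω => φ (Y0 ω, Y1 ω, D0 ω, D1 ω)) P →
      P[fun ω => φ (Y0 ω, Y1 ω, D0 ω, D1 ω) * Z ω | sigmaX X]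
        =ᵐ[P] fun ω => (P[fun ω' => φ (Y0 ω', Y1 ω', D0 ω', D1 ω') | sigmaX X]) ω * g₀ ω)
    (κ1 : Ω → ℝ)
    (hκ1 : ∀ ω, κ1 ω = D ω * (Z ω - g₀ ω) / (g₀ ω * (1 - g₀ ω))) :
    ∀ h : ℝ × 𝓧 → ℝ, Measurable h → Integrable (fun ω => h (Y ω, X ω)) P →
      ∫ ω, κ1 ω * h (Y ω, X ω) ∂P
        = ∫ ω, (if D0 ω < D1 ω then h (Y1 ω, X ω) else 0) ∂P := by
  intro h hh hInt
  classical
  have hmX : sigmaX X ≤ ‹MeasurableSpace Ω› := by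
    rintro _ ⟨v, hv, rfl⟩; exact hX hv
  set g' : Ω → ℝ := P[Z | sigmaX X] with hg'def
  have hg'm : Measurable g' :=
    (stronglyMeasurable_condExp (μ := P) (f := Z) (m := sigmaX X)).measurable.mono hmX le_rfl
  have hDm : Measurable D := by
    have hD' : D = fun ω => Z ω * D1 ω + (1 - Z ω) * D0 ω := funext hconsD
    rw [hD']; exact (hZm.mul hD1m).add ((measurable_const.sub hZm).mul hD0m)
  have hYm : Measurable Y := by
    have hY' : Y = fun ω => D ω * Y1 ω + (1 - D ω) * Y0 ω := funext hconsY
    rw [hY']; exact (hDm.mul hY1m).add ((measurable_const.sub hDm).mul hY0m)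
  have hWm : Measurable (fun ω => (Y0 ω, Y1 ω, D0 ω, D1 ω)) :=
    hY0m.prodMk (hY1m.prodMk (hD0m.prodMk hD1m))
  have hVm : Measurable (fun ω => ((Y0 ω, Y1 ω, D0 ω, D1 ω), X ω)) := hWm.prodMk hX
  have hVmm : Measurable[abadieM Y0 Y1 D0 D1 X] (fun ω => ((Y0 ω, Y1 ω, D0 ω, D1 ω), X ω)) :=
    fun u hu => ⟨u, hu, rfl⟩
  have hφhm : Measurable (fun ω => h (Y1 ω, X ω)) := hh.comp (hY1m.prodMk hX)
  have hφhmm : Measurable[abadieM Y0 Y1 D0 D1 X] (fun ω => h (Y1 ω, X ω)) := by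
    letI : MeasurableSpace Ω := abadieM Y0 Y1 D0 D1 X
    exact hh.comp ((hVmm.fst.snd.fst).prodMk hVmm.snd)
  have hD1mm : Measurable[abadieM Y0 Y1 D0 D1 X] D1 := by
    letI : MeasurableSpace Ω := abadieM Y0 Y1 D0 D1 X
    exact hVmm.fst.snd.snd.snd
  have hD0mm : Measurable[abadieM Y0 Y1 D0 D1 X] D0 := by
    letI : MeasurableSpace Ω := abadieM Y0 Y1 D0 D1 X
    exact hVmm.fst.snd.snd.fst
  have hsub : sigmaX X ≤ abadieM Y0 Y1 D0 D1 X := by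
    have heq : sigmaX X = MeasurableSpace.comap (fun ω => ((Y0 ω, Y1 ω, D0 ω, D1 ω), X ω))
        (MeasurableSpace.comap Prod.snd inferInstance) := by
      rw [MeasurableSpace.comap_comp]; rfl
    show sigmaX X ≤ MeasurableSpace.comap (fun ω => ((Y0 ω, Y1 ω, D0 ω, D1 ω), X ω)) inferInstance
    rw [heq]
    exact MeasurableSpace.comap_mono (measurable_iff_comap_le.mp measurable_snd)
  have hg'mm : Measurable[abadieM Y0 Y1 D0 D1 X] g' :=
    (stronglyMeasurable_condExp (μ := P) (f := Z) (m := sigmaX X)).measurable.mono hsub le_rfl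
  -- adapted independence hypothesis
  have hind : ∀ φ : ℝ × ℝ × ℝ × ℝ → ℝ, Measurable φ →
      Integrable (fun ω => φ (Y0 ω, Y1 ω, D0 ω, D1 ω)) P →
      P[fun ω => φ (Y0 ω, Y1 ω, D0 ω, D1 ω) * Z ω | sigmaX X]
        =ᵐ[P] fun ω => (P[fun ω' => φ (Y0 ω', Y1 ω', D0 ω', D1 ω') | sigmaX X]) ω * g' ω := by
    intro φ hφ hφint
    refine (hindep φ hφ hφint).trans ?_
    filter_upwards [hg₀] with ω hω
    rw [hω]
  have hintZ : Integrable Z P := by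
    refine (integrable_const (1:ℝ)).mono' hZm.aestronglyMeasurable
      (Filter.Eventually.of_forall fun ω => ?_)
    rcases hZ01 ω with hz | hz <;> simp [hz]
  have hsetZ : ∀ s : Set (ℝ × ℝ × ℝ × ℝ), MeasurableSet s → ∀ t : Set 𝓧, MeasurableSet t →
      ∫ ω in (fun ω => (Y0 ω, Y1 ω, D0 ω, D1 ω)) ⁻¹' s ∩ X ⁻¹' t, Z ω ∂P
        = ∫ ω in (fun ω => (Y0 ω, Y1 ω, D0 ω, D1 ω)) ⁻¹' s ∩ X ⁻¹' t, g' ω ∂P :=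
    fun s hs t ht => abadie_setEq P X hX Z hZm hZ01 _ hWm hind s hs t ht
  have hsetZ' : ∀ s : Set (ℝ × ℝ × ℝ × ℝ), MeasurableSet s → ∀ t : Set 𝓧, MeasurableSet t →
      ∫ ω in (fun ω => (Y0 ω, Y1 ω, D0 ω, D1 ω)) ⁻¹' s ∩ X ⁻¹' t, (1 - Z ω) ∂P
        = ∫ ω in (fun ω => (Y0 ω, Y1 ω, D0 ω, D1 ω)) ⁻¹' s ∩ X ⁻¹' t, (1 - g' ω) ∂P := by
    intro s hs t ht
    have hA : MeasurableSet ((fun ω => (Y0 ω, Y1 ω, D0 ω, D1 ω)) ⁻¹' s ∩ X ⁻¹' t) :=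
      (hWm hs).inter (hX ht)
    have h1 : IntegrableOn (fun _ => (1:ℝ))
        ((fun ω => (Y0 ω, Y1 ω, D0 ω, D1 ω)) ⁻¹' s ∩ X ⁻¹' t) P :=
      integrableOn_const (measure_ne_top P _)
    rw [integral_sub h1 hintZ.integrableOn, integral_sub h1 integrable_condExp.integrableOn,
      hsetZ s hs t ht]
  -- π-system for the product space
  have hgen : (inferInstance : MeasurableSpace ((ℝ × ℝ × ℝ × ℝ) × 𝓧))
      = MeasurableSpace.generateFrom
        (Set.image2 (· ×ˢ ·) {s : Set (ℝ × ℝ × ℝ × ℝ) | MeasurableSet s}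
          {t : Set 𝓧 | MeasurableSet t}) := generateFrom_prod.symm
  have hCpi : IsPiSystem (Set.image2 (· ×ˢ ·) {s : Set (ℝ × ℝ × ℝ × ℝ) | MeasurableSet s}
      {t : Set 𝓧 | MeasurableSet t}) := isPiSystem_prod
  have huniv : Set.univ ∈ Set.image2 (· ×ˢ ·) {s : Set (ℝ × ℝ × ℝ × ℝ) | MeasurableSet s}
      {t : Set 𝓧 | MeasurableSet t} :=
    Set.mem_image2.mpr ⟨Set.univ, by simp, Set.univ, by simp, Set.univ_prod_univ⟩
  have hsetsZ : ∀ u ∈ Set.image2 (· ×ˢ ·) {s : Set (ℝ × ℝ × ℝ × ℝ) | MeasurableSet s}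
      {t : Set 𝓧 | MeasurableSet t},
      ∫ ω in (fun ω => ((Y0 ω, Y1 ω, D0 ω, D1 ω), X ω)) ⁻¹' u, Z ω ∂P
        = ∫ ω in (fun ω => ((Y0 ω, Y1 ω, D0 ω, D1 ω), X ω)) ⁻¹' u, g' ω ∂P := by
    rintro _ ⟨s, hs, t, ht, rfl⟩
    rw [Set.mk_preimage_prod]
    exact hsetZ s hs t ht
  have hsetsZ' : ∀ u ∈ Set.image2 (· ×ˢ ·) {s : Set (ℝ × ℝ × ℝ × ℝ) | MeasurableSet s}
      {t : Set 𝓧 | MeasurableSet t},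
      ∫ ω in (fun ω => ((Y0 ω, Y1 ω, D0 ω, D1 ω), X ω)) ⁻¹' u, (1 - Z ω) ∂P
        = ∫ ω in (fun ω => ((Y0 ω, Y1 ω, D0 ω, D1 ω), X ω)) ⁻¹' u, (1 - g' ω) ∂P := by
    rintro _ ⟨s, hs, t, ht, rfl⟩
    rw [Set.mk_preimage_prod]
    exact hsetZ' s hs t ht
  have hζ0 : ∀ ω, 0 ≤ Z ω := fun ω => by rcases hZ01 ω with hz | hz <;> simp [hz]
  have hζ1 : ∀ ω, Z ω ≤ 1 := fun ω => by rcases hZ01 ω with hz | hz <;> simp [hz]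
  have hγae : ∀ᵐ ω ∂P, g₀ ω = g' ω ∧ 0 < g' ω ∧ g' ω < 1 := by
    filter_upwards [hg₀, hpos] with ω h1 h2
    exact ⟨h1, h1 ▸ h2.1, h1 ▸ h2.2⟩
  have hγ01 : ∀ᵐ ω ∂P, 0 ≤ g' ω ∧ g' ω ≤ 1 :=
    hγae.mono fun ω hω => ⟨le_of_lt hω.2.1, le_of_lt hω.2.2⟩
  have hγ01' : ∀ᵐ ω ∂P, 0 ≤ 1 - g' ω ∧ 1 - g' ω ≤ 1 :=
    hγae.mono fun ω hω => ⟨by linarith [hω.2.2], by linarith [hω.2.1]⟩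
  -- the two master lintegral identities
  have HZ : ∀ f : Ω → ℝ≥0∞, Measurable[abadieM Y0 Y1 D0 D1 X] f →
      ∫⁻ ω, ENNReal.ofReal (Z ω) * f ω ∂P = ∫⁻ ω, ENNReal.ofReal (g' ω) * f ω ∂P :=
    fun f hf => abadie_master P _ hVm _ hCpi hgen huniv Z g' hZm hg'm hζ0 hζ1 hγ01 hsetsZ hf
  have HZ' : ∀ f : Ω → ℝ≥0∞, Measurable[abadieM Y0 Y1 D0 D1 X] f →
      ∫⁻ ω, ENNReal.ofReal (1 - Z ω) * f ω ∂P = ∫⁻ ω, ENNReal.ofReal (1 - g' ω) * f ω ∂P :=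
    fun f hf => abadie_master P _ hVm _ hCpi hgen huniv _ _
      (measurable_const.sub hZm) (measurable_const.sub hg'm)
      (fun ω => by rcases hZ01 ω with hz | hz <;> simp [hz])
      (fun ω => by rcases hZ01 ω with hz | hz <;> simp [hz])
      hγ01' hsetsZ' hf
  -- F1 and F2 measurability
  have hF1mm : Measurable[abadieM Y0 Y1 D0 D1 X] (fun ω => D1 ω * h (Y1 ω, X ω) / g' ω) := by
    letI : MeasurableSpace Ω := abadieM Y0 Y1 D0 D1 X
    exact (hD1mm.mul hφhmm).div hg'mm
  have hF2mm : Measurable[abadieM Y0 Y1 D0 D1 X] (fun ω => D0 ω * h (Y1 ω, X ω) / (1 - g' ω)) := by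
    letI : MeasurableSpace Ω := abadieM Y0 Y1 D0 D1 X
    exact (hD0mm.mul hφhmm).div (measurable_const.sub hg'mm)
  have hF1nn : Measurable[abadieM Y0 Y1 D0 D1 X] (fun ω => (‖D1 ω * h (Y1 ω, X ω) / g' ω‖₊ : ℝ≥0∞)) := by
    letI : MeasurableSpace Ω := abadieM Y0 Y1 D0 D1 X
    exact hF1mm.nnnorm.coe_nnreal_ennreal
  have hF2nn : Measurable[abadieM Y0 Y1 D0 D1 X] (fun ω => (‖D0 ω * h (Y1 ω, X ω) / (1 - g' ω)‖₊ : ℝ≥0∞)) := by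
    letI : MeasurableSpace Ω := abadieM Y0 Y1 D0 D1 X
    exact hF2mm.nnnorm.coe_nnreal_ennreal
  -- key lintegral computations
  have keyfin1 : ∫⁻ ω, ENNReal.ofReal (Z ω) * (‖D1 ω * h (Y1 ω, X ω) / g' ω‖₊ : ℝ≥0∞) ∂P
      = ∫⁻ ω, (‖D1 ω * h (Y1 ω, X ω)‖₊ : ℝ≥0∞) ∂P := by
    rw [HZ _ hF1nn]
    refine lintegral_congr_ae ?_
    filter_upwards [hγae] with ω hω
    obtain ⟨-, h0, h1lt⟩ := hω
    rw [← ofReal_norm_eq_coe_nnnorm, ← ofReal_norm_eq_coe_nnnorm,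
      ← ENNReal.ofReal_mul (le_of_lt h0)]
    congr 1
    rw [norm_div, Real.norm_of_nonneg (le_of_lt h0)]
    field_simp
  have keyfin2 : ∫⁻ ω, ENNReal.ofReal (1 - Z ω) * (‖D0 ω * h (Y1 ω, X ω) / (1 - g' ω)‖₊ : ℝ≥0∞) ∂P
      = ∫⁻ ω, (‖D0 ω * h (Y1 ω, X ω)‖₊ : ℝ≥0∞) ∂P := by
    rw [HZ' _ hF2nn]
    refine lintegral_congr_ae ?_
    filter_upwards [hγae] with ω hω
    obtain ⟨-, h0, h1lt⟩ := hω
    have h1g : (0:ℝ) < 1 - g' ω := by linarith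
    rw [← ofReal_norm_eq_coe_nnnorm, ← ofReal_norm_eq_coe_nnnorm,
      ← ENNReal.ofReal_mul (le_of_lt h1g)]
    congr 1
    rw [norm_div, Real.norm_of_nonneg (le_of_lt h1g)]
    field_simp
  -- integrability of D0 * h(Y1, X)
  have hD0φ : ∀ᵐ ω ∂P, D0 ω * h (Y1 ω, X ω) = D0 ω * h (Y ω, X ω) := by
    filter_upwards [hmono] with ω hle
    rcases hD0 ω with hd0 | hd0
    · simp [hd0]
    · rcases hD1 ω with hd1 | hd1
      · exfalso; rw [hd0, hd1] at hle; linarith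
      · have hD : D ω = 1 := by rw [hconsD ω, hd0, hd1]; ring
        rw [hconsY ω, hD]; norm_num
  have hIntD0Y : Integrable (fun ω => D0 ω * h (Y ω, X ω)) P := by
    refine hInt.norm.mono' ((hD0m.mul (hh.comp (hYm.prodMk hX))).aestronglyMeasurable) ?_
    refine Filter.Eventually.of_forall fun ω => ?_
    rcases hD0 ω with hd0 | hd0 <;> simp [hd0]
  have hIntD0φ : Integrable (fun ω => D0 ω * h (Y1 ω, X ω)) P :=
    hIntD0Y.congr (hD0φ.mono fun ω e => e.symm)
  have hD0fin : ∫⁻ ω, (‖D0 ω * h (Y1 ω, X ω)‖₊ : ℝ≥0∞) ∂P ≠ ⊤ :=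
    ne_of_lt ((hasFiniteIntegral_def _ _).mp hIntD0φ.2)
  -- the pointwise decomposition
  have hpt : ∀ᵐ ω ∂P, κ1 ω * h (Y ω, X ω)
      = Z ω * (D1 ω * h (Y1 ω, X ω) / g' ω)
        - (1 - Z ω) * (D0 ω * h (Y1 ω, X ω) / (1 - g' ω)) := by
    filter_upwards [hγae] with ω hω
    obtain ⟨he, h0, h1lt⟩ := hω
    have hg0 : g' ω ≠ 0 := ne_of_gt h0
    have hg1 : (1:ℝ) - g' ω ≠ 0 := ne_of_gt (by linarith)
    rw [hκ1 ω, hconsY ω, hconsD ω, he]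
    rcases hZ01 ω with hz | hz <;> rcases hD0 ω with hd0 | hd0 <;> rcases hD1 ω with hd1 | hd1 <;>
      rw [hz, hd0, hd1] <;> norm_num <;> field_simp <;> ring
  -- case split on finiteness of ∫⁻ ‖D1 * h(Y1,X)‖
  by_cases Hfin : ∫⁻ ω, (‖D1 ω * h (Y1 ω, X ω)‖₊ : ℝ≥0∞) ∂P = ⊤
  · -- both sides are non-integrable, hence both integrals are 0
    have hLH : ¬ Integrable (fun ω => κ1 ω * h (Y ω, X ω)) P := by
      intro hI
      have h2 := (hasFiniteIntegral_def _ _).mp hI.2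
      have hge : ∫⁻ ω, ENNReal.ofReal (Z ω) * (‖D1 ω * h (Y1 ω, X ω) / g' ω‖₊ : ℝ≥0∞) ∂P
          ≤ ∫⁻ ω, (‖κ1 ω * h (Y ω, X ω)‖₊ : ℝ≥0∞) ∂P := by
        refine lintegral_mono_ae ?_
        filter_upwards [hpt] with ω hω
        rw [hω]
        rcases hZ01 ω with hz | hz <;> simp [hz]
      rw [keyfin1, Hfin] at hge
      exact absurd (lt_of_le_of_lt hge h2) (by simp)
    have hRH : ¬ Integrable (fun ω => if D0 ω < D1 ω then h (Y1 ω, X ω) else 0) P := by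
      intro hI
      have h2 := (hasFiniteIntegral_def _ _).mp hI.2
      have hb : ∀ᵐ ω ∂P, (‖D1 ω * h (Y1 ω, X ω)‖₊ : ℝ≥0∞)
          ≤ (‖(if D0 ω < D1 ω then h (Y1 ω, X ω) else 0 : ℝ)‖₊ : ℝ≥0∞)
            + (‖D0 ω * h (Y1 ω, X ω)‖₊ : ℝ≥0∞) := by
        filter_upwards [hmono] with ω hle
        rcases hD0 ω with hd0 | hd0 <;> rcases hD1 ω with hd1 | hd1
        · simp [hd0, hd1]
        · simp [hd0, hd1]
        · exfalso; rw [hd0, hd1] at hle; linarith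
        · simp [hd0, hd1]
      have hmle := lintegral_mono_ae hb
      rw [lintegral_add_right _ (g := fun ω => (‖D0 ω * h (Y1 ω, X ω)‖₊ : ℝ≥0∞)) ((hD0m.mul hφhm).nnnorm.coe_nnreal_ennreal), Hfin] at hmle
      have : (⊤ : ℝ≥0∞) < ⊤ :=
        lt_of_le_of_lt hmle (ENNReal.add_lt_top.mpr ⟨h2, lt_top_iff_ne_top.mpr hD0fin⟩)
      exact absurd this (by simp)
    rw [integral_undef hLH, integral_undef hRH]
  · -- the integrable case
    have hIntD1φ : Integrable (fun ω => D1 ω * h (Y1 ω, X ω)) P :=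
      ⟨(hD1m.mul hφhm).aestronglyMeasurable,
        (hasFiniteIntegral_def _ _).mpr (lt_top_iff_ne_top.mpr Hfin)⟩
    obtain ⟨IT1, IG1, E1⟩ := abadie_masterReal P _ hVm Z g' hZm hg'm hζ0
      (hγae.mono fun ω hω => le_of_lt hω.2.1) HZ
      (fun ω => D1 ω * h (Y1 ω, X ω) / g' ω) hF1mm (by rw [keyfin1]; exact Hfin)
    obtain ⟨IT2, IG2, E2⟩ := abadie_masterReal P _ hVm (fun ω => 1 - Z ω) (fun ω => 1 - g' ω)
      (measurable_const.sub hZm) (measurable_const.sub hg'm)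
      (fun ω => by rcases hZ01 ω with hz | hz <;> simp [hz])
      (hγae.mono fun ω hω => by linarith [hω.2.2]) HZ'
      (fun ω => D0 ω * h (Y1 ω, X ω) / (1 - g' ω)) hF2mm (by rw [keyfin2]; exact hD0fin)
    have hG1 : ∫ ω, g' ω * (D1 ω * h (Y1 ω, X ω) / g' ω) ∂P
        = ∫ ω, D1 ω * h (Y1 ω, X ω) ∂P := by
      refine integral_congr_ae ?_
      filter_upwards [hγae] with ω hω
      obtain ⟨-, h0, -⟩ := hω
      field_simp
    have hG2 : ∫ ω, (1 - g' ω) * (D0 ω * h (Y1 ω, X ω) / (1 - g' ω)) ∂P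
        = ∫ ω, D0 ω * h (Y1 ω, X ω) ∂P := by
      refine integral_congr_ae ?_
      filter_upwards [hγae] with ω hω
      obtain ⟨-, -, h1lt⟩ := hω
      have hg1 : (1:ℝ) - g' ω ≠ 0 := ne_of_gt (by linarith)
      field_simp
    have hRr : ∀ᵐ ω ∂P, D1 ω * h (Y1 ω, X ω) - D0 ω * h (Y1 ω, X ω)
        = (if D0 ω < D1 ω then h (Y1 ω, X ω) else 0) := by
      filter_upwards [hmono] with ω hle
      rcases hD0 ω with hd0 | hd0 <;> rcases hD1 ω with hd1 | hd1
      · simp [hd0, hd1]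
      · norm_num [hd0, hd1]
      · exfalso; rw [hd0, hd1] at hle; linarith
      · simp [hd0, hd1]
    calc ∫ ω, κ1 ω * h (Y ω, X ω) ∂P
        = ∫ ω, (Z ω * (D1 ω * h (Y1 ω, X ω) / g' ω)
            - (1 - Z ω) * (D0 ω * h (Y1 ω, X ω) / (1 - g' ω))) ∂P := integral_congr_ae hpt
      _ = ∫ ω, Z ω * (D1 ω * h (Y1 ω, X ω) / g' ω) ∂P
            - ∫ ω, (1 - Z ω) * (D0 ω * h (Y1 ω, X ω) / (1 - g' ω)) ∂P := integral_sub IT1 IT2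
      _ = ∫ ω, g' ω * (D1 ω * h (Y1 ω, X ω) / g' ω) ∂P
            - ∫ ω, (1 - g' ω) * (D0 ω * h (Y1 ω, X ω) / (1 - g' ω)) ∂P := by rw [E1, E2]
      _ = ∫ ω, D1 ω * h (Y1 ω, X ω) ∂P - ∫ ω, D0 ω * h (Y1 ω, X ω) ∂P := by rw [hG1, hG2]
      _ = ∫ ω, (D1 ω * h (Y1 ω, X ω) - D0 ω * h (Y1 ω, X ω)) ∂P :=
          (integral_sub hIntD1φ hIntD0φ).symm
      _ = ∫ ω, (if D0 ω < D1 ω then h (Y1 ω, X ω) else 0) ∂P := integral_congr_ae hRr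

end StmtFive
end

section
/- Under the same setup and assumptions as the kappa-weighting identity (instrument independence given X, positivity of g₀, monotonicity), with κ⁽⁰⁾ = (1-D)((1-Z) - (1-g₀(X)))/(g₀(X)(1-g₀(X))), it holds that for every measurable h with E|h(Y,X)| < ∞, E[κ⁽⁰⁾ h(Y, X)] = E[h(Y(0), X)·1{D(1) > D(0)}]. In particular, taking h ≡ 1 in both kappa identities yields E[κ⁽¹⁾] = E[κ⁽⁰⁾] = P(D(1) > D(0)). -/
open MeasureTheory Real Set
open scoped ENNReal NNReal

section Aux

lemma key_measure_eq {Ω 𝓧 : Type*} [MeasurableSpace Ω] [MeasurableSpace 𝓧]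
    (P : Measure Ω) [IsProbabilityMeasure P]
    (V : Ω → ℝ × ℝ × ℝ) (W : Ω → 𝓧 × ℝ) (ZZ GG : Ω → ℝ)
    (hVm : Measurable V) (hWm : Measurable W) (hZZm : Measurable ZZ) (hGGm : Measurable GG)
    (hZb : ∀ᵐ ω ∂P, 0 ≤ ZZ ω ∧ ZZ ω ≤ 1) (hGb : ∀ᵐ ω ∂P, 0 ≤ GG ω ∧ GG ω ≤ 1)
    (hrect : ∀ s : Set (ℝ×ℝ×ℝ), MeasurableSet s → ∀ t : Set (𝓧×ℝ), MeasurableSet t →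
      ∫ ω in V ⁻¹' s ∩ W ⁻¹' t, ZZ ω ∂P = ∫ ω in V ⁻¹' s ∩ W ⁻¹' t, GG ω ∂P) :
    (P.withDensity fun ω => ENNReal.ofReal (ZZ ω)).map (fun ω => (V ω, W ω))
      = (P.withDensity fun ω => ENNReal.ofReal (GG ω)).map (fun ω => (V ω, W ω)) := by
  have hΦ : Measurable fun ω => (V ω, W ω) := hVm.prodMk hWm
  have hfin : ∀ (f : Ω → ℝ), (∀ᵐ ω ∂P, 0 ≤ f ω ∧ f ω ≤ 1) →
      IsFiniteMeasure (P.withDensity fun ω => ENNReal.ofReal (f ω)) := by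
    intro f hf
    refine isFiniteMeasure_withDensity (ne_of_lt ?_)
    calc ∫⁻ ω, ENNReal.ofReal (f ω) ∂P ≤ ∫⁻ _, 1 ∂P := by
          refine lintegral_mono_ae (hf.mono fun ω hω => ?_)
          exact ENNReal.ofReal_le_one.mpr hω.2
      _ < ⊤ := by simp
  haveI := hfin ZZ hZb
  haveI := hfin GG hGb
  -- integrability and set-integral identity
  have hint : ∀ (f : Ω → ℝ), Measurable f → (∀ᵐ ω ∂P, 0 ≤ f ω ∧ f ω ≤ 1) →
      ∀ A : Set Ω, Integrable f (P.restrict A) := by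
    intro f hf hb A
    refine Integrable.mono' (integrable_const 1) hf.aestronglyMeasurable ?_
    refine ae_restrict_of_ae (hb.mono fun ω hω => ?_)
    rw [Real.norm_eq_abs, abs_le]; exact ⟨le_trans (by norm_num) hω.1, hω.2⟩
  have hset : ∀ (f : Ω → ℝ), Measurable f → (∀ᵐ ω ∂P, 0 ≤ f ω ∧ f ω ≤ 1) →
      ∀ A : Set Ω, ∫⁻ ω in A, ENNReal.ofReal (f ω) ∂P = ENNReal.ofReal (∫ ω in A, f ω ∂P) := by
    intro f hf hb A
    rw [← ofReal_integral_eq_lintegral_ofReal (hint f hf hb A)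
      (ae_restrict_of_ae (hb.mono fun ω hω => hω.1))]
  refine ext_of_generate_finite _ generateFrom_prod.symm isPiSystem_prod ?_ ?_
  · rintro u ⟨s, hs, t, ht, rfl⟩
    simp only [Set.mem_setOf_eq] at hs ht
    rw [Measure.map_apply hΦ (hs.prod ht), Measure.map_apply hΦ (hs.prod ht)]
    have hpre : (fun ω => (V ω, W ω)) ⁻¹' (s ×ˢ t) = V ⁻¹' s ∩ W ⁻¹' t := by
      ext ω; simp [Set.mem_prod]
    rw [hpre, withDensity_apply _ ((hVm hs).inter (hWm ht)),
      withDensity_apply _ ((hVm hs).inter (hWm ht)), hset ZZ hZZm hZb, hset GG hGGm hGb,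
      hrect s hs t ht]
  · rw [Measure.map_apply hΦ MeasurableSet.univ, Measure.map_apply hΦ MeasurableSet.univ,
      Set.preimage_univ, withDensity_apply _ MeasurableSet.univ,
      withDensity_apply _ MeasurableSet.univ, hset ZZ hZZm hZb univ, hset GG hGGm hGb univ]
    have := hrect univ MeasurableSet.univ univ MeasurableSet.univ
    simp only [Set.preimage_univ, Set.inter_univ, Measure.restrict_univ] at this ⊢
    rw [this]

lemma lintegral_weight_eq {Ω E : Type*} [MeasurableSpace Ω] [MeasurableSpace E]
    (P : Measure Ω) (Φ : Ω → E) (ZZ GG : Ω → ℝ) (hΦ : Measurable Φ)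
    (hZZm : Measurable ZZ) (hGGm : Measurable GG)
    (heq : (P.withDensity fun ω => ENNReal.ofReal (ZZ ω)).map Φ
      = (P.withDensity fun ω => ENNReal.ofReal (GG ω)).map Φ)
    (F : E → ℝ≥0∞) (hF : Measurable F) :
    ∫⁻ ω, ENNReal.ofReal (ZZ ω) * F (Φ ω) ∂P = ∫⁻ ω, ENNReal.ofReal (GG ω) * F (Φ ω) ∂P := by
  have h1 := congrArg (fun μ => ∫⁻ e, F e ∂μ) heq
  have l1 := lintegral_withDensity_eq_lintegral_mul P
    (f := fun ω => ENNReal.ofReal (ZZ ω)) hZZm.ennreal_ofReal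
    (g := fun a => F (Φ a)) (hF.comp hΦ)
  have l2 := lintegral_withDensity_eq_lintegral_mul P
    (f := fun ω => ENNReal.ofReal (GG ω)) hGGm.ennreal_ofReal
    (g := fun a => F (Φ a)) (hF.comp hΦ)
  simp only [lintegral_map hF hΦ, l1, l2, Pi.mul_apply] at h1
  exact h1

lemma integral_weight_eq {Ω E : Type*} [MeasurableSpace Ω] [MeasurableSpace E]
    (P : Measure Ω) (Φ : Ω → E) (ZZ GG : Ω → ℝ) (hΦ : Measurable Φ)
    (hZZm : Measurable ZZ) (hGGm : Measurable GG)
    (heq : (P.withDensity fun ω => ENNReal.ofReal (ZZ ω)).map Φ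
      = (P.withDensity fun ω => ENNReal.ofReal (GG ω)).map Φ)
    (F : E → ℝ) (hF : Measurable F) :
    ∫ ω, max (ZZ ω) 0 * F (Φ ω) ∂P = ∫ ω, max (GG ω) 0 * F (Φ ω) ∂P := by
  have h1 := congrArg (fun μ => ∫ e, F e ∂μ) heq
  have hd : ∀ f : Ω → ℝ, (fun ω => ENNReal.ofReal (f ω))
      = fun ω => ((Real.toNNReal (f ω) : ℝ≥0) : ℝ≥0∞) := by intro f; rfl
  rw [hd ZZ, hd GG] at h1
  have hmZ : Measurable fun ω => Real.toNNReal (ZZ ω) := hZZm.real_toNNReal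
  have hmG : Measurable fun ω => Real.toNNReal (GG ω) := hGGm.real_toNNReal
  simp only [integral_map hΦ.aemeasurable hF.aestronglyMeasurable,
    integral_withDensity_eq_integral_smul hmZ,
    integral_withDensity_eq_integral_smul hmG] at h1
  simpa only [NNReal.smul_def, smul_eq_mul, Real.coe_toNNReal'] using h1
end Aux

/-- Abadie's kappa-weighting identity (control arm), and the corollary that
E[κ¹] = E[κ⁰] = P(D(1)>D(0)). -/
theorem stmt6 {Ω 𝓧 : Type*} [MeasurableSpace Ω] [MeasurableSpace 𝓧]
    (P : Measure Ω) [IsProbabilityMeasure P]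
    (X : Ω → 𝓧) (hX : Measurable X)
    (Z D D0 D1 Y Y0 Y1 : Ω → ℝ)
    (hZm : Measurable Z) (hD0m : Measurable D0) (hD1m : Measurable D1)
    (hY0m : Measurable Y0) (hY1m : Measurable Y1)
    (hZ01 : ∀ ω, Z ω = 0 ∨ Z ω = 1)
    (hD0 : ∀ ω, D0 ω = 0 ∨ D0 ω = 1) (hD1 : ∀ ω, D1 ω = 0 ∨ D1 ω = 1)
    (hconsD : ∀ ω, D ω = Z ω * D1 ω + (1 - Z ω) * D0 ω)
    (hconsY : ∀ ω, Y ω = D ω * Y1 ω + (1 - D ω) * Y0 ω)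
    (hmono : ∀ᵐ ω ∂P, D0 ω ≤ D1 ω)
    (g₀ : Ω → ℝ) (hg₀ : g₀ =ᵐ[P] P[Z | sigmaX X])
    (hpos : ∀ᵐ ω ∂P, 0 < g₀ ω ∧ g₀ ω < 1)
    -- conditional independence of (Y0, Y1, D0, D1) and Z given X
    (hindep : ∀ φ : ℝ × ℝ × ℝ × ℝ → ℝ, Measurable φ →
      Integrable (fun ω => φ (Y0 ω, Y1 ω, D0 ω, D1 ω)) P →
      P[fun ω => φ (Y0 ω, Y1 ω, D0 ω, D1 ω) * Z ω | sigmaX X]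
        =ᵐ[P] fun ω => (P[fun ω' => φ (Y0 ω', Y1 ω', D0 ω', D1 ω') | sigmaX X]) ω * g₀ ω)
    (κ0 κ1 : Ω → ℝ)
    (hκ0 : ∀ ω, κ0 ω = (1 - D ω) * ((1 - Z ω) - (1 - g₀ ω)) / (g₀ ω * (1 - g₀ ω)))
    (hκ1 : ∀ ω, κ1 ω = D ω * (Z ω - g₀ ω) / (g₀ ω * (1 - g₀ ω))) :
    (∀ h : ℝ × 𝓧 → ℝ, Measurable h → Integrable (fun ω => h (Y ω, X ω)) P →
      ∫ ω, κ0 ω * h (Y ω, X ω) ∂P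
        = ∫ ω, (if D0 ω < D1 ω then h (Y0 ω, X ω) else 0) ∂P) ∧
    (∫ ω, κ1 ω ∂P = (P {ω | D0 ω < D1 ω}).toReal) ∧
    (∫ ω, κ0 ω ∂P = (P {ω | D0 ω < D1 ω}).toReal) := by
  have hm : sigmaX X ≤ ‹MeasurableSpace Ω› := by
    rw [sigmaX]; exact measurable_iff_comap_le.mp hX
  set G : Ω → ℝ := P[Z | sigmaX X] with hGdef
  have hGsm : StronglyMeasurable[sigmaX X] G := stronglyMeasurable_condExp
  have hGmm : Measurable[sigmaX X] G := hGsm.measurable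
  have hGm : Measurable G := hGmm.mono hm le_rfl
  have hGab : ∀ᵐ ω ∂P, 0 < G ω ∧ G ω < 1 := by
    filter_upwards [hpos, hg₀] with ω h1 h2
    rw [← h2]; exact h1
  have hXm : Measurable[sigmaX X] X := by
    rw [sigmaX]; exact measurable_iff_comap_le.mpr le_rfl
  set V : Ω → ℝ × ℝ × ℝ := fun ω => (Y0 ω, D0 ω, D1 ω) with hVdef
  set W : Ω → 𝓧 × ℝ := fun ω => (X ω, G ω) with hWdef
  have hVm : Measurable V := hY0m.prodMk (hD0m.prodMk hD1m)
  have hWmm : Measurable[sigmaX X] W := hXm.prodMk hGmm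
  have hWm : Measurable W := hWmm.mono hm le_rfl
  set Φ : Ω → (ℝ × ℝ × ℝ) × (𝓧 × ℝ) := fun ω => (V ω, W ω) with hΦdef
  have hΦ : Measurable Φ := hVm.prodMk hWm
  have hZb : ∀ ω, 0 ≤ Z ω ∧ Z ω ≤ 1 := by
    intro ω; rcases hZ01 ω with h | h <;> rw [h] <;> norm_num
  -- basic integrability
  have hZint : Integrable Z P := by
    refine Integrable.mono' (integrable_const 1) hZm.aestronglyMeasurable ?_
    refine ae_of_all _ fun ω => ?_
    rw [Real.norm_eq_abs, abs_le]
    exact ⟨by linarith [(hZb ω).1], (hZb ω).2⟩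
  have hGint : Integrable G P := integrable_condExp
  -- the rectangle identity for (Z, G)
  have hrectZ : ∀ s : Set (ℝ×ℝ×ℝ), MeasurableSet s → ∀ t : Set (𝓧×ℝ), MeasurableSet t →
      ∫ ω in V ⁻¹' s ∩ W ⁻¹' t, Z ω ∂P = ∫ ω in V ⁻¹' s ∩ W ⁻¹' t, G ω ∂P := by
    intro s hs t ht
    set φ4 : ℝ × ℝ × ℝ × ℝ → ℝ :=
      fun q => s.indicator (fun _ => (1:ℝ)) (q.1, q.2.2.1, q.2.2.2) with hφ4def
    have hr : Measurable fun q : ℝ × ℝ × ℝ × ℝ => (q.1, q.2.2.1, q.2.2.2) := by fun_prop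
    have hφ4m : Measurable φ4 := (measurable_const.indicator hs).comp hr
    set fφ : Ω → ℝ := fun ω => s.indicator (fun _ => (1:ℝ)) (V ω) with hfφdef
    have hfφm : Measurable fφ := (measurable_const.indicator hs).comp hVm
    have hfφb : ∀ ω, 0 ≤ fφ ω ∧ fφ ω ≤ 1 := by
      intro ω
      by_cases hω : V ω ∈ s <;> simp [hfφdef, Set.indicator_apply, hω]
    have hfφint : Integrable fφ P := by
      refine Integrable.mono' (integrable_const 1) hfφm.aestronglyMeasurable ?_
      refine ae_of_all _ fun ω => ?_
      rw [Real.norm_eq_abs, abs_le]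
      exact ⟨by linarith [(hfφb ω).1], (hfφb ω).2⟩
    have hfφZint : Integrable (fun ω => fφ ω * Z ω) P := by
      refine Integrable.mono' (integrable_const 1) (hfφm.mul hZm).aestronglyMeasurable ?_
      refine ae_of_all _ fun ω => ?_
      rw [Real.norm_eq_abs, abs_mul, abs_of_nonneg (hfφb ω).1, abs_of_nonneg (hZb ω).1]
      calc fφ ω * Z ω ≤ 1 * 1 :=
            mul_le_mul (hfφb ω).2 (hZb ω).2 (hZb ω).1 (by norm_num)
        _ = 1 := by norm_num
    have hGfφint : Integrable (G * fφ) P := by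
      refine Integrable.mono' hGint.abs ((hGm.mul hfφm).aestronglyMeasurable) ?_
      refine ae_of_all _ fun ω => ?_
      show |G ω * fφ ω| ≤ |G ω|
      rw [abs_mul]
      calc |G ω| * |fφ ω| ≤ |G ω| * 1 := by
            refine mul_le_mul_of_nonneg_left ?_ (abs_nonneg _)
            rw [abs_of_nonneg (hfφb ω).1]; exact (hfφb ω).2
        _ = |G ω| := by norm_num
    have hSm : MeasurableSet[sigmaX X] (W ⁻¹' t) := hWmm ht
    have hSm' : MeasurableSet (W ⁻¹' t) := hWm ht
    have hind : P[fun ω => fφ ω * Z ω | sigmaX X]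
        =ᵐ[P] fun ω => (P[fφ | sigmaX X]) ω * g₀ ω := hindep φ4 hφ4m hfφint
    have hpull : P[G * fφ | sigmaX X] =ᵐ[P] G * P[fφ | sigmaX X] :=
      condExp_mul_of_stronglyMeasurable_left hGsm hGfφint hfφint
    have hind1 : ∀ ω, (V ⁻¹' s).indicator Z ω = fφ ω * Z ω := by
      intro ω
      by_cases hω : V ω ∈ s <;>
        simp [Set.indicator_apply, hω, hfφdef]
    have hind2 : ∀ ω, (V ⁻¹' s).indicator G ω = fφ ω * G ω := by
      intro ω
      by_cases hω : V ω ∈ s <;>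
        simp [Set.indicator_apply, hω, hfφdef]
    calc ∫ ω in V ⁻¹' s ∩ W ⁻¹' t, Z ω ∂P
        = ∫ ω in W ⁻¹' t ∩ V ⁻¹' s, Z ω ∂P := by rw [Set.inter_comm]
      _ = ∫ ω in W ⁻¹' t, (V ⁻¹' s).indicator Z ω ∂P := (setIntegral_indicator (hVm hs)).symm
      _ = ∫ ω in W ⁻¹' t, fφ ω * Z ω ∂P := by
          exact setIntegral_congr_ae hSm' (ae_of_all _ fun ω _ => hind1 ω)
      _ = ∫ ω in W ⁻¹' t, (P[fun ω => fφ ω * Z ω | sigmaX X]) ω ∂P :=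
          (setIntegral_condExp hm hfφZint hSm).symm
      _ = ∫ ω in W ⁻¹' t, (P[fφ | sigmaX X]) ω * G ω ∂P := by
          refine setIntegral_congr_ae hSm' ?_
          filter_upwards [hind, hg₀] with ω h1 h2 _
          rw [h1]
          show (P[fφ | sigmaX X]) ω * g₀ ω = _
          rw [h2]
      _ = ∫ ω in W ⁻¹' t, (P[G * fφ | sigmaX X]) ω ∂P := by
          refine setIntegral_congr_ae hSm' ?_
          filter_upwards [hpull] with ω h1 _
          rw [h1]; simp only [Pi.mul_apply]; ring
      _ = ∫ ω in W ⁻¹' t, (G * fφ) ω ∂P := setIntegral_condExp hm hGfφint hSm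
      _ = ∫ ω in W ⁻¹' t, (V ⁻¹' s).indicator G ω ∂P := by
          refine setIntegral_congr_ae hSm' (ae_of_all _ fun ω _ => ?_)
          rw [hind2 ω]; simp only [Pi.mul_apply]; ring
      _ = ∫ ω in W ⁻¹' t ∩ V ⁻¹' s, G ω ∂P := setIntegral_indicator (hVm hs)
      _ = ∫ ω in V ⁻¹' s ∩ W ⁻¹' t, G ω ∂P := by rw [Set.inter_comm]
  -- rectangle identity for (1-Z, 1-G)
  have hrectZ' : ∀ s : Set (ℝ×ℝ×ℝ), MeasurableSet s → ∀ t : Set (𝓧×ℝ), MeasurableSet t →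
      ∫ ω in V ⁻¹' s ∩ W ⁻¹' t, (1 - Z ω) ∂P = ∫ ω in V ⁻¹' s ∩ W ⁻¹' t, (1 - G ω) ∂P := by
    intro s hs t ht
    rw [integral_sub (integrable_const 1).restrict hZint.restrict,
      integral_sub (integrable_const 1).restrict hGint.restrict, hrectZ s hs t ht]
  -- the two measure equalities
  have hGb01 : ∀ᵐ ω ∂P, 0 ≤ G ω ∧ G ω ≤ 1 := hGab.mono fun ω h => ⟨h.1.le, h.2.le⟩
  have hmeq1 := key_measure_eq P V W Z G hVm hWm hZm hGm (ae_of_all _ hZb) hGb01 hrectZ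
  have hmeq2 := key_measure_eq P V W (fun ω => 1 - Z ω) (fun ω => 1 - G ω) hVm hWm
    (measurable_const.sub hZm) (measurable_const.sub hGm)
    (ae_of_all _ fun ω => ⟨by show (0:ℝ) ≤ 1 - Z ω; linarith [(hZb ω).2],
      by show (1:ℝ) - Z ω ≤ 1; linarith [(hZb ω).1]⟩)
    (hGb01.mono fun ω h => ⟨by show (0:ℝ) ≤ 1 - G ω; linarith [h.2],
      by show (1:ℝ) - G ω ≤ 1; linarith [h.1]⟩) hrectZ'
  -- transfer principles
  have LW1 : ∀ F : (ℝ×ℝ×ℝ) × (𝓧×ℝ) → ℝ≥0∞, Measurable F →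
      ∫⁻ ω, ENNReal.ofReal (Z ω) * F (Φ ω) ∂P = ∫⁻ ω, ENNReal.ofReal (G ω) * F (Φ ω) ∂P :=
    fun F hF => lintegral_weight_eq P Φ Z G hΦ hZm hGm hmeq1 F hF
  have LW2 : ∀ F : (ℝ×ℝ×ℝ) × (𝓧×ℝ) → ℝ≥0∞, Measurable F →
      ∫⁻ ω, ENNReal.ofReal (1 - Z ω) * F (Φ ω) ∂P
        = ∫⁻ ω, ENNReal.ofReal (1 - G ω) * F (Φ ω) ∂P :=
    fun F hF => lintegral_weight_eq P Φ (fun ω => 1 - Z ω) (fun ω => 1 - G ω) hΦ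
      (measurable_const.sub hZm) (measurable_const.sub hGm) hmeq2 F hF
  have IW1 : ∀ F : (ℝ×ℝ×ℝ) × (𝓧×ℝ) → ℝ, Measurable F →
      ∫ ω, Z ω * F (Φ ω) ∂P = ∫ ω, G ω * F (Φ ω) ∂P := by
    intro F hF
    have h1 := integral_weight_eq P Φ Z G hΦ hZm hGm hmeq1 F hF
    calc ∫ ω, Z ω * F (Φ ω) ∂P = ∫ ω, max (Z ω) 0 * F (Φ ω) ∂P := by
          refine integral_congr_ae (ae_of_all _ fun ω => ?_)
          show Z ω * F (Φ ω) = max (Z ω) 0 * F (Φ ω)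
          rw [max_eq_left (hZb ω).1]
      _ = ∫ ω, max (G ω) 0 * F (Φ ω) ∂P := h1
      _ = ∫ ω, G ω * F (Φ ω) ∂P := by
          refine integral_congr_ae (hGb01.mono fun ω hω => ?_)
          show max (G ω) 0 * F (Φ ω) = G ω * F (Φ ω)
          rw [max_eq_left hω.1]
  have IW2 : ∀ F : (ℝ×ℝ×ℝ) × (𝓧×ℝ) → ℝ, Measurable F →
      ∫ ω, (1 - Z ω) * F (Φ ω) ∂P = ∫ ω, (1 - G ω) * F (Φ ω) ∂P := by
    intro F hF
    have h1 := integral_weight_eq P Φ (fun ω => 1 - Z ω) (fun ω => 1 - G ω) hΦ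
      (measurable_const.sub hZm) (measurable_const.sub hGm) hmeq2 F hF
    calc ∫ ω, (1 - Z ω) * F (Φ ω) ∂P = ∫ ω, max (1 - Z ω) 0 * F (Φ ω) ∂P := by
          refine integral_congr_ae (ae_of_all _ fun ω => ?_)
          show (1 - Z ω) * F (Φ ω) = max (1 - Z ω) 0 * F (Φ ω)
          rw [max_eq_left (by linarith [(hZb ω).2])]
      _ = ∫ ω, max (1 - G ω) 0 * F (Φ ω) ∂P := h1
      _ = ∫ ω, (1 - G ω) * F (Φ ω) ∂P := by
          refine integral_congr_ae (hGb01.mono fun ω hω => ?_)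
          show max (1 - G ω) 0 * F (Φ ω) = (1 - G ω) * F (Φ ω)
          rw [max_eq_left (by linarith [hω.2])]
  -- measurability of set of compliers
  have hsetm : MeasurableSet {ω | D0 ω < D1 ω} := measurableSet_lt hD0m hD1m
  have habs_norm : ∀ f : Ω → ℝ, ∀ ω, ENNReal.ofReal |f ω| = ENNReal.ofReal ‖f ω‖ := by
    intro f ω; rw [Real.norm_eq_abs]
  -- Part 1
  have key1 : ∀ h : ℝ × 𝓧 → ℝ, Measurable h → Integrable (fun ω => h (Y ω, X ω)) P →
      ∫ ω, κ0 ω * h (Y ω, X ω) ∂P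
        = ∫ ω, (if D0 ω < D1 ω then h (Y0 ω, X ω) else 0) ∂P := by
    intro h hhm hhint
    set A : Ω → ℝ := fun ω => (1 - D1 ω) * h (Y0 ω, X ω) with hAdef
    set B : Ω → ℝ := fun ω => (1 - D0 ω) * h (Y0 ω, X ω) with hBdef
    have hAm : Measurable A := (measurable_const.sub hD1m).mul (hhm.comp (hY0m.prodMk hX))
    have hBm : Measurable B := (measurable_const.sub hD0m).mul (hhm.comp (hY0m.prodMk hX))
    set FA : (ℝ×ℝ×ℝ) × (𝓧×ℝ) → ℝ := fun e => (1 - e.1.2.2) * h (e.1.1, e.2.1) / e.2.2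
      with hFAdef
    set FB : (ℝ×ℝ×ℝ) × (𝓧×ℝ) → ℝ := fun e => (1 - e.1.2.1) * h (e.1.1, e.2.1) / (1 - e.2.2)
      with hFBdef
    have hFAm : Measurable FA := by
      refine Measurable.div (Measurable.mul ?_ ?_) ?_
      · exact measurable_const.sub (measurable_snd.comp (measurable_snd.comp measurable_fst))
      · exact hhm.comp
          ((measurable_fst.comp measurable_fst).prodMk (measurable_fst.comp measurable_snd))
      · exact measurable_snd.comp measurable_snd
    have hFBm : Measurable FB := by
      refine Measurable.div (Measurable.mul ?_ ?_) ?_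
      · exact measurable_const.sub (measurable_fst.comp (measurable_snd.comp measurable_fst))
      · exact hhm.comp
          ((measurable_fst.comp measurable_fst).prodMk (measurable_fst.comp measurable_snd))
      · exact measurable_const.sub (measurable_snd.comp measurable_snd)
    have hFAΦ : ∀ ω, FA (Φ ω) = A ω / G ω := fun ω => rfl
    have hFBΦ : ∀ ω, FB (Φ ω) = B ω / (1 - G ω) := fun ω => rfl
    -- D1 = 0 implies (a.e.) Y = Y0
    have hY0ae : ∀ᵐ ω ∂P, D1 ω = 0 → Y ω = Y0 ω := by
      filter_upwards [hmono] with ω hd h1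
      have h0 : D0 ω = 0 := by
        rcases hD0 ω with h' | h'
        · exact h'
        · rw [h', h1] at hd; linarith
      have hD' : D ω = 0 := by rw [hconsD ω, h1, h0]; ring
      rw [hconsY ω, hD']; ring
    have hAeq : (fun ω => (1 - D1 ω) * h (Y ω, X ω)) =ᵐ[P] A := by
      filter_upwards [hY0ae] with ω hY0'
      show (1 - D1 ω) * h (Y ω, X ω) = (1 - D1 ω) * h (Y0 ω, X ω)
      rcases hD1 ω with h1 | h1
      · rw [hY0' h1]
      · rw [h1]; ring
    have hAint : Integrable A P := by
      refine Integrable.mono' hhint.abs hAm.aestronglyMeasurable ?_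
      filter_upwards [hAeq] with ω he
      rw [← he, Real.norm_eq_abs, abs_mul]
      rcases hD1 ω with h1 | h1 <;> rw [h1] <;> norm_num
    -- main pointwise identity
    have hmain : (fun ω => κ0 ω * h (Y ω, X ω))
        =ᵐ[P] fun ω => (1 - Z ω) * FB (Φ ω) - Z ω * FA (Φ ω) := by
      filter_upwards [hY0ae, hGab, hg₀] with ω hY0' hg hgeq
      have hGne : G ω ≠ 0 := ne_of_gt hg.1
      have hG1ne : (1:ℝ) - G ω ≠ 0 := ne_of_gt (by linarith [hg.2])
      show κ0 ω * h (Y ω, X ω) = (1 - Z ω) * FB (Φ ω) - Z ω * FA (Φ ω)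
      rw [hFAΦ, hFBΦ, hAdef, hBdef, hκ0 ω, hgeq]
      simp only
      rcases hZ01 ω with hz | hz
      · have hD' : D ω = D0 ω := by rw [hconsD ω, hz]; ring
        rcases hD0 ω with h0 | h0
        · have hY' : Y ω = Y0 ω := by rw [hconsY ω, hD', h0]; ring
          rw [hz, hD', h0, hY']
          field_simp
          ring
        · rw [hz, hD', h0]
          field_simp
          ring
      · have hD' : D ω = D1 ω := by rw [hconsD ω, hz]; ring
        rcases hD1 ω with h1 | h1
        · have hY' : Y ω = Y0 ω := hY0' h1
          rw [hz, hD', h1, hY']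
          field_simp
          ring
        · rw [hz, hD', h1]
          field_simp
          ring
    -- lintegral identities
    have lA : ∫⁻ ω, ENNReal.ofReal (Z ω * |FA (Φ ω)|) ∂P = ∫⁻ ω, ENNReal.ofReal |A ω| ∂P := by
      have e1 : ∀ ω, ENNReal.ofReal (Z ω * |FA (Φ ω)|)
          = ENNReal.ofReal (Z ω) * ENNReal.ofReal |FA (Φ ω)| :=
        fun ω => ENNReal.ofReal_mul (hZb ω).1
      rw [lintegral_congr e1, LW1 (fun e => ENNReal.ofReal |FA e|) hFAm.abs.ennreal_ofReal]
      refine lintegral_congr_ae ?_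
      filter_upwards [hGab] with ω hg
      show ENNReal.ofReal (G ω) * ENNReal.ofReal |FA (Φ ω)| = ENNReal.ofReal |A ω|
      rw [← ENNReal.ofReal_mul hg.1.le, hFAΦ, abs_div, abs_of_pos hg.1]
      congr 1
      rw [mul_div_assoc']
      exact mul_div_cancel_left₀ _ (ne_of_gt hg.1)
    have lB : ∫⁻ ω, ENNReal.ofReal ((1 - Z ω) * |FB (Φ ω)|) ∂P
        = ∫⁻ ω, ENNReal.ofReal |B ω| ∂P := by
      have e1 : ∀ ω, ENNReal.ofReal ((1 - Z ω) * |FB (Φ ω)|)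
          = ENNReal.ofReal (1 - Z ω) * ENNReal.ofReal |FB (Φ ω)| :=
        fun ω => ENNReal.ofReal_mul (by linarith [(hZb ω).2])
      rw [lintegral_congr e1, LW2 (fun e => ENNReal.ofReal |FB e|) hFBm.abs.ennreal_ofReal]
      refine lintegral_congr_ae ?_
      filter_upwards [hGab] with ω hg
      show ENNReal.ofReal (1 - G ω) * ENNReal.ofReal |FB (Φ ω)| = ENNReal.ofReal |B ω|
      rw [← ENNReal.ofReal_mul (by linarith [hg.2]), hFBΦ, abs_div,
        abs_of_pos (by linarith [hg.2] : (0:ℝ) < 1 - G ω)]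
      congr 1
      rw [mul_div_assoc']
      exact mul_div_cancel_left₀ _ (ne_of_gt (by linarith [hg.2] : (0:ℝ) < 1 - G ω))
    -- real-integral identities
    have hZA : ∫ ω, Z ω * FA (Φ ω) ∂P = ∫ ω, A ω ∂P := by
      rw [IW1 FA hFAm]
      refine integral_congr_ae ?_
      filter_upwards [hGab] with ω hg
      show G ω * FA (Φ ω) = A ω
      rw [hFAΦ, mul_div_assoc']
      exact mul_div_cancel_left₀ _ (ne_of_gt hg.1)
    have hZB : ∫ ω, (1 - Z ω) * FB (Φ ω) ∂P = ∫ ω, B ω ∂P := by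
      rw [IW2 FB hFBm]
      refine integral_congr_ae ?_
      filter_upwards [hGab] with ω hg
      show (1 - G ω) * FB (Φ ω) = B ω
      rw [hFBΦ, mul_div_assoc']
      exact mul_div_cancel_left₀ _ (ne_of_gt (by linarith [hg.2] : (0:ℝ) < 1 - G ω))
    have hZAint : Integrable (fun ω => Z ω * FA (Φ ω)) P := by
      refine ⟨(hZm.mul (hFAm.comp hΦ)).aestronglyMeasurable, ?_⟩
      rw [hasFiniteIntegral_iff_norm]
      have e2 : ∀ ω, ENNReal.ofReal ‖Z ω * FA (Φ ω)‖ = ENNReal.ofReal (Z ω * |FA (Φ ω)|) := by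
        intro ω; rw [Real.norm_eq_abs, abs_mul, abs_of_nonneg (hZb ω).1]
      rw [lintegral_congr e2, lA, lintegral_congr (habs_norm A)]
      exact (hasFiniteIntegral_iff_norm A).mp hAint.2
    have hBAif : (fun ω => B ω - A ω)
        =ᵐ[P] fun ω => if D0 ω < D1 ω then h (Y0 ω, X ω) else 0 := by
      filter_upwards [hmono] with ω hd
      show (1 - D0 ω) * h (Y0 ω, X ω) - (1 - D1 ω) * h (Y0 ω, X ω) = _
      rcases hD0 ω with h0 | h0 <;> rcases hD1 ω with h1 | h1
      · rw [h0, h1]; norm_num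
      · rw [h0, h1]; norm_num
      · exfalso; rw [h0, h1] at hd; linarith
      · rw [h0, h1]; norm_num
    by_cases hBint : Integrable B P
    · have hZBint : Integrable (fun ω => (1 - Z ω) * FB (Φ ω)) P := by
        refine ⟨((measurable_const.sub hZm).mul (hFBm.comp hΦ)).aestronglyMeasurable, ?_⟩
        rw [hasFiniteIntegral_iff_norm]
        have e2 : ∀ ω, ENNReal.ofReal ‖(1 - Z ω) * FB (Φ ω)‖
            = ENNReal.ofReal ((1 - Z ω) * |FB (Φ ω)|) := by
          intro ω
          rw [Real.norm_eq_abs, abs_mul, abs_of_nonneg (by linarith [(hZb ω).2] : (0:ℝ) ≤ 1 - Z ω)]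
        rw [lintegral_congr e2, lB, lintegral_congr (habs_norm B)]
        exact (hasFiniteIntegral_iff_norm B).mp hBint.2
      calc ∫ ω, κ0 ω * h (Y ω, X ω) ∂P
          = ∫ ω, ((1 - Z ω) * FB (Φ ω) - Z ω * FA (Φ ω)) ∂P := integral_congr_ae hmain
        _ = ∫ ω, (1 - Z ω) * FB (Φ ω) ∂P - ∫ ω, Z ω * FA (Φ ω) ∂P :=
            integral_sub hZBint hZAint
        _ = ∫ ω, B ω ∂P - ∫ ω, A ω ∂P := by rw [hZB, hZA]
        _ = ∫ ω, (B ω - A ω) ∂P := (integral_sub hBint hAint).symm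
        _ = ∫ ω, (if D0 ω < D1 ω then h (Y0 ω, X ω) else 0) ∂P := integral_congr_ae hBAif
    · have hRne : ¬ Integrable (fun ω => if D0 ω < D1 ω then h (Y0 ω, X ω) else 0) P := by
        intro hc
        have h2 : Integrable (fun ω => B ω - A ω) P := hc.congr hBAif.symm
        exact hBint (((h2.add hAint).congr (ae_of_all _ fun ω => by
          show B ω - A ω + A ω = B ω; ring)))
      have hLne : ¬ Integrable (fun ω => κ0 ω * h (Y ω, X ω)) P := by
        intro hc
        have h2 : Integrable (fun ω => (1 - Z ω) * FB (Φ ω) - Z ω * FA (Φ ω)) P :=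
          hc.congr hmain
        have h3 : Integrable (fun ω => (1 - Z ω) * FB (Φ ω)) P := by
          refine (h2.add hZAint).congr (ae_of_all _ fun ω => ?_)
          show (1 - Z ω) * FB (Φ ω) - Z ω * FA (Φ ω) + Z ω * FA (Φ ω) = _; ring
        apply hBint
        refine ⟨hBm.aestronglyMeasurable, ?_⟩
        rw [hasFiniteIntegral_iff_norm, ← lintegral_congr (habs_norm B), ← lB]
        have h5 := (hasFiniteIntegral_iff_norm _).mp h3.2
        have e2 : ∀ ω, ENNReal.ofReal ‖(1 - Z ω) * FB (Φ ω)‖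
            = ENNReal.ofReal ((1 - Z ω) * |FB (Φ ω)|) := by
          intro ω
          rw [Real.norm_eq_abs, abs_mul, abs_of_nonneg (by linarith [(hZb ω).2] : (0:ℝ) ≤ 1 - Z ω)]
        rwa [lintegral_congr e2] at h5
      rw [integral_undef hLne, integral_undef hRne]
  refine ⟨key1, ?_, ?_⟩
  · -- κ1 part
    set FC : (ℝ×ℝ×ℝ) × (𝓧×ℝ) → ℝ := fun e => e.1.2.2 / e.2.2 with hFCdef
    set FD : (ℝ×ℝ×ℝ) × (𝓧×ℝ) → ℝ := fun e => e.1.2.1 / (1 - e.2.2) with hFDdef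
    have hFCm : Measurable FC :=
      (measurable_snd.comp (measurable_snd.comp measurable_fst)).div
        (measurable_snd.comp measurable_snd)
    have hFDm : Measurable FD :=
      (measurable_fst.comp (measurable_snd.comp measurable_fst)).div
        (measurable_const.sub (measurable_snd.comp measurable_snd))
    have hFCΦ : ∀ ω, FC (Φ ω) = D1 ω / G ω := fun ω => rfl
    have hFDΦ : ∀ ω, FD (Φ ω) = D0 ω / (1 - G ω) := fun ω => rfl
    have hD1b : ∀ ω, 0 ≤ D1 ω ∧ D1 ω ≤ 1 := by
      intro ω; rcases hD1 ω with h' | h' <;> rw [h'] <;> norm_num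
    have hD0b : ∀ ω, 0 ≤ D0 ω ∧ D0 ω ≤ 1 := by
      intro ω; rcases hD0 ω with h' | h' <;> rw [h'] <;> norm_num
    have hD1int : Integrable D1 P := by
      refine Integrable.mono' (integrable_const 1) hD1m.aestronglyMeasurable ?_
      refine ae_of_all _ fun ω => ?_
      rw [Real.norm_eq_abs, abs_le]
      exact ⟨by linarith [(hD1b ω).1], (hD1b ω).2⟩
    have hD0int : Integrable D0 P := by
      refine Integrable.mono' (integrable_const 1) hD0m.aestronglyMeasurable ?_
      refine ae_of_all _ fun ω => ?_
      rw [Real.norm_eq_abs, abs_le]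
      exact ⟨by linarith [(hD0b ω).1], (hD0b ω).2⟩
    have hmain1 : κ1 =ᵐ[P] fun ω => Z ω * FC (Φ ω) - (1 - Z ω) * FD (Φ ω) := by
      filter_upwards [hGab, hg₀] with ω hg hgeq
      have hGne : G ω ≠ 0 := ne_of_gt hg.1
      have hG1ne : (1:ℝ) - G ω ≠ 0 := ne_of_gt (by linarith [hg.2])
      show κ1 ω = Z ω * FC (Φ ω) - (1 - Z ω) * FD (Φ ω)
      rw [hFCΦ, hFDΦ, hκ1 ω, hgeq]
      rcases hZ01 ω with hz | hz
      · have hD' : D ω = D0 ω := by rw [hconsD ω, hz]; ring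
        rw [hz, hD']
        field_simp
        ring
      · have hD' : D ω = D1 ω := by rw [hconsD ω, hz]; ring
        rw [hz, hD']
        field_simp
        ring
    have lC : ∫⁻ ω, ENNReal.ofReal (Z ω * |FC (Φ ω)|) ∂P = ∫⁻ ω, ENNReal.ofReal |D1 ω| ∂P := by
      have e1 : ∀ ω, ENNReal.ofReal (Z ω * |FC (Φ ω)|)
          = ENNReal.ofReal (Z ω) * ENNReal.ofReal |FC (Φ ω)| :=
        fun ω => ENNReal.ofReal_mul (hZb ω).1
      rw [lintegral_congr e1, LW1 (fun e => ENNReal.ofReal |FC e|) hFCm.abs.ennreal_ofReal]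
      refine lintegral_congr_ae ?_
      filter_upwards [hGab] with ω hg
      show ENNReal.ofReal (G ω) * ENNReal.ofReal |FC (Φ ω)| = ENNReal.ofReal |D1 ω|
      rw [← ENNReal.ofReal_mul hg.1.le, hFCΦ, abs_div, abs_of_pos hg.1]
      congr 1
      rw [mul_div_assoc']
      exact mul_div_cancel_left₀ _ (ne_of_gt hg.1)
    have lD : ∫⁻ ω, ENNReal.ofReal ((1 - Z ω) * |FD (Φ ω)|) ∂P
        = ∫⁻ ω, ENNReal.ofReal |D0 ω| ∂P := by
      have e1 : ∀ ω, ENNReal.ofReal ((1 - Z ω) * |FD (Φ ω)|)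
          = ENNReal.ofReal (1 - Z ω) * ENNReal.ofReal |FD (Φ ω)| :=
        fun ω => ENNReal.ofReal_mul (by linarith [(hZb ω).2])
      rw [lintegral_congr e1, LW2 (fun e => ENNReal.ofReal |FD e|) hFDm.abs.ennreal_ofReal]
      refine lintegral_congr_ae ?_
      filter_upwards [hGab] with ω hg
      show ENNReal.ofReal (1 - G ω) * ENNReal.ofReal |FD (Φ ω)| = ENNReal.ofReal |D0 ω|
      rw [← ENNReal.ofReal_mul (by linarith [hg.2]), hFDΦ, abs_div,
        abs_of_pos (by linarith [hg.2] : (0:ℝ) < 1 - G ω)]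
      congr 1
      rw [mul_div_assoc']
      exact mul_div_cancel_left₀ _ (ne_of_gt (by linarith [hg.2] : (0:ℝ) < 1 - G ω))
    have hZCint : Integrable (fun ω => Z ω * FC (Φ ω)) P := by
      refine ⟨(hZm.mul (hFCm.comp hΦ)).aestronglyMeasurable, ?_⟩
      rw [hasFiniteIntegral_iff_norm]
      have e2 : ∀ ω, ENNReal.ofReal ‖Z ω * FC (Φ ω)‖ = ENNReal.ofReal (Z ω * |FC (Φ ω)|) := by
        intro ω; rw [Real.norm_eq_abs, abs_mul, abs_of_nonneg (hZb ω).1]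
      rw [lintegral_congr e2, lC, lintegral_congr (habs_norm D1)]
      exact (hasFiniteIntegral_iff_norm D1).mp hD1int.2
    have hZDint : Integrable (fun ω => (1 - Z ω) * FD (Φ ω)) P := by
      refine ⟨((measurable_const.sub hZm).mul (hFDm.comp hΦ)).aestronglyMeasurable, ?_⟩
      rw [hasFiniteIntegral_iff_norm]
      have e2 : ∀ ω, ENNReal.ofReal ‖(1 - Z ω) * FD (Φ ω)‖
          = ENNReal.ofReal ((1 - Z ω) * |FD (Φ ω)|) := by
        intro ω
        rw [Real.norm_eq_abs, abs_mul, abs_of_nonneg (by linarith [(hZb ω).2] : (0:ℝ) ≤ 1 - Z ω)]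
      rw [lintegral_congr e2, lD, lintegral_congr (habs_norm D0)]
      exact (hasFiniteIntegral_iff_norm D0).mp hD0int.2
    have hC : ∫ ω, Z ω * FC (Φ ω) ∂P = ∫ ω, D1 ω ∂P := by
      rw [IW1 FC hFCm]
      refine integral_congr_ae ?_
      filter_upwards [hGab] with ω hg
      show G ω * FC (Φ ω) = D1 ω
      rw [hFCΦ, mul_div_assoc']
      exact mul_div_cancel_left₀ _ (ne_of_gt hg.1)
    have hDD : ∫ ω, (1 - Z ω) * FD (Φ ω) ∂P = ∫ ω, D0 ω ∂P := by
      rw [IW2 FD hFDm]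
      refine integral_congr_ae ?_
      filter_upwards [hGab] with ω hg
      show (1 - G ω) * FD (Φ ω) = D0 ω
      rw [hFDΦ, mul_div_assoc']
      exact mul_div_cancel_left₀ _ (ne_of_gt (by linarith [hg.2] : (0:ℝ) < 1 - G ω))
    have hindic : (fun ω => D1 ω - D0 ω)
        =ᵐ[P] ({ω | D0 ω < D1 ω}.indicator fun _ => (1:ℝ)) := by
      filter_upwards [hmono] with ω hd
      show D1 ω - D0 ω = _
      rw [Set.indicator_apply]
      by_cases hc : ω ∈ {ω | D0 ω < D1 ω}
      · rw [if_pos hc]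
        have hc' : D0 ω < D1 ω := hc
        rcases hD0 ω with h0 | h0 <;> rcases hD1 ω with h1 | h1 <;>
          rw [h0, h1] <;> rw [h0, h1] at hc' <;> linarith
      · rw [if_neg hc]
        have hc' : ¬ D0 ω < D1 ω := hc
        rcases hD0 ω with h0 | h0 <;> rcases hD1 ω with h1 | h1
        · rw [h0, h1]; ring
        · exfalso; rw [h0, h1] at hc'; exact hc' (by norm_num)
        · exfalso; rw [h0, h1] at hd; linarith
        · rw [h0, h1]; ring
    calc ∫ ω, κ1 ω ∂P
        = ∫ ω, (Z ω * FC (Φ ω) - (1 - Z ω) * FD (Φ ω)) ∂P := integral_congr_ae hmain1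
      _ = ∫ ω, Z ω * FC (Φ ω) ∂P - ∫ ω, (1 - Z ω) * FD (Φ ω) ∂P :=
          integral_sub hZCint hZDint
      _ = ∫ ω, D1 ω ∂P - ∫ ω, D0 ω ∂P := by rw [hC, hDD]
      _ = ∫ ω, (D1 ω - D0 ω) ∂P := (integral_sub hD1int hD0int).symm
      _ = ∫ ω, ({ω | D0 ω < D1 ω}.indicator fun _ => (1:ℝ)) ω ∂P := integral_congr_ae hindic
      _ = (P {ω | D0 ω < D1 ω}).toReal := by
          rw [integral_indicator_const (1:ℝ) hsetm, smul_eq_mul, mul_one]; rfl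
  · -- κ0 with h = 1
    have h1 := key1 (fun _ => (1:ℝ)) measurable_const (integrable_const (1:ℝ))
    calc ∫ ω, κ0 ω ∂P = ∫ ω, κ0 ω * 1 ∂P := by simp
      _ = ∫ ω, (if D0 ω < D1 ω then (1:ℝ) else 0) ∂P := h1
      _ = ∫ ω, ({ω | D0 ω < D1 ω}.indicator fun _ => (1:ℝ)) ω ∂P := by
          refine integral_congr_ae (ae_of_all _ fun ω => ?_)
          rw [Set.indicator_apply]
          rfl
      _ = (P {ω | D0 ω < D1 ω}).toReal := by
          rw [integral_indicator_const (1:ℝ) hsetm, smul_eq_mul, mul_one]; rfl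
end

section
/- Under the kappa-weighting assumptions, the causal parameter β₀ := E[(Y(1) - Y(0))·1{D(1) > D(0)}] satisfies β₀ = E[(κ⁽¹⁾ - κ⁽⁰⁾)·Y], where κ⁽¹⁾ = D(Z - g₀(X))/(g₀(X)(1-g₀(X))) and κ⁽⁰⁾ = (1-D)((1-Z)-(1-g₀(X)))/(g₀(X)(1-g₀(X))), provided E|Y| < ∞ and E|Y(0)| + E|Y(1)| < ∞. -/
open MeasureTheory Real Filter Topology

lemma max_zero_sub_max_neg_zero (a : ℝ) : max a 0 - max (-a) 0 = a := by
  rcases le_total a 0 with h | h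
  · simp [max_eq_right h, max_eq_left (neg_nonneg.mpr h)]
  · simp [max_eq_left h, max_eq_right (neg_nonpos.mpr h)]

lemma kappa_key {Ω : Type*} [m0 : MeasurableSpace Ω] (P : Measure Ω) [IsProbabilityMeasure P]
    {m : MeasurableSpace Ω} (hm : m ≤ m0)
    {W Z g : Ω → ℝ} (hWint : Integrable W P) (hWnn : ∀ ω, 0 ≤ W ω)
    (hZ01 : ∀ ω, Z ω = 0 ∨ Z ω = 1) (hZm : Measurable[m0] Z)
    (hg : StronglyMeasurable[m] g) (hgpos : ∀ᵐ ω ∂P, 0 < g ω)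
    (hcond : P[fun ω => W ω * Z ω | m] =ᵐ[P] fun ω => (P[W|m]) ω * g ω) :
    Integrable (fun ω => W ω * Z ω / g ω) P ∧
      ∫ ω, W ω * Z ω / g ω ∂P = ∫ ω, W ω ∂P := by
  have hZnn : ∀ ω, 0 ≤ Z ω := fun ω => by rcases hZ01 ω with h | h <;> rw [h] <;> norm_num
  have hZle : ∀ ω, Z ω ≤ 1 := fun ω => by rcases hZ01 ω with h | h <;> rw [h] <;> norm_num
  have hWZnn : ∀ ω, 0 ≤ W ω * Z ω := fun ω => mul_nonneg (hWnn ω) (hZnn ω)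
  have hWZint : Integrable (fun ω => W ω * Z ω) P := by
    refine hWint.mono (hWint.1.mul (hZm.aestronglyMeasurable (μ := P)))
      (Eventually.of_forall fun ω => ?_)
    rw [norm_mul]
    calc ‖W ω‖ * ‖Z ω‖ ≤ ‖W ω‖ * 1 := by
          refine mul_le_mul_of_nonneg_left ?_ (norm_nonneg _)
          rw [Real.norm_eq_abs, abs_of_nonneg (hZnn ω)]; exact hZle ω
      _ = ‖W ω‖ := mul_one _
  set G : Ω → ℝ := P[W|m] with hG
  set c : ℕ → Ω → ℝ := fun n ω => max (min (1 / g ω) n) 0 with hc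
  have hc_sm : ∀ n, StronglyMeasurable[m] (c n) := fun n =>
    (((measurable_const.div hg.measurable).min measurable_const).max
      measurable_const).stronglyMeasurable
  have hc_nn : ∀ n ω, 0 ≤ c n ω := fun n ω => le_max_right _ _
  have hc_le : ∀ n ω, c n ω ≤ n := fun n ω =>
    max_le (min_le_right _ _) (Nat.cast_nonneg n)
  have hc_mono : ∀ ω, Monotone fun n => c n ω := fun ω a b hab =>
    max_le_max (min_le_min le_rfl (Nat.cast_le.mpr hab)) le_rfl
  have hc_ev : ∀ ω, 0 < g ω → ∀ᶠ n : ℕ in atTop, c n ω = 1 / g ω := by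
    intro ω hgω
    filter_upwards [eventually_ge_atTop ⌈1 / g ω⌉₊] with n hn
    have h1 : 1 / g ω ≤ (n : ℝ) := le_trans (Nat.le_ceil _) (Nat.cast_le.mpr hn)
    rw [hc]
    simp only
    rw [min_eq_left h1, max_eq_left (by positivity)]
  have hc_le_inv : ∀ ω, 0 < g ω → ∀ n : ℕ, c n ω ≤ 1 / g ω := by
    intro ω hgω n
    exact max_le (min_le_left _ _) (by positivity)
  set f : ℕ → Ω → ℝ := fun n ω => c n ω * (W ω * Z ω) with hf
  have hf_int : ∀ n, Integrable (f n) P := by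
    intro n
    refine hWZint.bdd_mul (c := n) ((hc_sm n).mono hm).aestronglyMeasurable
      (Eventually.of_forall fun ω => ?_)
    rw [Real.norm_eq_abs, abs_of_nonneg (hc_nn n ω)]
    exact hc_le n ω
  have hf_cond : ∀ n, P[f n|m] =ᵐ[P] fun ω => c n ω * (G ω * g ω) := by
    intro n
    have h1 : P[c n * fun ω => W ω * Z ω|m] =ᵐ[P] c n * P[fun ω => W ω * Z ω|m] :=
      condExp_mul_of_stronglyMeasurable_left (hc_sm n) (hf_int n) hWZint
    refine EventuallyEq.trans ?_ (h1.trans ?_)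
    · rfl
    · filter_upwards [hcond] with ω hω
      simp only [Pi.mul_apply, hω]
  have hf_eq : ∀ n, ∫ ω, f n ω ∂P = ∫ ω, c n ω * (G ω * g ω) ∂P := by
    intro n
    rw [← integral_condExp (f := f n) hm]
    exact integral_congr_ae (hf_cond n)
  have hGnn : 0 ≤ᵐ[P] G := condExp_nonneg (Eventually.of_forall hWnn)
  have hcg : ∀ᵐ ω ∂P, ∀ n : ℕ, 0 ≤ c n ω * g ω ∧ c n ω * g ω ≤ 1 := by
    filter_upwards [hgpos] with ω hω n
    refine ⟨mul_nonneg (hc_nn n ω) hω.le, ?_⟩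
    calc c n ω * g ω ≤ (1 / g ω) * g ω :=
          mul_le_mul_of_nonneg_right (hc_le_inv ω hω n) hω.le
      _ = 1 := by field_simp
  have hh_int : ∀ n, Integrable (fun ω => c n ω * (G ω * g ω)) P := by
    intro n
    refine (integrable_condExp (m := m) (f := W)).mono (g := P[W|m])
      (((((hc_sm n).mono hm).aestronglyMeasurable).mul
        ((stronglyMeasurable_condExp.mono hm).aestronglyMeasurable.mul
          ((hg.mono hm).aestronglyMeasurable)))) ?_
    filter_upwards [hcg, hGnn] with ω h1 h2
    have he : c n ω * (G ω * g ω) = (c n ω * g ω) * G ω := by ring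
    rw [he, Real.norm_eq_abs, Real.norm_eq_abs, abs_mul,
      abs_of_nonneg (h1 n).1]
    calc (c n ω * g ω) * |G ω| ≤ 1 * |G ω| :=
          mul_le_mul_of_nonneg_right (h1 n).2 (abs_nonneg _)
      _ = |G ω| := one_mul _
  have hh_mono : ∀ᵐ ω ∂P, Monotone fun n => c n ω * (G ω * g ω) := by
    filter_upwards [hgpos, hGnn] with ω h1 h2 a b hab
    exact mul_le_mul_of_nonneg_right (hc_mono ω hab) (mul_nonneg h2 h1.le)
  have hh_tendsto : ∀ᵐ ω ∂P, Tendsto (fun n => c n ω * (G ω * g ω)) atTop (𝓝 (G ω)) := by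
    filter_upwards [hgpos] with ω h1
    refine Tendsto.congr' ?_ tendsto_const_nhds
    filter_upwards [hc_ev ω h1] with n hn
    rw [hn]
    field_simp
  have hInt_tendsto : Tendsto (fun n => ∫ ω, c n ω * (G ω * g ω) ∂P) atTop
      (𝓝 (∫ ω, W ω ∂P)) := by
    have h := integral_tendsto_of_tendsto_of_monotone hh_int integrable_condExp
      hh_mono hh_tendsto
    rwa [integral_condExp (f := W) hm] at h
  have hf_le : ∀ n, ∫ ω, f n ω ∂P ≤ ∫ ω, W ω ∂P := by
    intro n
    rw [hf_eq n, ← integral_condExp (f := W) hm]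
    refine integral_mono_ae (hh_int n) integrable_condExp ?_
    filter_upwards [hcg, hGnn] with ω h1 h2
    calc c n ω * (G ω * g ω) = (c n ω * g ω) * G ω := by ring
      _ ≤ 1 * G ω := mul_le_mul_of_nonneg_right (h1 n).2 h2
      _ = G ω := one_mul _
  have hF_meas : AEStronglyMeasurable[m0] (fun ω => W ω * Z ω / g ω) P :=
    ((hWint.1.aemeasurable.mul hZm.aemeasurable).div
      ((hg.mono hm).measurable.aemeasurable)).aestronglyMeasurable
  have hF_nn : 0 ≤ᵐ[P] fun ω => W ω * Z ω / g ω := by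
    filter_upwards [hgpos] with ω hω
    exact div_nonneg (hWZnn ω) hω.le
  have hf_mono : ∀ᵐ ω ∂P, Monotone fun n => f n ω :=
    Eventually.of_forall fun ω a b hab =>
      mul_le_mul_of_nonneg_right (hc_mono ω hab) (hWZnn ω)
  have hf_tendsto : ∀ᵐ ω ∂P, Tendsto (fun n => f n ω) atTop (𝓝 (W ω * Z ω / g ω)) := by
    filter_upwards [hgpos] with ω h1
    refine Tendsto.congr' ?_ tendsto_const_nhds
    filter_upwards [hc_ev ω h1] with n hn
    rw [hf]
    simp only
    rw [hn]
    field_simp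
  have hf_nn : ∀ n ω, 0 ≤ f n ω := fun n ω => mul_nonneg (hc_nn n ω) (hWZnn ω)
  have hF_int : Integrable (fun ω => W ω * Z ω / g ω) P := by
    refine ⟨hF_meas, ?_⟩
    rw [hasFiniteIntegral_iff_ofReal hF_nn]
    have key : ∫⁻ ω, ENNReal.ofReal (W ω * Z ω / g ω) ∂P
        = ⨆ n, ∫⁻ ω, ENNReal.ofReal (f n ω) ∂P := by
      rw [← lintegral_iSup' (fun n => ((hf_int n).1.aemeasurable).ennreal_ofReal)
        (Eventually.of_forall fun ω a b hab =>
          ENNReal.ofReal_le_ofReal (mul_le_mul_of_nonneg_right (hc_mono ω hab) (hWZnn ω)))]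
      refine lintegral_congr_ae ?_
      filter_upwards [hf_tendsto, hf_mono] with ω h1 h2
      exact tendsto_nhds_unique
        (tendsto_atTop_iSup (fun a b hab => ENNReal.ofReal_le_ofReal (h2 hab)))
        ((ENNReal.continuous_ofReal.tendsto _).comp h1) |>.symm
    rw [key]
    calc ⨆ n, ∫⁻ ω, ENNReal.ofReal (f n ω) ∂P
        ≤ ENNReal.ofReal (∫ ω, W ω ∂P) := by
          refine iSup_le fun n => ?_
          rw [← ofReal_integral_eq_lintegral_ofReal (hf_int n)
            (Eventually.of_forall (hf_nn n))]
          exact ENNReal.ofReal_le_ofReal (hf_le n)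
      _ < ⊤ := ENNReal.ofReal_lt_top
  refine ⟨hF_int, ?_⟩
  have t1 : Tendsto (fun n => ∫ ω, f n ω ∂P) atTop (𝓝 (∫ ω, W ω * Z ω / g ω ∂P)) :=
    integral_tendsto_of_tendsto_of_monotone hf_int hF_int hf_mono hf_tendsto
  have t2 : Tendsto (fun n => ∫ ω, f n ω ∂P) atTop (𝓝 (∫ ω, W ω ∂P)) := by
    simp only [hf_eq]
    exact hInt_tendsto
  exact tendsto_nhds_unique t1 t2



/-- Moment identification of the complier-weighted causal parameter:
β₀ = E[(Y(1)-Y(0)) 1{D(1)>D(0)}] = E[(κ¹ - κ⁰) Y]. -/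
theorem stmt7 {Ω 𝓧 : Type*} [MeasurableSpace Ω] [MeasurableSpace 𝓧]
    (P : Measure Ω) [IsProbabilityMeasure P]
    (X : Ω → 𝓧) (hX : Measurable X)
    (Z D D0 D1 Y Y0 Y1 : Ω → ℝ)
    (hZm : Measurable Z) (hD0m : Measurable D0) (hD1m : Measurable D1)
    (hY0m : Measurable Y0) (hY1m : Measurable Y1)
    (hZ01 : ∀ ω, Z ω = 0 ∨ Z ω = 1)
    (hD0 : ∀ ω, D0 ω = 0 ∨ D0 ω = 1) (hD1 : ∀ ω, D1 ω = 0 ∨ D1 ω = 1)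
    (hconsD : ∀ ω, D ω = Z ω * D1 ω + (1 - Z ω) * D0 ω)
    (hconsY : ∀ ω, Y ω = D ω * Y1 ω + (1 - D ω) * Y0 ω)
    (hmono : ∀ᵐ ω ∂P, D0 ω ≤ D1 ω)
    (hYint : Integrable Y P) (hY0int : Integrable Y0 P) (hY1int : Integrable Y1 P)
    (g₀ : Ω → ℝ) (hg₀ : g₀ =ᵐ[P] P[Z | sigmaX X])
    (hpos : ∀ᵐ ω ∂P, 0 < g₀ ω ∧ g₀ ω < 1)
    -- conditional independence of (Y0, Y1, D0, D1) and Z given X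
    (hindep : ∀ φ : ℝ × ℝ × ℝ × ℝ → ℝ, Measurable φ →
      Integrable (fun ω => φ (Y0 ω, Y1 ω, D0 ω, D1 ω)) P →
      P[fun ω => φ (Y0 ω, Y1 ω, D0 ω, D1 ω) * Z ω | sigmaX X]
        =ᵐ[P] fun ω => (P[fun ω' => φ (Y0 ω', Y1 ω', D0 ω', D1 ω') | sigmaX X]) ω * g₀ ω)
    (κ0 κ1 : Ω → ℝ)
    (hκ0 : ∀ ω, κ0 ω = (1 - D ω) * ((1 - Z ω) - (1 - g₀ ω)) / (g₀ ω * (1 - g₀ ω)))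
    (hκ1 : ∀ ω, κ1 ω = D ω * (Z ω - g₀ ω) / (g₀ ω * (1 - g₀ ω)))
    (β₀ : ℝ)
    (hβ₀ : β₀ = ∫ ω, (if D0 ω < D1 ω then Y1 ω - Y0 ω else 0) ∂P) :
    β₀ = ∫ ω, (κ1 ω - κ0 ω) * Y ω ∂P := by
  have hm : sigmaX X ≤ ‹MeasurableSpace Ω› := hX.comap_le
  set G : Ω → ℝ := P[Z | sigmaX X] with hGdef
  have hGpos : ∀ᵐ ω ∂P, 0 < G ω ∧ G ω < 1 := by
    filter_upwards [hpos, hg₀] with ω h1 h2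
    rw [← h2]; exact h1
  have hGpos1 : ∀ᵐ ω ∂P, 0 < G ω := by filter_upwards [hGpos] with ω h; exact h.1
  have hGpos2 : ∀ᵐ ω ∂P, 0 < 1 - G ω := by
    filter_upwards [hGpos] with ω h; linarith [h.2]
  -- multiplication by a {0,1}-valued measurable function preserves integrability
  have hmul01 : ∀ U B : Ω → ℝ, Integrable U P → Measurable B →
      (∀ ω, B ω = 0 ∨ B ω = 1) → Integrable (fun ω => U ω * B ω) P := by
    intro U B hU hB h01
    refine hU.mono (hU.1.mul (hB.aestronglyMeasurable (μ := P)))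
      (Eventually.of_forall fun ω => ?_)
    rw [norm_mul]
    rcases h01 ω with h | h <;> rw [h] <;> simp
  -- the two "potential observed outcomes"
  set S1 : Ω → ℝ := fun ω => D1 ω * Y1 ω + (1 - D1 ω) * Y0 ω with hS1def
  set S0 : Ω → ℝ := fun ω => D0 ω * Y1 ω + (1 - D0 ω) * Y0 ω with hS0def
  have h1m : ∀ ω, (1:ℝ) - D1 ω = 0 ∨ (1:ℝ) - D1 ω = 1 := fun ω => by
    rcases hD1 ω with h | h <;> rw [h] <;> norm_num
  have h0m : ∀ ω, (1:ℝ) - D0 ω = 0 ∨ (1:ℝ) - D0 ω = 1 := fun ω => by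
    rcases hD0 ω with h | h <;> rw [h] <;> norm_num
  have hS1int : Integrable S1 P := by
    have h1 := hmul01 Y1 D1 hY1int hD1m hD1
    have h2 := hmul01 Y0 (fun ω => 1 - D1 ω) hY0int (measurable_const.sub hD1m) h1m
    exact (h1.add h2).congr (Eventually.of_forall fun ω => by simp [hS1def]; ring)
  have hS0int : Integrable S0 P := by
    have h1 := hmul01 Y1 D0 hY1int hD0m hD0
    have h2 := hmul01 Y0 (fun ω => 1 - D0 ω) hY0int (measurable_const.sub hD0m) h0m
    exact (h1.add h2).congr (Eventually.of_forall fun ω => by simp [hS0def]; ring)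
  -- positive and negative parts
  set W1 : Ω → ℝ := fun ω => max (S1 ω) 0 with hW1def
  set W2 : Ω → ℝ := fun ω => max (-S1 ω) 0 with hW2def
  set V1 : Ω → ℝ := fun ω => max (S0 ω) 0 with hV1def
  set V2 : Ω → ℝ := fun ω => max (-S0 ω) 0 with hV2def
  have hW1int : Integrable W1 P := hS1int.pos_part
  have hW2int : Integrable W2 P := hS1int.neg.pos_part
  have hV1int : Integrable V1 P := hS0int.pos_part
  have hV2int : Integrable V2 P := hS0int.neg.pos_part
  have hW1nn : ∀ ω, 0 ≤ W1 ω := fun ω => le_max_right _ _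
  have hW2nn : ∀ ω, 0 ≤ W2 ω := fun ω => le_max_right _ _
  have hV1nn : ∀ ω, 0 ≤ V1 ω := fun ω => le_max_right _ _
  have hV2nn : ∀ ω, 0 ≤ V2 ω := fun ω => le_max_right _ _
  -- conditional moment identities from hindep
  have hcW1 : P[fun ω => W1 ω * Z ω | sigmaX X] =ᵐ[P] fun ω => (P[W1|sigmaX X]) ω * G ω := by
    have h := hindep (fun p => max (p.2.2.2 * p.2.1 + (1 - p.2.2.2) * p.1) 0)
      (by fun_prop) hW1int
    refine h.trans ?_
    filter_upwards [hg₀] with ω hω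
    rw [hω]
  have hcW2 : P[fun ω => W2 ω * Z ω | sigmaX X] =ᵐ[P] fun ω => (P[W2|sigmaX X]) ω * G ω := by
    have h := hindep (fun p => max (-(p.2.2.2 * p.2.1 + (1 - p.2.2.2) * p.1)) 0)
      (by fun_prop) hW2int
    refine h.trans ?_
    filter_upwards [hg₀] with ω hω
    rw [hω]
  have hcV1 : P[fun ω => V1 ω * Z ω | sigmaX X] =ᵐ[P] fun ω => (P[V1|sigmaX X]) ω * G ω := by
    have h := hindep (fun p => max (p.2.2.1 * p.2.1 + (1 - p.2.2.1) * p.1) 0)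
      (by fun_prop) hV1int
    refine h.trans ?_
    filter_upwards [hg₀] with ω hω
    rw [hω]
  have hcV2 : P[fun ω => V2 ω * Z ω | sigmaX X] =ᵐ[P] fun ω => (P[V2|sigmaX X]) ω * G ω := by
    have h := hindep (fun p => max (-(p.2.2.1 * p.2.1 + (1 - p.2.2.1) * p.1)) 0)
      (by fun_prop) hV2int
    refine h.trans ?_
    filter_upwards [hg₀] with ω hω
    rw [hω]
  -- second arm: 1 - Z
  have hZ01' : ∀ ω, (1:ℝ) - Z ω = 0 ∨ (1:ℝ) - Z ω = 1 := fun ω => by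
    rcases hZ01 ω with h | h <;> rw [h] <;> norm_num
  have hZm' : Measurable (fun ω => (1:ℝ) - Z ω) := measurable_const.sub hZm
  have hG'sm : StronglyMeasurable[sigmaX X] (fun ω => 1 - G ω) :=
    stronglyMeasurable_const.sub stronglyMeasurable_condExp
  have hcond' : ∀ V : Ω → ℝ, Integrable V P →
      P[fun ω => V ω * Z ω | sigmaX X] =ᵐ[P] (fun ω => (P[V|sigmaX X]) ω * G ω) →
      P[fun ω => V ω * (1 - Z ω) | sigmaX X]
        =ᵐ[P] fun ω => (P[V|sigmaX X]) ω * (1 - G ω) := by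
    intro V hVint hA
    have hVZint : Integrable (fun ω => V ω * Z ω) P := hmul01 V Z hVint hZm hZ01
    have e : (fun ω => V ω * (1 - Z ω)) = fun ω => V ω - V ω * Z ω := by
      funext ω; ring
    rw [e]
    have hsub : P[(fun ω => V ω - V ω * Z ω) | sigmaX X]
        =ᵐ[P] P[V|sigmaX X] - P[(fun ω => V ω * Z ω)|sigmaX X] :=
      condExp_sub hVint hVZint _
    refine hsub.trans ?_
    filter_upwards [hA] with ω hω
    simp only [Pi.sub_apply, hω]
    ring
  have hcV1' := hcond' V1 hV1int hcV1
  have hcV2' := hcond' V2 hV2int hcV2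
  -- apply the key lemma four times
  have K1 := kappa_key P hm hW1int hW1nn hZ01 hZm stronglyMeasurable_condExp hGpos1 hcW1
  have K2 := kappa_key P hm hW2int hW2nn hZ01 hZm stronglyMeasurable_condExp hGpos1 hcW2
  have B1 := kappa_key P hm hV1int hV1nn hZ01' hZm' hG'sm hGpos2 hcV1'
  have B2 := kappa_key P hm hV2int hV2nn hZ01' hZm' hG'sm hGpos2 hcV2'
  -- pointwise a.e. identity
  have hae : (fun ω => (κ1 ω - κ0 ω) * Y ω) =ᵐ[P]
      fun ω => (W1 ω * Z ω / G ω - W2 ω * Z ω / G ω)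
        - (V1 ω * (1 - Z ω) / (1 - G ω) - V2 ω * (1 - Z ω) / (1 - G ω)) := by
    filter_upwards [hGpos, hg₀] with ω hGω hgeq
    have hne1 : G ω ≠ 0 := ne_of_gt hGω.1
    have hne2 : (1:ℝ) - G ω ≠ 0 := ne_of_gt (sub_pos.mpr hGω.2)
    have hr1 : W1 ω * Z ω / G ω - W2 ω * Z ω / G ω = S1 ω * Z ω / G ω := by
      rw [hW1def, hW2def, ← sub_div, ← sub_mul, max_zero_sub_max_neg_zero]
    have hr2 : V1 ω * (1 - Z ω) / (1 - G ω) - V2 ω * (1 - Z ω) / (1 - G ω)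
        = S0 ω * (1 - Z ω) / (1 - G ω) := by
      rw [hV1def, hV2def, ← sub_div, ← sub_mul, max_zero_sub_max_neg_zero]
    rw [hr1, hr2, hκ1 ω, hκ0 ω, hconsY ω, hconsD ω, hgeq, hS1def, hS0def]
    rcases hZ01 ω with hz | hz <;> rcases hD0 ω with h0 | h0 <;> rcases hD1 ω with h1 | h1 <;>
      simp only [hz, h0, h1] <;> field_simp <;> try ring
  -- final assembly
  have i1 : Integrable (fun ω => W1 ω * Z ω / G ω) P := K1.1
  have i2 : Integrable (fun ω => W2 ω * Z ω / G ω) P := K2.1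
  have i3 : Integrable (fun ω => V1 ω * (1 - Z ω) / (1 - G ω)) P := B1.1
  have i4 : Integrable (fun ω => V2 ω * (1 - Z ω) / (1 - G ω)) P := B2.1
  have i12 : Integrable (fun ω => W1 ω * Z ω / G ω - W2 ω * Z ω / G ω) P := i1.sub i2
  have i34 : Integrable
      (fun ω => V1 ω * (1 - Z ω) / (1 - G ω) - V2 ω * (1 - Z ω) / (1 - G ω)) P := i3.sub i4
  have e1 : ∫ ω, W1 ω * Z ω / G ω ∂P = ∫ ω, W1 ω ∂P := K1.2
  have e2 : ∫ ω, W2 ω * Z ω / G ω ∂P = ∫ ω, W2 ω ∂P := K2.2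
  have e3 : ∫ ω, V1 ω * (1 - Z ω) / (1 - G ω) ∂P = ∫ ω, V1 ω ∂P := B1.2
  have e4 : ∫ ω, V2 ω * (1 - Z ω) / (1 - G ω) ∂P = ∫ ω, V2 ω ∂P := B2.2
  have hstep : ∫ ω, (κ1 ω - κ0 ω) * Y ω ∂P
      = ((∫ ω, W1 ω ∂P) - ∫ ω, W2 ω ∂P) - ((∫ ω, V1 ω ∂P) - ∫ ω, V2 ω ∂P) := by
    rw [integral_congr_ae hae, integral_sub i12 i34, integral_sub i1 i2,
      integral_sub i3 i4, e1, e2, e3, e4]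
  have hif : (fun ω => (W1 ω - W2 ω) - (V1 ω - V2 ω)) =ᵐ[P]
      fun ω => if D0 ω < D1 ω then Y1 ω - Y0 ω else 0 := by
    filter_upwards [hmono] with ω hω
    rw [hW1def, hW2def, hV1def, hV2def]
    simp only
    rw [max_zero_sub_max_neg_zero, max_zero_sub_max_neg_zero, hS1def, hS0def]
    rcases hD0 ω with h0 | h0 <;> rcases hD1 ω with h1 | h1
    · simp [h0, h1]
    · norm_num [h0, h1]
    · rw [h0, h1] at hω; norm_num at hω
    · simp [h0, h1]
  have hsub1 : Integrable (fun ω => W1 ω - W2 ω) P := hW1int.sub hW2int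
  have hsub0 : Integrable (fun ω => V1 ω - V2 ω) P := hV1int.sub hV2int
  rw [hβ₀, hstep, ← integral_sub hW1int hW2int, ← integral_sub hV1int hV2int,
    ← integral_sub hsub1 hsub0]
  exact integral_congr_ae hif.symm
end

section
/- Let D, Z ∈ {0,1} and X be random variables with (D(0), D(1)) ⫫ Z | X, D = Z D(1) + (1-Z) D(0), 0 < g₀(X) = P(Z=1|X) < 1 a.s., and P(D(1) ≥ D(0) | X) = 1. Define Abadie's kappa κ = 1 - D(1-Z)/(1 - g₀(X)) - (1-D)Z/g₀(X). Then E[κ | X] = P(D(1) > D(0) | X) almost surely, and in particular E[κ] = P(D(1) > D(0)). -/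
open MeasureTheory Real

private lemma int_bdd {Ω : Type*} {m0 : MeasurableSpace Ω} {P : Measure Ω}
    [IsFiniteMeasure P] {f : Ω → ℝ} (hf : AEStronglyMeasurable f P) (C : ℝ)
    (hb : ∀ᵐ ω ∂P, |f ω| ≤ C) : Integrable f P :=
  Integrable.mono' (integrable_const C) hf
    (by filter_upwards [hb] with ω h; simpa [Real.norm_eq_abs] using h)

private lemma aux_div {Ω : Type*} {m m0 : MeasurableSpace Ω} (hm : m ≤ m0)
    (P : Measure Ω) [IsProbabilityMeasure P]
    (f h e : Ω → ℝ) (hf : Measurable f) (hf01 : ∀ ω, 0 ≤ f ω ∧ f ω ≤ 1)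
    (hh : StronglyMeasurable[m] h) (hhpos : ∀ᵐ ω ∂P, 0 < h ω)
    (hfe : P[f|m] =ᵐ[P] fun ω => e ω * h ω)
    (he0 : 0 ≤ᵐ[P] e) (he1 : e ≤ᵐ[P] fun _ => (1:ℝ)) :
    Integrable (fun ω => f ω / h ω) P ∧
      (P[fun ω => f ω / h ω|m] =ᵐ[P] e) := by
  haveI : SigmaFinite (P.trim hm) := inferInstance
  have hhm : Measurable h := (hh.measurable).mono hm le_rfl
  have hfint : Integrable f P :=
    int_bdd hf.aestronglyMeasurable 1 (Filter.Eventually.of_forall fun ω => by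
      rcases hf01 ω with ⟨h0, h1⟩; rw [abs_le]; constructor <;> linarith)
  -- truncations
  set c : ℕ → Ω → ℝ := fun n ω => min (h ω)⁻¹ n with hc
  have hcSM : ∀ n, StronglyMeasurable[m] (c n) := fun n =>
    (hh.measurable.inv.min measurable_const).stronglyMeasurable
  have hcint : ∀ n, Integrable (fun ω => c n ω * f ω) P := by
    intro n
    refine int_bdd ((((hcSM n).measurable.mono hm le_rfl).mul hf).aestronglyMeasurable) n ?_
    filter_upwards [hhpos] with ω hω
    rcases hf01 ω with ⟨h0, h1⟩
    have hcnn : 0 ≤ c n ω := le_min (inv_pos.2 hω).le (Nat.cast_nonneg n)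
    have hcle : c n ω ≤ n := min_le_right _ _
    rw [abs_le]
    constructor
    · nlinarith
    · nlinarith
  have hpull : ∀ n, P[fun ω => c n ω * f ω|m] =ᵐ[P] fun ω => c n ω * (P[f|m]) ω := by
    intro n
    have := condExp_mul_of_stronglyMeasurable_left (μ := P) (hcSM n) (hcint n) hfint
    exact this
  have hintle : ∀ n, ∫ ω, c n ω * f ω ∂P ≤ 1 := by
    intro n
    rw [← integral_condExp (f := fun ω => c n ω * f ω) hm]
    have heq : P[fun ω => c n ω * f ω|m] =ᵐ[P] fun ω => c n ω * (e ω * h ω) := by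
      filter_upwards [hpull n, hfe] with ω h1 h2
      rw [h1, h2]
    calc ∫ ω, (P[fun ω => c n ω * f ω|m]) ω ∂P
        = ∫ ω, c n ω * (e ω * h ω) ∂P := integral_congr_ae heq
      _ ≤ ∫ _ω, (1:ℝ) ∂P := by
          refine integral_mono_ae ((integrable_condExp).congr heq) (integrable_const 1) ?_
          filter_upwards [hhpos, he0, he1] with ω hω he0ω he1ω
          have hcnn : 0 ≤ c n ω := le_min (inv_pos.2 hω).le (Nat.cast_nonneg n)
          have hch : c n ω * h ω ≤ 1 := by
            calc c n ω * h ω ≤ (h ω)⁻¹ * h ω :=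
                  mul_le_mul_of_nonneg_right (min_le_left _ _) hω.le
              _ = 1 := inv_mul_cancel₀ hω.ne'
          have : c n ω * (e ω * h ω) ≤ c n ω * h ω := by
            have : e ω * h ω ≤ h ω := by nlinarith
            nlinarith
          linarith
      _ = 1 := by simp
  -- integrability via MCT
  have hFmeas : ∀ n, Measurable fun ω => ENNReal.ofReal (f ω * c n ω) := fun n =>
    (hf.mul (hhm.inv.min measurable_const)).ennreal_ofReal
  have hFmono : Monotone fun (n : ℕ) (ω : Ω) => ENNReal.ofReal (f ω * c n ω) := by
    intro n k hnk ω
    exact ENNReal.ofReal_le_ofReal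
      (mul_le_mul_of_nonneg_left (min_le_min le_rfl (Nat.cast_le.2 hnk)) (hf01 ω).1)
  have hsup : ∀ᵐ ω ∂P, (⨆ n, ENNReal.ofReal (f ω * c n ω)) = ENNReal.ofReal (f ω / h ω) := by
    filter_upwards [hhpos] with ω hω
    rw [div_eq_mul_inv]
    apply le_antisymm
    · exact iSup_le fun n => ENNReal.ofReal_le_ofReal
        (mul_le_mul_of_nonneg_left (min_le_left _ _) (hf01 ω).1)
    · have hN : c ⌈(h ω)⁻¹⌉₊ ω = (h ω)⁻¹ := min_eq_left (Nat.le_ceil _)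
      calc ENNReal.ofReal (f ω * (h ω)⁻¹) = ENNReal.ofReal (f ω * c ⌈(h ω)⁻¹⌉₊ ω) := by rw [hN]
        _ ≤ ⨆ n, ENNReal.ofReal (f ω * c n ω) := le_iSup (fun n => ENNReal.ofReal (f ω * c n ω)) ⌈(h ω)⁻¹⌉₊
  have hlint : ∫⁻ ω, ENNReal.ofReal (f ω / h ω) ∂P ≤ 1 := by
    calc ∫⁻ ω, ENNReal.ofReal (f ω / h ω) ∂P
        = ∫⁻ ω, (⨆ n, ENNReal.ofReal (f ω * c n ω)) ∂P := lintegral_congr_ae (hsup.mono fun ω hh' => hh'.symm)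
      _ = ⨆ n, ∫⁻ ω, ENNReal.ofReal (f ω * c n ω) ∂P := lintegral_iSup hFmeas hFmono
      _ ≤ 1 := by
          refine iSup_le fun n => ?_
          have hnn : 0 ≤ᵐ[P] fun ω => f ω * c n ω := by
            filter_upwards [hhpos] with ω hω
            exact mul_nonneg (hf01 ω).1 (le_min (inv_pos.2 hω).le (Nat.cast_nonneg n))
          have hint' : Integrable (fun ω => f ω * c n ω) P :=
            (hcint n).congr (Filter.Eventually.of_forall fun ω => mul_comm _ _)
          rw [← ofReal_integral_eq_lintegral_ofReal hint' hnn]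
          have : ∫ ω, f ω * c n ω ∂P ≤ 1 := by
            calc ∫ ω, f ω * c n ω ∂P = ∫ ω, c n ω * f ω ∂P :=
                integral_congr_ae (Filter.Eventually.of_forall fun ω => mul_comm _ _)
              _ ≤ 1 := hintle n
          exact ENNReal.ofReal_le_one.2 this
  have hdiv_nn : 0 ≤ᵐ[P] fun ω => f ω / h ω := by
    filter_upwards [hhpos] with ω hω
    exact div_nonneg (hf01 ω).1 hω.le
  have hInt : Integrable (fun ω => f ω / h ω) P := by
    refine ⟨(hf.div hhm).aestronglyMeasurable, ?_⟩
    rw [hasFiniteIntegral_iff_ofReal hdiv_nn]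
    exact lt_of_le_of_lt hlint ENNReal.one_lt_top
  refine ⟨hInt, ?_⟩
  have hinvSM : StronglyMeasurable[m] (fun ω => (h ω)⁻¹) :=
    hh.measurable.inv.stronglyMeasurable
  have hInt' : Integrable (fun ω => (h ω)⁻¹ * f ω) P :=
    hInt.congr (Filter.Eventually.of_forall fun ω => (div_eq_inv_mul (f ω) (h ω)))
  have hpull2 := condExp_mul_of_stronglyMeasurable_left (μ := P) hinvSM hInt' hfint
  have heqfun : (fun ω => f ω / h ω) = fun ω => (h ω)⁻¹ * f ω :=
    funext fun ω => div_eq_inv_mul _ _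
  rw [heqfun]
  refine hpull2.trans ?_
  filter_upwards [hfe, hhpos] with ω h1 h2
  simp only [Pi.mul_apply]
  rw [h1]
  field_simp

/-- Abadie's kappa weight identifies the conditional complier probability:
E[κ | X] = P(D(1)>D(0) | X) a.s., and hence E[κ] = P(D(1)>D(0)). -/
theorem stmt15 {Ω 𝓧 : Type*} [MeasurableSpace Ω] [MeasurableSpace 𝓧]
    (P : Measure Ω) [IsProbabilityMeasure P]
    (X : Ω → 𝓧) (hX : Measurable X)
    (Z D D0 D1 : Ω → ℝ)
    (hZm : Measurable Z) (hD0m : Measurable D0) (hD1m : Measurable D1)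
    (hZ01 : ∀ ω, Z ω = 0 ∨ Z ω = 1)
    (hD0 : ∀ ω, D0 ω = 0 ∨ D0 ω = 1) (hD1 : ∀ ω, D1 ω = 0 ∨ D1 ω = 1)
    (hcons : ∀ ω, D ω = Z ω * D1 ω + (1 - Z ω) * D0 ω)
    (hmono : ∀ᵐ ω ∂P, D0 ω ≤ D1 ω)
    (g₀ : Ω → ℝ) (hg₀ : g₀ =ᵐ[P] P[Z | sigmaX X])
    (hpos : ∀ᵐ ω ∂P, 0 < g₀ ω ∧ g₀ ω < 1)
    -- conditional independence of (D0, D1) and Z given X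
    (hindep : ∀ φ : ℝ × ℝ → ℝ, Measurable φ → (∃ K, ∀ v, |φ v| ≤ K) →
      P[fun ω => φ (D0 ω, D1 ω) * Z ω | sigmaX X]
        =ᵐ[P] fun ω => (P[fun ω' => φ (D0 ω', D1 ω') | sigmaX X]) ω * g₀ ω)
    (κ : Ω → ℝ)
    (hκ : ∀ ω, κ ω = 1 - D ω * (1 - Z ω) / (1 - g₀ ω) - (1 - D ω) * Z ω / g₀ ω) :
    (P[κ | sigmaX X] =ᵐ[P] P[fun ω => if D0 ω < D1 ω then (1 : ℝ) else 0 | sigmaX X]) ∧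
    (∫ ω, κ ω ∂P = (P {ω | D0 ω < D1 ω}).toReal) := by
  have hm : sigmaX X ≤ ‹MeasurableSpace Ω› := hX.comap_le
  haveI : SigmaFinite (P.trim hm) := inferInstance
  set g : Ω → ℝ := P[Z|sigmaX X] with hgdef
  have hgm : g₀ =ᵐ[P] g := hg₀
  have hgpos : ∀ᵐ ω ∂P, 0 < g ω ∧ g ω < 1 := by
    filter_upwards [hpos, hgm] with ω h1 h2
    rw [← h2]; exact h1
  -- conditional expectations
  set E0 : Ω → ℝ := P[D0|sigmaX X] with hE0def
  set E1 : Ω → ℝ := P[D1|sigmaX X] with hE1def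
  have hintbdd01 : ∀ (f : Ω → ℝ), Measurable f → (∀ ω, f ω = 0 ∨ f ω = 1) →
      Integrable f P := by
    intro f hfm hf01
    refine int_bdd hfm.aestronglyMeasurable 1 (Filter.Eventually.of_forall fun ω => ?_)
    rcases hf01 ω with h | h <;> simp [h]
  have hD0int : Integrable D0 P := hintbdd01 D0 hD0m hD0
  have hD1int : Integrable D1 P := hintbdd01 D1 hD1m hD1
  have h01 : ∀ (f : Ω → ℝ), (∀ ω, f ω = 0 ∨ f ω = 1) → Integrable f P →
      0 ≤ᵐ[P] P[f|sigmaX X] ∧ P[f|sigmaX X] ≤ᵐ[P] fun _ => (1:ℝ) := by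
    intro f hf01 hfint
    constructor
    · exact condExp_nonneg (Filter.Eventually.of_forall fun ω => by
        rcases hf01 ω with h | h <;> simp [h])
    · have := condExp_mono (m := sigmaX X) hfint (integrable_const (1:ℝ))
        (Filter.Eventually.of_forall fun ω => by rcases hf01 ω with h | h <;> simp [h])
      refine this.trans ?_
      rw [condExp_const hm]
  -- clamp functions for hindep
  have hφD0 := hindep (fun v => max 0 (min v.1 1))
    (measurable_const.max (measurable_fst.min measurable_const))
    ⟨1, fun v => by
      rw [abs_le]
      constructor
      · have := le_max_left (0:ℝ) (min v.1 1); linarith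
      · exact max_le (by norm_num) (min_le_right _ _)⟩
  have hφD1 := hindep (fun v => max 0 (min (1 - v.2) 1))
    (measurable_const.max ((measurable_const.sub measurable_snd).min measurable_const))
    ⟨1, fun v => by
      rw [abs_le]
      constructor
      · have := le_max_left (0:ℝ) (min (1 - v.2) 1); linarith
      · exact max_le (by norm_num) (min_le_right _ _)⟩
  have hclamp0 : ∀ ω, max 0 (min (D0 ω) 1) = D0 ω := by
    intro ω; rcases hD0 ω with h | h <;> simp [h]
  have hclamp1 : ∀ ω, max 0 (min (1 - D1 ω) 1) = 1 - D1 ω := by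
    intro ω; rcases hD1 ω with h | h <;> simp [h]
  rw [show (fun ω => max 0 (min (D0 ω, D1 ω).1 1) * Z ω) = fun ω => D0 ω * Z ω from
      funext fun ω => by rw [hclamp0 ω],
    show (fun ω' => max 0 (min (D0 ω', D1 ω').1 1)) = D0 from
      funext fun ω => hclamp0 ω] at hφD0
  rw [show (fun ω => max 0 (min (1 - (D0 ω, D1 ω).2) 1) * Z ω) =
        fun ω => (1 - D1 ω) * Z ω from funext fun ω => by rw [hclamp1 ω],
    show (fun ω' => max 0 (min (1 - (D0 ω', D1 ω').2) 1)) = fun ω => 1 - D1 ω from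
      funext fun ω => hclamp1 ω] at hφD1
  -- A and B
  set A : Ω → ℝ := fun ω => D0 ω * (1 - Z ω) with hAdef
  set B : Ω → ℝ := fun ω => (1 - D1 ω) * Z ω with hBdef
  have hAm : Measurable A := hD0m.mul (measurable_const.sub hZm)
  have hBm : Measurable B := (measurable_const.sub hD1m).mul hZm
  have hA01 : ∀ ω, 0 ≤ A ω ∧ A ω ≤ 1 := by
    intro ω; rcases hD0 ω with h | h <;> rcases hZ01 ω with h' | h' <;>
      simp [hAdef, h, h']
  have hB01 : ∀ ω, 0 ≤ B ω ∧ B ω ≤ 1 := by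
    intro ω; rcases hD1 ω with h | h <;> rcases hZ01 ω with h' | h' <;>
      simp [hBdef, h, h']
  have hD0Zint : Integrable (fun ω => D0 ω * Z ω) P :=
    hintbdd01 _ (hD0m.mul hZm) (fun ω => by
      rcases hD0 ω with h | h <;> rcases hZ01 ω with h' | h' <;> simp [h, h'])
  have hAint : Integrable A P := hintbdd01 A hAm (fun ω => by
    rcases hD0 ω with h | h <;> rcases hZ01 ω with h' | h' <;> simp [hAdef, h, h'])
  -- conditional expectation of A
  have hAcond : P[A|sigmaX X] =ᵐ[P] fun ω => E0 ω * (1 - g ω) := by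
    have hAeq : A = fun ω => D0 ω - D0 ω * Z ω := funext fun ω => by
      simp [hAdef]; ring
    rw [hAeq]
    have hsub := condExp_sub (m := sigmaX X) hD0int hD0Zint
    refine hsub.trans ?_
    filter_upwards [hφD0, hgm] with ω h1 h2
    simp only [Pi.sub_apply]
    rw [h1, ← h2]
    have : g₀ ω = g ω := h2
    rw [this]; ring
  have hBcond : P[B|sigmaX X] =ᵐ[P] fun ω => (P[fun ω => 1 - D1 ω|sigmaX X]) ω * g ω := by
    refine hφD1.trans ?_
    filter_upwards [hgm] with ω h2
    rw [h2]
  set F : Ω → ℝ := P[fun ω => 1 - D1 ω|sigmaX X] with hFdef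
  have h1mD1int : Integrable (fun ω => 1 - D1 ω) P :=
    hintbdd01 _ (measurable_const.sub hD1m) (fun ω => by rcases hD1 ω with h | h <;> simp [h])
  -- apply aux_div
  have hE0b := h01 D0 hD0 hD0int
  have hFb := h01 (fun ω => 1 - D1 ω) (fun ω => by rcases hD1 ω with h | h <;> simp [h])
    h1mD1int
  obtain ⟨hIntA, hcondA⟩ := aux_div hm P A (fun ω => 1 - g ω) E0 hAm hA01
    (stronglyMeasurable_const.sub stronglyMeasurable_condExp)
    (by filter_upwards [hgpos] with ω h; linarith [h.2]) hAcond hE0b.1 hE0b.2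
  obtain ⟨hIntB, hcondB⟩ := aux_div hm P B g F hBm hB01
    stronglyMeasurable_condExp
    (by filter_upwards [hgpos] with ω h; exact h.1) hBcond hFb.1 hFb.2
  -- κ rewrite
  have hκ' : ∀ ω, κ ω = 1 - A ω / (1 - g₀ ω) - B ω / g₀ ω := by
    intro ω
    rw [hκ, hcons]
    rcases hZ01 ω with h | h <;> simp [hAdef, hBdef, h]
  have hκae : κ =ᵐ[P] fun ω => 1 - A ω / (1 - g ω) - B ω / g ω := by
    filter_upwards [hgm] with ω h
    rw [hκ' ω, h]
  -- conditional expectation of κ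
  have hκcond : P[κ|sigmaX X] =ᵐ[P] fun ω => 1 - E0 ω - F ω := by
    refine (condExp_congr_ae hκae).trans ?_
    have heq : (fun ω => 1 - A ω / (1 - g ω) - B ω / g ω) =
        (fun ω => 1 - A ω / (1 - g ω)) - fun ω => B ω / g ω := rfl
    rw [heq]
    have hint1 : Integrable (fun ω => 1 - A ω / (1 - g ω)) P :=
      (integrable_const (1:ℝ)).sub hIntA
    refine (condExp_sub (m := sigmaX X) hint1 hIntB).trans ?_
    have heq2 : (fun ω => 1 - A ω / (1 - g ω)) =
        (fun _ => (1:ℝ)) - fun ω => A ω / (1 - g ω) := rfl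
    have hsub1 : P[fun ω => 1 - A ω / (1 - g ω)|sigmaX X] =ᵐ[P] fun ω => 1 - E0 ω := by
      rw [heq2]
      refine (condExp_sub (m := sigmaX X) (integrable_const 1) hIntA).trans ?_
      filter_upwards [hcondA] with ω h
      simp only [Pi.sub_apply]
      rw [condExp_const hm, h]
    filter_upwards [hsub1, hcondB] with ω h1 h2
    simp only [Pi.sub_apply]
    rw [h1, h2]
  -- indicator
  set ind : Ω → ℝ := fun ω => if D0 ω < D1 ω then (1:ℝ) else 0 with hinddef
  have hindae : ind =ᵐ[P] fun ω => D1 ω - D0 ω := by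
    filter_upwards [hmono] with ω hle
    rcases hD0 ω with h0 | h0 <;> rcases hD1 ω with h1 | h1 <;>
      simp [hinddef, h0, h1] <;> linarith [hle, h0, h1]
  have hindcond : P[ind|sigmaX X] =ᵐ[P] fun ω => E1 ω - E0 ω := by
    refine (condExp_congr_ae hindae).trans ?_
    have : (fun ω => D1 ω - D0 ω) = D1 - D0 := rfl
    rw [this]
    exact condExp_sub (m := sigmaX X) hD1int hD0int
  have hFeq : F =ᵐ[P] fun ω => 1 - E1 ω := by
    have : (fun ω => 1 - D1 ω) = (fun _ => (1:ℝ)) - D1 := rfl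
    rw [hFdef, this]
    refine (condExp_sub (m := sigmaX X) (integrable_const 1) hD1int).trans ?_
    refine Filter.Eventually.of_forall fun ω => ?_
    simp only [Pi.sub_apply]
    rw [condExp_const hm]
  have hmain : P[κ|sigmaX X] =ᵐ[P] P[ind|sigmaX X] := by
    refine hκcond.trans ?_
    refine ((Filter.EventuallyEq.refl _ _).trans ?_).trans hindcond.symm
    filter_upwards [hFeq] with ω h
    rw [h]; ring
  refine ⟨hmain, ?_⟩
  -- part 2
  have hκint : Integrable κ P :=
    (((integrable_const (1:ℝ)).sub hIntA).sub hIntB).congr hκae.symm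
  have hindint : Integrable ind P := hintbdd01 ind
    ((hD1m.sub hD0m).comp measurable_id |> fun _ => by
      exact Measurable.ite (measurableSet_lt hD0m hD1m) measurable_const measurable_const)
    (fun ω => by by_cases h : D0 ω < D1 ω <;> simp [hinddef, h])
  calc ∫ ω, κ ω ∂P = ∫ ω, (P[κ|sigmaX X]) ω ∂P := (integral_condExp (f := κ) hm).symm
    _ = ∫ ω, (P[ind|sigmaX X]) ω ∂P := integral_congr_ae hmain
    _ = ∫ ω, ind ω ∂P := integral_condExp (f := ind) hm
    _ = (P {ω | D0 ω < D1 ω}).toReal := by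
        have : ind = Set.indicator {ω | D0 ω < D1 ω} (fun _ => (1:ℝ)) := by
          funext ω
          simp [hinddef, Set.indicator_apply, Set.mem_setOf_eq]
        rw [this]
        exact integral_indicator_one (measurableSet_lt hD0m hD1m)
end

section
/- Under the assumptions of the kappa-weighting identity and assuming E[Y(1)²] < ∞, for every bounded measurable function μ of X, E[κ⁽¹⁾·(Y - μ(X))²] = E[(Y(1) - μ(X))²·1{D(1) > D(0)}]; consequently, if P(D(1) > D(0)) > 0, the minimizer of μ ↦ E[κ⁽¹⁾(Y - μ(X))²] over bounded measurable μ is given (a.s. on {P(D(1)>D(0)|X)>0}) by μ₀⁽¹⁾(x) = E[Y(1) | X = x, D(1) > D(0)]. -/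
open MeasureTheory Real
section Helpers

variable {Ω : Type*} {m : MeasurableSpace Ω} [m0 : MeasurableSpace Ω]

/-- bounded times integrable (bounded factor on the right). -/
lemma int_mul_bdd {P : Measure Ω} {f b : Ω → ℝ} {c : ℝ}
    (hf : Integrable f P) (hb : AEStronglyMeasurable b P)
    (hbc : ∀ᵐ ω ∂P, ‖b ω‖ ≤ c) :
    Integrable (fun ω => f ω * b ω) P :=
  (hf.bdd_mul hb hbc).congr (Filter.Eventually.of_forall fun ω => mul_comm _ _)

/-- pull-out for integrals: ∫ W ψ = ∫ W E[ψ|m]. -/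
lemma pullout_int (hm : m ≤ m0) (P : Measure Ω) [IsProbabilityMeasure P]
    {W ψ : Ω → ℝ} (hW : StronglyMeasurable[m] W) {c : ℝ}
    (hWb : ∀ᵐ ω ∂P, ‖W ω‖ ≤ c) (hψ : Integrable ψ P) :
    ∫ ω, W ω * ψ ω ∂P = ∫ ω, W ω * (P[ψ|m]) ω ∂P := by
  have hWaesm : AEStronglyMeasurable W P := (hW.mono hm).aestronglyMeasurable
  have hWψ : Integrable (W * ψ) P := hψ.bdd_mul hWaesm hWb
  have h1 : P[W * ψ|m] =ᵐ[P] W * P[ψ|m] :=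
    condExp_stronglyMeasurable_mul_of_bound hm hW hψ c hWb
  calc ∫ ω, W ω * ψ ω ∂P = ∫ ω, (P[W * ψ|m]) ω ∂P := (integral_condExp hm).symm
    _ = ∫ ω, W ω * (P[ψ|m]) ω ∂P := integral_congr_ae h1

end Helpers

section PullZ
variable {Ω : Type*} {m : MeasurableSpace Ω} [m0 : MeasurableSpace Ω]

/-- swap Z for g₀ inside an integral against a bounded m-measurable weight. -/
lemma pull_Z (hm : m ≤ m0) (P : Measure Ω) [IsProbabilityMeasure P]
    {Z g₀ ψ W : Ω → ℝ} {c : ℝ}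
    (hZb : ∀ᵐ ω ∂P, ‖Z ω‖ ≤ 1) (hZm : AEStronglyMeasurable Z P)
    (hg₀ : g₀ =ᵐ[P] P[Z|m]) (hg01 : ∀ᵐ ω ∂P, 0 ≤ g₀ ω ∧ g₀ ω ≤ 1)
    (hψ : Integrable ψ P)
    (hcond : P[fun ω => ψ ω * Z ω|m] =ᵐ[P] fun ω => (P[ψ|m]) ω * g₀ ω)
    (hW : StronglyMeasurable[m] W) (hWb : ∀ᵐ ω ∂P, ‖W ω‖ ≤ c) :
    ∫ ω, W ω * (ψ ω * Z ω) ∂P = ∫ ω, W ω * (g₀ ω * ψ ω) ∂P := by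
  have hψZ : Integrable (fun ω => ψ ω * Z ω) P := int_mul_bdd hψ hZm hZb
  have hg : StronglyMeasurable[m] (P[Z|m]) := stronglyMeasurable_condExp
  have hWg : StronglyMeasurable[m] (fun ω => W ω * (P[Z|m]) ω) :=
    hW.mul stronglyMeasurable_condExp
  have hWgb : ∀ᵐ ω ∂P, ‖W ω * (P[Z|m]) ω‖ ≤ |c| := by
    filter_upwards [hWb, hg₀, hg01] with ω h1 h2 h3
    rw [norm_mul]
    have hcnn : (0:ℝ) ≤ c := le_trans (norm_nonneg _) h1
    have : ‖(P[Z|m]) ω‖ ≤ 1 := by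
      rw [← h2, Real.norm_eq_abs, abs_of_nonneg h3.1]; exact h3.2
    calc ‖W ω‖ * ‖(P[Z|m]) ω‖ ≤ c * 1 := mul_le_mul h1 this (norm_nonneg _) hcnn
      _ ≤ |c| := by rw [mul_one]; exact le_abs_self c
  calc ∫ ω, W ω * (ψ ω * Z ω) ∂P
      = ∫ ω, W ω * (P[fun ω' => ψ ω' * Z ω'|m]) ω ∂P := pullout_int hm P hW hWb hψZ
    _ = ∫ ω, W ω * ((P[ψ|m]) ω * g₀ ω) ∂P := by
        refine integral_congr_ae ?_
        filter_upwards [hcond] with ω h; rw [h]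
    _ = ∫ ω, (W ω * (P[Z|m]) ω) * (P[ψ|m]) ω ∂P := by
        refine integral_congr_ae ?_
        filter_upwards [hg₀] with ω h; rw [h]; ring
    _ = ∫ ω, (W ω * (P[Z|m]) ω) * ψ ω ∂P := (pullout_int hm P hWg hWgb hψ).symm
    _ = ∫ ω, W ω * (g₀ ω * ψ ω) ∂P := by
        refine integral_congr_ae ?_
        filter_upwards [hg₀] with ω h; rw [h]; ring

end PullZ

section KeyInt
variable {Ω : Type*} {m : MeasurableSpace Ω} [m0 : MeasurableSpace Ω]

lemma key_int (hm : m ≤ m0) (P : Measure Ω) [IsProbabilityMeasure P]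
    {Z g₀ T : Ω → ℝ}
    (hZ01 : ∀ ω, Z ω = 0 ∨ Z ω = 1) (hZm : Measurable Z)
    (hT : Integrable T P) (hTnn : ∀ ω, 0 ≤ T ω)
    (hg₀ : g₀ =ᵐ[P] P[Z|m]) (hpos : ∀ᵐ ω ∂P, 0 < g₀ ω ∧ g₀ ω < 1)
    (hcond : P[fun ω => T ω * Z ω|m] =ᵐ[P] fun ω => (P[T|m]) ω * g₀ ω) :
    Integrable (fun ω => Z ω * T ω / g₀ ω) P ∧
      ∫ ω, Z ω * T ω / g₀ ω ∂P = ∫ ω, T ω ∂P := by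
  have hZnn : ∀ ω, 0 ≤ Z ω := by
    intro ω; rcases hZ01 ω with h | h <;> rw [h] <;> norm_num
  have hZle : ∀ ω, Z ω ≤ 1 := by
    intro ω; rcases hZ01 ω with h | h <;> rw [h] <;> norm_num
  have hZb : ∀ᵐ ω ∂P, ‖Z ω‖ ≤ 1 := by
    refine Filter.Eventually.of_forall fun ω => ?_
    rw [Real.norm_eq_abs, abs_of_nonneg (hZnn ω)]; exact hZle ω
  have hg01 : ∀ᵐ ω ∂P, 0 ≤ g₀ ω ∧ g₀ ω ≤ 1 := by
    filter_upwards [hpos] with ω h; exact ⟨h.1.le, h.2.le⟩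
  set g : Ω → ℝ := P[Z|m] with hgdef
  have hgsm : StronglyMeasurable[m] g := stronglyMeasurable_condExp
  have hg_aesm : AEStronglyMeasurable g₀ P :=
    ((hgsm.mono hm).aestronglyMeasurable).congr hg₀.symm
  set Wn : ℕ → Ω → ℝ := fun n ω => min (n : ℝ) (g ω)⁻¹ with hWndef
  have hWnsm : ∀ n, StronglyMeasurable[m] (Wn n) := fun n =>
    (measurable_const.min hgsm.measurable.inv).stronglyMeasurable
  have hWnb : ∀ n, ∀ᵐ ω ∂P, ‖Wn n ω‖ ≤ (n : ℝ) := by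
    intro n
    filter_upwards [hg₀, hpos] with ω h2 h3
    have hginv : 0 ≤ (g ω)⁻¹ := by rw [← h2]; exact inv_nonneg.2 h3.1.le
    have h0 : 0 ≤ Wn n ω := le_min (Nat.cast_nonneg n) hginv
    rw [Real.norm_eq_abs, abs_of_nonneg h0]; exact min_le_left _ _
  have hTZ : Integrable (fun ω => T ω * Z ω) P :=
    int_mul_bdd hT hZm.aestronglyMeasurable hZb
  set An : ℕ → Ω → ℝ := fun n ω => Wn n ω * (T ω * Z ω) with hAndef
  have hAn : ∀ n, Integrable (An n) P := fun n =>
    hTZ.bdd_mul ((hWnsm n).mono hm).aestronglyMeasurable (hWnb n)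
  have hAnn : ∀ n, 0 ≤ᵐ[P] An n := by
    intro n
    filter_upwards [hg₀, hpos] with ω h2 h3
    have hginv : 0 ≤ (g ω)⁻¹ := by rw [← h2]; exact inv_nonneg.2 h3.1.le
    exact mul_nonneg (le_min (Nat.cast_nonneg n) hginv)
      (mul_nonneg (hTnn ω) (hZnn ω))
  have En : ∀ n, ∫ ω, An n ω ∂P = ∫ ω, Wn n ω * (g₀ ω * T ω) ∂P := by
    intro n
    have := pull_Z hm P hZb hZm.aestronglyMeasurable hg₀ hg01 hT hcond
      (hWnsm n) (hWnb n)
    simpa [hAndef] using this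
  set A : Ω → ℝ := fun ω => Z ω * T ω / g₀ ω with hAdef
  have htend : ∀ᵐ ω ∂P, Filter.Tendsto (fun n => An n ω) Filter.atTop (nhds (A ω)) := by
    filter_upwards [hg₀, hpos] with ω h2 h3
    refine tendsto_atTop_of_eventually_const (i₀ := ⌈(g₀ ω)⁻¹⌉₊) fun n hn => ?_
    have hle : (g ω)⁻¹ ≤ (n : ℝ) := by
      rw [← h2]; exact (Nat.le_ceil _).trans (Nat.cast_le.2 hn)
    have : Wn n ω = (g ω)⁻¹ := min_eq_right hle
    simp only [hAndef, this, ← h2, hAdef]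
    rw [div_eq_mul_inv]; ring
  have hmonoA : ∀ᵐ ω ∂P, Monotone fun n => An n ω := by
    refine Filter.Eventually.of_forall fun ω a b hab => ?_
    exact mul_le_mul_of_nonneg_right (min_le_min (Nat.cast_le.2 hab) le_rfl)
      (mul_nonneg (hTnn ω) (hZnn ω))
  -- dominated convergence for the right-hand sides
  have hRtend : Filter.Tendsto (fun n => ∫ ω, Wn n ω * (g₀ ω * T ω) ∂P)
      Filter.atTop (nhds (∫ ω, T ω ∂P)) := by
    refine tendsto_integral_of_dominated_convergence (fun ω => T ω)
      (fun n => ?_) hT (fun n => ?_) ?_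
    · exact (((hWnsm n).mono hm).aestronglyMeasurable).mul (hg_aesm.mul hT.1)
    · filter_upwards [hg₀, hpos] with ω h2 h3
      have hgpos : 0 < g ω := by rw [← h2]; exact h3.1
      have h0 : 0 ≤ Wn n ω := le_min (Nat.cast_nonneg n) (inv_nonneg.2 hgpos.le)
      have h1 : Wn n ω * g₀ ω ≤ 1 := by
        rw [h2]
        calc Wn n ω * g ω ≤ (g ω)⁻¹ * g ω :=
              mul_le_mul_of_nonneg_right (min_le_right _ _) hgpos.le
          _ = 1 := inv_mul_cancel₀ hgpos.ne'
      have h4 : 0 ≤ Wn n ω * g₀ ω := mul_nonneg h0 (by rw [h2]; exact hgpos.le)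
      rw [Real.norm_eq_abs, show Wn n ω * (g₀ ω * T ω) = (Wn n ω * g₀ ω) * T ω by ring,
        abs_of_nonneg (mul_nonneg h4 (hTnn ω))]
      calc (Wn n ω * g₀ ω) * T ω ≤ 1 * T ω :=
            mul_le_mul_of_nonneg_right h1 (hTnn ω)
        _ = T ω := one_mul _
    · filter_upwards [hg₀, hpos] with ω h2 h3
      refine tendsto_atTop_of_eventually_const (i₀ := ⌈(g₀ ω)⁻¹⌉₊) fun n hn => ?_
      have hle : (g ω)⁻¹ ≤ (n : ℝ) := by
        rw [← h2]; exact (Nat.le_ceil _).trans (Nat.cast_le.2 hn)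
      have hgpos : 0 < g ω := by rw [← h2]; exact h3.1
      rw [show Wn n ω = (g ω)⁻¹ from min_eq_right hle, h2,
        show (g ω)⁻¹ * (g ω * T ω) = ((g ω)⁻¹ * g ω) * T ω by ring,
        inv_mul_cancel₀ hgpos.ne', one_mul]
  have hLtend : Filter.Tendsto (fun n => ∫ ω, An n ω ∂P)
      Filter.atTop (nhds (∫ ω, T ω ∂P)) := by
    simpa only [En] using hRtend
  -- pass to lintegrals
  set F : Ω → ENNReal := fun ω => ENNReal.ofReal (A ω) with hFdef
  set Fn : ℕ → Ω → ENNReal := fun n ω => ENNReal.ofReal (An n ω) with hFndef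
  have hFn_meas : ∀ n, AEMeasurable (Fn n) P := fun n =>
    ENNReal.measurable_ofReal.comp_aemeasurable (hAn n).1.aemeasurable
  have hFmono : ∀ᵐ ω ∂P, Monotone fun n => Fn n ω := by
    filter_upwards [hmonoA] with ω h a b hab
    exact ENNReal.ofReal_le_ofReal (h hab)
  have hFsup : ∀ᵐ ω ∂P, F ω = ⨆ n, Fn n ω := by
    filter_upwards [htend, hmonoA] with ω h1 h2
    refine (tendsto_nhds_unique ?_ (ENNReal.tendsto_ofReal h1)).symm
    exact tendsto_atTop_iSup fun a b hab => ENNReal.ofReal_le_ofReal (h2 hab)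
  have hlint : ∫⁻ ω, F ω ∂P = ENNReal.ofReal (∫ ω, T ω ∂P) := by
    have h1 : ∫⁻ ω, F ω ∂P = ∫⁻ ω, ⨆ n, Fn n ω ∂P := lintegral_congr_ae hFsup
    have h2 : ∫⁻ ω, ⨆ n, Fn n ω ∂P = ⨆ n, ∫⁻ ω, Fn n ω ∂P :=
      lintegral_iSup' hFn_meas hFmono
    have h3 : ∀ n, ∫⁻ ω, Fn n ω ∂P = ENNReal.ofReal (∫ ω, An n ω ∂P) := fun n =>
      (ofReal_integral_eq_lintegral_ofReal (hAn n) (hAnn n)).symm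
    have hmonoI : Monotone fun n => ENNReal.ofReal (∫ ω, An n ω ∂P) := by
      intro a b hab
      refine ENNReal.ofReal_le_ofReal ?_
      refine integral_mono_ae (hAn a) (hAn b) ?_
      filter_upwards [hmonoA] with ω h; exact h hab
    have h4 : (⨆ n, ENNReal.ofReal (∫ ω, An n ω ∂P)) = ENNReal.ofReal (∫ ω, T ω ∂P) :=
      tendsto_nhds_unique (tendsto_atTop_iSup hmonoI) (ENNReal.tendsto_ofReal hLtend)
    rw [h1, h2]; simp only [h3]; exact h4
  have hAnn' : 0 ≤ᵐ[P] A := by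
    filter_upwards [hpos] with ω h
    exact div_nonneg (mul_nonneg (hZnn ω) (hTnn ω)) h.1.le
  have hAaesm : AEStronglyMeasurable A P := by
    have : AEMeasurable A P :=
      (hZm.aemeasurable.mul hT.1.aemeasurable).div hg_aesm.aemeasurable
    exact this.aestronglyMeasurable
  have hAint : Integrable A P := by
    refine ⟨hAaesm, ?_⟩
    rw [hasFiniteIntegral_iff_ofReal hAnn']
    rw [show ∫⁻ ω, ENNReal.ofReal (A ω) ∂P = ENNReal.ofReal (∫ ω, T ω ∂P) from hlint]
    exact ENNReal.ofReal_lt_top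
  refine ⟨hAint, ?_⟩
  rw [integral_eq_lintegral_of_nonneg_ae hAnn' hAaesm]
  rw [show ∫⁻ ω, ENNReal.ofReal (A ω) ∂P = ENNReal.ofReal (∫ ω, T ω ∂P) from hlint]
  exact ENNReal.toReal_ofReal (integral_nonneg fun ω => hTnn ω)

end KeyInt

section CondS
variable {Ω : Type*} {m : MeasurableSpace Ω} [m0 : MeasurableSpace Ω]

lemma condS (hm : m ≤ m0) (P : Measure Ω) [IsProbabilityMeasure P]
    {Z g₀ d Y1 a : Ω → ℝ} {K : ℝ}
    (hZm : Measurable Z) (hZ1 : ∀ ω, ‖Z ω‖ ≤ 1)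
    (hdm : Measurable d) (hd1 : ∀ ω, ‖d ω‖ ≤ 1)
    (hY1sq : Integrable (fun ω => Y1 ω ^ 2) P)
    (hY1int : Integrable Y1 P)
    (ham : StronglyMeasurable[m] a) (haK : ∀ ω, |a ω| ≤ K)
    (hc1 : P[fun ω => (d ω * Y1 ω ^ 2) * Z ω|m] =ᵐ[P]
      fun ω => (P[fun ω' => d ω' * Y1 ω' ^ 2|m]) ω * g₀ ω)
    (hc2 : P[fun ω => (d ω * Y1 ω) * Z ω|m] =ᵐ[P]
      fun ω => (P[fun ω' => d ω' * Y1 ω'|m]) ω * g₀ ω)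
    (hc3 : P[fun ω => d ω * Z ω|m] =ᵐ[P] fun ω => (P[d|m]) ω * g₀ ω) :
    P[fun ω => (d ω * (Y1 ω - a ω) ^ 2) * Z ω|m]
      =ᵐ[P] fun ω => (P[fun ω' => d ω' * (Y1 ω' - a ω') ^ 2|m]) ω * g₀ ω := by
  have hdae : AEStronglyMeasurable d P := hdm.aestronglyMeasurable
  have hZb : ∀ᵐ ω ∂P, ‖Z ω‖ ≤ 1 := Filter.Eventually.of_forall hZ1
  have hdb : ∀ᵐ ω ∂P, ‖d ω‖ ≤ 1 := Filter.Eventually.of_forall hd1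
  have hf1 : Integrable (fun ω => d ω * Y1 ω ^ 2) P := hY1sq.bdd_mul hdae hdb
  have hf2 : Integrable (fun ω => d ω * Y1 ω) P := hY1int.bdd_mul hdae hdb
  have hf3 : Integrable d P := by
    refine Integrable.mono' (integrable_const (1:ℝ)) hdae ?_
    exact Filter.Eventually.of_forall fun ω => hd1 ω
  have h2a : StronglyMeasurable[m] (fun ω => 2 * a ω) := stronglyMeasurable_const.mul ham
  have haa : StronglyMeasurable[m] (fun ω => a ω * a ω) := ham.mul ham
  have h2ab : ∀ᵐ ω ∂P, ‖2 * a ω‖ ≤ 2 * K := by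
    refine Filter.Eventually.of_forall fun ω => ?_
    rw [norm_mul, Real.norm_eq_abs, Real.norm_eq_abs, abs_two]
    exact mul_le_mul_of_nonneg_left (haK ω) (by norm_num)
  have haab : ∀ᵐ ω ∂P, ‖a ω * a ω‖ ≤ K * K := by
    refine Filter.Eventually.of_forall fun ω => ?_
    rw [norm_mul, Real.norm_eq_abs]
    exact mul_le_mul (haK ω) (haK ω) (abs_nonneg _) ((abs_nonneg _).trans (haK ω))
  have h2a_aesm : AEStronglyMeasurable (fun ω => 2 * a ω) P :=
    (h2a.mono hm).aestronglyMeasurable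
  have haa_aesm : AEStronglyMeasurable (fun ω => a ω * a ω) P :=
    (haa.mono hm).aestronglyMeasurable
  -- generic decomposition of the conditional expectation
  have hcd : ∀ b : Ω → ℝ,
      Integrable (fun ω => (d ω * Y1 ω ^ 2) * b ω) P →
      Integrable (fun ω => (d ω * Y1 ω) * b ω) P →
      Integrable (fun ω => d ω * b ω) P →
      P[fun ω => (d ω * (Y1 ω - a ω) ^ 2) * b ω|m] =ᵐ[P]
        fun ω => (P[fun ω' => (d ω' * Y1 ω' ^ 2) * b ω'|m]) ω
          - 2 * a ω * (P[fun ω' => (d ω' * Y1 ω') * b ω'|m]) ω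
          + a ω * a ω * (P[fun ω' => d ω' * b ω'|m]) ω := by
    intro b hb1 hb2 hb3
    have i2 : Integrable (fun ω => (2 * a ω) * ((d ω * Y1 ω) * b ω)) P :=
      hb2.bdd_mul h2a_aesm h2ab
    have i3 : Integrable (fun ω => (a ω * a ω) * (d ω * b ω)) P :=
      hb3.bdd_mul haa_aesm haab
    have e : (fun ω => (d ω * (Y1 ω - a ω) ^ 2) * b ω)
        = fun ω => ((d ω * Y1 ω ^ 2) * b ω - (2 * a ω) * ((d ω * Y1 ω) * b ω))
            + (a ω * a ω) * (d ω * b ω) := by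
      funext ω; ring
    rw [e]
    have hadd : P[(fun ω => (d ω * Y1 ω ^ 2) * b ω - (2 * a ω) * ((d ω * Y1 ω) * b ω))
          + fun ω => (a ω * a ω) * (d ω * b ω)|m] =ᵐ[P]
        P[fun ω => (d ω * Y1 ω ^ 2) * b ω - (2 * a ω) * ((d ω * Y1 ω) * b ω)|m]
          + P[fun ω => (a ω * a ω) * (d ω * b ω)|m] :=
      condExp_add (hb1.sub i2) i3 _
    have hsub : P[(fun ω => (d ω * Y1 ω ^ 2) * b ω)
          - fun ω => (2 * a ω) * ((d ω * Y1 ω) * b ω)|m] =ᵐ[P]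
        P[fun ω => (d ω * Y1 ω ^ 2) * b ω|m]
          - P[fun ω => (2 * a ω) * ((d ω * Y1 ω) * b ω)|m] :=
      condExp_sub hb1 i2 _
    have hp2 : P[(fun ω => 2 * a ω) * fun ω => (d ω * Y1 ω) * b ω|m] =ᵐ[P]
        (fun ω => 2 * a ω) * P[fun ω => (d ω * Y1 ω) * b ω|m] :=
      condExp_stronglyMeasurable_mul_of_bound hm h2a hb2 (2 * K) h2ab
    have hp3 : P[(fun ω => a ω * a ω) * fun ω => d ω * b ω|m] =ᵐ[P]
        (fun ω => a ω * a ω) * P[fun ω => d ω * b ω|m] :=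
      condExp_stronglyMeasurable_mul_of_bound hm haa hb3 (K * K) haab
    have hsub' : P[fun ω => (d ω * Y1 ω ^ 2) * b ω - (2 * a ω) * ((d ω * Y1 ω) * b ω)|m] =ᵐ[P]
        fun ω => (P[fun ω' => (d ω' * Y1 ω' ^ 2) * b ω'|m]) ω
          - (P[fun ω' => (2 * a ω') * ((d ω' * Y1 ω') * b ω')|m]) ω := hsub
    have hp2' : P[fun ω => (2 * a ω) * ((d ω * Y1 ω) * b ω)|m] =ᵐ[P]
        fun ω => 2 * a ω * (P[fun ω' => (d ω' * Y1 ω') * b ω'|m]) ω := hp2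
    have hp3' : P[fun ω => (a ω * a ω) * (d ω * b ω)|m] =ᵐ[P]
        fun ω => a ω * a ω * (P[fun ω' => d ω' * b ω'|m]) ω := hp3
    refine hadd.trans ?_
    filter_upwards [hsub', hp2', hp3'] with ω e1 e2 e3
    simp only [Pi.add_apply]
    rw [e1, e2, e3]
  have hZf1 : Integrable (fun ω => (d ω * Y1 ω ^ 2) * Z ω) P :=
    int_mul_bdd hf1 hZm.aestronglyMeasurable hZb
  have hZf2 : Integrable (fun ω => (d ω * Y1 ω) * Z ω) P :=
    int_mul_bdd hf2 hZm.aestronglyMeasurable hZb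
  have hZf3 : Integrable (fun ω => d ω * Z ω) P :=
    int_mul_bdd hf3 hZm.aestronglyMeasurable hZb
  have hone := hcd (fun _ => (1:ℝ)) (by simpa using hf1) (by simpa using hf2)
    (by simpa using hf3)
  simp only [mul_one] at hone
  refine (hcd Z hZf1 hZf2 hZf3).trans ?_
  filter_upwards [hc1, hc2, hc3, hone] with ω e1 e2 e3 e0
  rw [e1, e2, e3, e0]
  ring

end CondS

section MoreHelpers
variable {Ω : Type*} [m0 : MeasurableSpace Ω]

lemma sq_int {P : Measure Ω} [IsProbabilityMeasure P]
    {Y1 a : Ω → ℝ} {K : ℝ} (hY1m : Measurable Y1)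
    (hY1sq : Integrable (fun ω => Y1 ω ^ 2) P)
    (ham : AEStronglyMeasurable a P) (haK : ∀ ω, |a ω| ≤ K) :
    Integrable (fun ω => (Y1 ω - a ω) ^ 2) P := by
  have haesm : AEStronglyMeasurable (fun ω => (Y1 ω - a ω) ^ 2) P := by
    refine ((hY1m.aestronglyMeasurable.sub ham).mul
      (hY1m.aestronglyMeasurable.sub ham)).congr ?_
    exact Filter.Eventually.of_forall fun ω => (pow_two _).symm
  refine Integrable.mono' ((hY1sq.const_mul 2).add (integrable_const (2 * K ^ 2)))
    haesm ?_
  refine Filter.Eventually.of_forall fun ω => ?_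
  simp only [Pi.add_apply]
  rw [Real.norm_eq_abs, abs_of_nonneg (sq_nonneg _)]
  have h := abs_le.1 (haK ω)
  nlinarith [sq_nonneg (Y1 ω + a ω), h.1, h.2]

lemma abs_le_one_of_01 {x : ℝ} (h : x = 0 ∨ x = 1) : ‖x‖ ≤ 1 := by
  rcases h with h | h <;> rw [h] <;> norm_num

end MoreHelpers

/-- Kappa-reweighted least squares identifies the local average response
function under treatment: E[κ¹ (Y-μ(X))²] equals the complier-restricted
squared error, and the complier conditional mean μ₀ minimizes it. -/
theorem stmt16 {Ω 𝓧 : Type*} [MeasurableSpace Ω] [MeasurableSpace 𝓧]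
    (P : Measure Ω) [IsProbabilityMeasure P]
    (X : Ω → 𝓧) (hX : Measurable X)
    (Z D D0 D1 Y Y0 Y1 : Ω → ℝ)
    (hZm : Measurable Z) (hD0m : Measurable D0) (hD1m : Measurable D1)
    (hY0m : Measurable Y0) (hY1m : Measurable Y1)
    (hZ01 : ∀ ω, Z ω = 0 ∨ Z ω = 1)
    (hD0 : ∀ ω, D0 ω = 0 ∨ D0 ω = 1) (hD1 : ∀ ω, D1 ω = 0 ∨ D1 ω = 1)
    (hconsD : ∀ ω, D ω = Z ω * D1 ω + (1 - Z ω) * D0 ω)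
    (hconsY : ∀ ω, Y ω = D ω * Y1 ω + (1 - D ω) * Y0 ω)
    (hmono : ∀ᵐ ω ∂P, D0 ω ≤ D1 ω)
    (hY1sq : Integrable (fun ω => (Y1 ω) ^ 2) P)
    (g₀ : Ω → ℝ) (hg₀ : g₀ =ᵐ[P] P[Z | sigmaX X])
    (hpos : ∀ᵐ ω ∂P, 0 < g₀ ω ∧ g₀ ω < 1)
    -- conditional independence of (Y0, Y1, D0, D1) and Z given X
    (hindep : ∀ φ : ℝ × ℝ × ℝ × ℝ → ℝ, Measurable φ →
      Integrable (fun ω => φ (Y0 ω, Y1 ω, D0 ω, D1 ω)) P →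
      P[fun ω => φ (Y0 ω, Y1 ω, D0 ω, D1 ω) * Z ω | sigmaX X]
        =ᵐ[P] fun ω => (P[fun ω' => φ (Y0 ω', Y1 ω', D0 ω', D1 ω') | sigmaX X]) ω * g₀ ω)
    (κ1 : Ω → ℝ)
    (hκ1 : ∀ ω, κ1 ω = D ω * (Z ω - g₀ ω) / (g₀ ω * (1 - g₀ ω)))
    (hcompl : 0 < (P {ω | D0 ω < D1 ω}).toReal) :
    (∀ μ : 𝓧 → ℝ, Measurable μ → (∃ K, ∀ x, |μ x| ≤ K) →
      ∫ ω, κ1 ω * (Y ω - μ (X ω)) ^ 2 ∂P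
        = ∫ ω, (if D0 ω < D1 ω then (Y1 ω - μ (X ω)) ^ 2 else 0) ∂P) ∧
    (∀ μ₀ : 𝓧 → ℝ, Measurable μ₀ → (∃ K, ∀ x, |μ₀ x| ≤ K) →
      -- μ₀ is the complier conditional mean of Y(1) given X:
      ((fun ω => μ₀ (X ω) * (P[fun ω' => if D0 ω' < D1 ω' then (1 : ℝ) else 0 | sigmaX X]) ω)
          =ᵐ[P]
        P[fun ω' => Y1 ω' * (if D0 ω' < D1 ω' then (1 : ℝ) else 0) | sigmaX X]) →
      ∀ μ : 𝓧 → ℝ, Measurable μ → (∃ K, ∀ x, |μ x| ≤ K) →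
        ∫ ω, κ1 ω * (Y ω - μ₀ (X ω)) ^ 2 ∂P ≤ ∫ ω, κ1 ω * (Y ω - μ (X ω)) ^ 2 ∂P) := by
  have hm : sigmaX X ≤ ‹MeasurableSpace Ω› := hX.comap_le
  have hXm' : Measurable[sigmaX X] X := Measurable.of_comap_le le_rfl
  have hZb : ∀ ω, ‖Z ω‖ ≤ 1 := fun ω => abs_le_one_of_01 (hZ01 ω)
  have hD0b : ∀ ω, ‖D0 ω‖ ≤ 1 := fun ω => abs_le_one_of_01 (hD0 ω)
  have hD1b : ∀ ω, ‖D1 ω‖ ≤ 1 := fun ω => abs_le_one_of_01 (hD1 ω)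
  have hY1int : Integrable Y1 P := by
    refine Integrable.mono' (hY1sq.add (integrable_const 1))
      hY1m.aestronglyMeasurable ?_
    refine Filter.Eventually.of_forall fun ω => ?_
    simp only [Pi.add_apply]
    rw [Real.norm_eq_abs]
    nlinarith [sq_nonneg (|Y1 ω| - 1), sq_abs (Y1 ω), abs_nonneg (Y1 ω)]
  -- part 1
  have h1 : ∀ μ : 𝓧 → ℝ, Measurable μ → (∃ K, ∀ x, |μ x| ≤ K) →
      ∫ ω, κ1 ω * (Y ω - μ (X ω)) ^ 2 ∂P
        = ∫ ω, (if D0 ω < D1 ω then (Y1 ω - μ (X ω)) ^ 2 else 0) ∂P := by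
    rintro μ hμm ⟨K, hK⟩
    have haK : ∀ ω, |μ (X ω)| ≤ K := fun ω => hK (X ω)
    have ham : StronglyMeasurable[sigmaX X] (fun ω => μ (X ω)) :=
      (hμm.comp hXm').stronglyMeasurable
    have hSint : Integrable (fun ω => (Y1 ω - μ (X ω)) ^ 2) P :=
      sq_int hY1m hY1sq (hμm.comp hX).aestronglyMeasurable haK
    have hSaesm : AEStronglyMeasurable (fun ω => (Y1 ω - μ (X ω)) ^ 2) P := hSint.1
    -- conditional independence instances for d = D1
    have hcA1 : P[fun ω => (D1 ω * Y1 ω ^ 2) * Z ω|sigmaX X] =ᵐ[P]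
        fun ω => (P[fun ω' => D1 ω' * Y1 ω' ^ 2|sigmaX X]) ω * g₀ ω :=
      hindep (fun p => p.2.2.2 * p.2.1 ^ 2) (by fun_prop)
        (hY1sq.bdd_mul hD1m.aestronglyMeasurable (Filter.Eventually.of_forall hD1b))
    have hcA2 : P[fun ω => (D1 ω * Y1 ω) * Z ω|sigmaX X] =ᵐ[P]
        fun ω => (P[fun ω' => D1 ω' * Y1 ω'|sigmaX X]) ω * g₀ ω :=
      hindep (fun p => p.2.2.2 * p.2.1) (by fun_prop)
        (hY1int.bdd_mul hD1m.aestronglyMeasurable (Filter.Eventually.of_forall hD1b))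
    have hcA3 : P[fun ω => D1 ω * Z ω|sigmaX X] =ᵐ[P]
        fun ω => (P[D1|sigmaX X]) ω * g₀ ω :=
      hindep (fun p => p.2.2.2) (by fun_prop)
        (Integrable.mono' (integrable_const (1:ℝ)) hD1m.aestronglyMeasurable
          (Filter.Eventually.of_forall hD1b))
    have hcondA : P[fun ω => (D1 ω * (Y1 ω - μ (X ω)) ^ 2) * Z ω|sigmaX X] =ᵐ[P]
        fun ω => (P[fun ω' => D1 ω' * (Y1 ω' - μ (X ω')) ^ 2|sigmaX X]) ω * g₀ ω :=
      condS hm P hZm hZb hD1m hD1b hY1sq hY1int ham haK hcA1 hcA2 hcA3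
    -- conditional independence instances for d = D0
    have hcB1 : P[fun ω => (D0 ω * Y1 ω ^ 2) * Z ω|sigmaX X] =ᵐ[P]
        fun ω => (P[fun ω' => D0 ω' * Y1 ω' ^ 2|sigmaX X]) ω * g₀ ω :=
      hindep (fun p => p.2.2.1 * p.2.1 ^ 2) (by fun_prop)
        (hY1sq.bdd_mul hD0m.aestronglyMeasurable (Filter.Eventually.of_forall hD0b))
    have hcB2 : P[fun ω => (D0 ω * Y1 ω) * Z ω|sigmaX X] =ᵐ[P]
        fun ω => (P[fun ω' => D0 ω' * Y1 ω'|sigmaX X]) ω * g₀ ω :=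
      hindep (fun p => p.2.2.1 * p.2.1) (by fun_prop)
        (hY1int.bdd_mul hD0m.aestronglyMeasurable (Filter.Eventually.of_forall hD0b))
    have hcB3 : P[fun ω => D0 ω * Z ω|sigmaX X] =ᵐ[P]
        fun ω => (P[D0|sigmaX X]) ω * g₀ ω :=
      hindep (fun p => p.2.2.1) (by fun_prop)
        (Integrable.mono' (integrable_const (1:ℝ)) hD0m.aestronglyMeasurable
          (Filter.Eventually.of_forall hD0b))
    have hcondB : P[fun ω => (D0 ω * (Y1 ω - μ (X ω)) ^ 2) * Z ω|sigmaX X] =ᵐ[P]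
        fun ω => (P[fun ω' => D0 ω' * (Y1 ω' - μ (X ω')) ^ 2|sigmaX X]) ω * g₀ ω :=
      condS hm P hZm hZb hD0m hD0b hY1sq hY1int ham haK hcB1 hcB2 hcB3
    -- integrability of the pieces
    have hT1int : Integrable (fun ω => D1 ω * (Y1 ω - μ (X ω)) ^ 2) P :=
      hSint.bdd_mul hD1m.aestronglyMeasurable (Filter.Eventually.of_forall hD1b)
    have hT0int : Integrable (fun ω => D0 ω * (Y1 ω - μ (X ω)) ^ 2) P :=
      hSint.bdd_mul hD0m.aestronglyMeasurable (Filter.Eventually.of_forall hD0b)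
    have hT1nn : ∀ ω, 0 ≤ D1 ω * (Y1 ω - μ (X ω)) ^ 2 := fun ω =>
      mul_nonneg (by rcases hD1 ω with h | h <;> rw [h] <;> norm_num) (sq_nonneg _)
    have hT0nn : ∀ ω, 0 ≤ D0 ω * (Y1 ω - μ (X ω)) ^ 2 := fun ω =>
      mul_nonneg (by rcases hD0 ω with h | h <;> rw [h] <;> norm_num) (sq_nonneg _)
    -- the two key identities
    have KA := key_int hm P hZ01 hZm hT1int hT1nn hg₀ hpos hcondA
    -- the flipped instrument
    have hZ'01 : ∀ ω, 1 - Z ω = 0 ∨ 1 - Z ω = 1 := by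
      intro ω; rcases hZ01 ω with h | h <;> rw [h] <;> [right; left] <;> norm_num
    have hZ'm : Measurable (fun ω => 1 - Z ω) := measurable_const.sub hZm
    have hZint : Integrable Z P :=
      Integrable.mono' (integrable_const (1:ℝ)) hZm.aestronglyMeasurable
        (Filter.Eventually.of_forall hZb)
    have hg' : (fun ω => 1 - g₀ ω) =ᵐ[P] P[fun ω => 1 - Z ω|sigmaX X] := by
      have hsub : P[fun ω => 1 - Z ω|sigmaX X] =ᵐ[P]
          fun ω => (P[fun _ : Ω => (1:ℝ)|sigmaX X]) ω - (P[Z|sigmaX X]) ω :=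
        condExp_sub (integrable_const 1) hZint _
      have hcst : P[fun _ : Ω => (1:ℝ)|sigmaX X] = fun _ => 1 := condExp_const hm 1
      filter_upwards [hsub, hg₀] with ω e1 e2
      rw [e1, hcst, e2]
    have hpos' : ∀ᵐ ω ∂P, 0 < 1 - g₀ ω ∧ 1 - g₀ ω < 1 := by
      filter_upwards [hpos] with ω h
      constructor <;> linarith [h.1, h.2]
    have hT0Zint : Integrable (fun ω => (D0 ω * (Y1 ω - μ (X ω)) ^ 2) * Z ω) P :=
      int_mul_bdd hT0int hZm.aestronglyMeasurable (Filter.Eventually.of_forall hZb)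
    have hcondB' : P[fun ω => (D0 ω * (Y1 ω - μ (X ω)) ^ 2) * (1 - Z ω)|sigmaX X] =ᵐ[P]
        fun ω => (P[fun ω' => D0 ω' * (Y1 ω' - μ (X ω')) ^ 2|sigmaX X]) ω * (1 - g₀ ω) := by
      have e : (fun ω => (D0 ω * (Y1 ω - μ (X ω)) ^ 2) * (1 - Z ω))
          = fun ω => D0 ω * (Y1 ω - μ (X ω)) ^ 2
              - (D0 ω * (Y1 ω - μ (X ω)) ^ 2) * Z ω := by
        funext ω; ring
      rw [e]
      have hsub2 : P[fun ω => D0 ω * (Y1 ω - μ (X ω)) ^ 2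
            - (D0 ω * (Y1 ω - μ (X ω)) ^ 2) * Z ω|sigmaX X] =ᵐ[P]
          fun ω => (P[fun ω' => D0 ω' * (Y1 ω' - μ (X ω')) ^ 2|sigmaX X]) ω
            - (P[fun ω' => (D0 ω' * (Y1 ω' - μ (X ω')) ^ 2) * Z ω'|sigmaX X]) ω :=
        condExp_sub hT0int hT0Zint _
      refine hsub2.trans ?_
      filter_upwards [hcondB] with ω e1
      rw [e1]; ring
    have KB := key_int hm P hZ'01 hZ'm hT0int hT0nn hg' hpos' hcondB'
    -- pointwise identity
    have hpt : ∀ᵐ ω ∂P, κ1 ω * (Y ω - μ (X ω)) ^ 2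
        = Z ω * (D1 ω * (Y1 ω - μ (X ω)) ^ 2) / g₀ ω
          - (1 - Z ω) * (D0 ω * (Y1 ω - μ (X ω)) ^ 2) / (1 - g₀ ω) := by
      filter_upwards [hpos] with ω h
      have hg0 : g₀ ω ≠ 0 := ne_of_gt h.1
      have hg1 : (1:ℝ) - g₀ ω ≠ 0 := ne_of_gt (by linarith [h.2])
      rw [hκ1 ω, hconsY ω, hconsD ω]
      rcases hZ01 ω with hz | hz <;> rcases hD0 ω with h0' | h0' <;>
        rcases hD1 ω with h1' | h1' <;> rw [hz, h0', h1'] <;>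
        field_simp <;> ring
    -- assemble
    calc ∫ ω, κ1 ω * (Y ω - μ (X ω)) ^ 2 ∂P
        = ∫ ω, (Z ω * (D1 ω * (Y1 ω - μ (X ω)) ^ 2) / g₀ ω
            - (1 - Z ω) * (D0 ω * (Y1 ω - μ (X ω)) ^ 2) / (1 - g₀ ω)) ∂P :=
          integral_congr_ae hpt
      _ = (∫ ω, Z ω * (D1 ω * (Y1 ω - μ (X ω)) ^ 2) / g₀ ω ∂P)
            - ∫ ω, (1 - Z ω) * (D0 ω * (Y1 ω - μ (X ω)) ^ 2) / (1 - g₀ ω) ∂P :=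
          integral_sub KA.1 KB.1
      _ = (∫ ω, D1 ω * (Y1 ω - μ (X ω)) ^ 2 ∂P)
            - ∫ ω, D0 ω * (Y1 ω - μ (X ω)) ^ 2 ∂P := by rw [KA.2, KB.2]
      _ = ∫ ω, (D1 ω * (Y1 ω - μ (X ω)) ^ 2 - D0 ω * (Y1 ω - μ (X ω)) ^ 2) ∂P :=
          (integral_sub hT1int hT0int).symm
      _ = ∫ ω, (if D0 ω < D1 ω then (Y1 ω - μ (X ω)) ^ 2 else 0) ∂P := by
          refine integral_congr_ae ?_
          filter_upwards [hmono] with ω h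
          rcases hD0 ω with h0' | h0' <;> rcases hD1 ω with h1' | h1'
          · simp [h0', h1']
          · rw [h0', h1']; norm_num
          · exfalso; rw [h0', h1'] at h; linarith
          · rw [h0', h1']; simp
  refine ⟨h1, ?_⟩
  rintro μ₀ hμ₀m ⟨K₀, hK₀⟩ hyp μ hμm ⟨K, hK⟩
  rw [h1 μ₀ hμ₀m ⟨K₀, hK₀⟩, h1 μ hμm ⟨K, hK⟩]
  have hc1m : Measurable (fun ω => if D0 ω < D1 ω then (1:ℝ) else 0) :=
    Measurable.ite (measurableSet_lt hD0m hD1m) measurable_const measurable_const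
  have hc1b : ∀ ω, ‖(if D0 ω < D1 ω then (1:ℝ) else 0)‖ ≤ 1 := fun ω => by
    by_cases h : D0 ω < D1 ω <;> simp [h]
  have hc1nn : ∀ ω, (0:ℝ) ≤ (if D0 ω < D1 ω then (1:ℝ) else 0) := fun ω => by
    by_cases h : D0 ω < D1 ω <;> simp [h]
  have hrw : ∀ ν : 𝓧 → ℝ,
      ∫ ω, (if D0 ω < D1 ω then (Y1 ω - ν (X ω)) ^ 2 else 0) ∂P
        = ∫ ω, (if D0 ω < D1 ω then (1:ℝ) else 0) * (Y1 ω - ν (X ω)) ^ 2 ∂P := by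
    intro ν
    refine integral_congr_ae (Filter.Eventually.of_forall fun ω => ?_)
    by_cases h : D0 ω < D1 ω <;> simp [h]
  rw [hrw μ₀, hrw μ]
  have haK₀ : ∀ ω, |μ₀ (X ω)| ≤ K₀ := fun ω => hK₀ (X ω)
  have haK : ∀ ω, |μ (X ω)| ≤ K := fun ω => hK (X ω)
  have ham₀ : StronglyMeasurable[sigmaX X] (fun ω => μ₀ (X ω)) :=
    (hμ₀m.comp hXm').stronglyMeasurable
  have ham : StronglyMeasurable[sigmaX X] (fun ω => μ (X ω)) :=
    (hμm.comp hXm').stronglyMeasurable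
  have hfSM : StronglyMeasurable[sigmaX X] (fun ω => μ₀ (X ω) - μ (X ω)) := ham₀.sub ham
  have hfaesm : AEStronglyMeasurable (fun ω => μ₀ (X ω) - μ (X ω)) P :=
    ((hμ₀m.comp hX).sub (hμm.comp hX)).aestronglyMeasurable
  have hfb : ∀ᵐ ω ∂P, ‖μ₀ (X ω) - μ (X ω)‖ ≤ K₀ + K := by
    refine Filter.Eventually.of_forall fun ω => ?_
    calc ‖μ₀ (X ω) - μ (X ω)‖ ≤ ‖μ₀ (X ω)‖ + ‖μ (X ω)‖ := norm_sub_le _ _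
      _ ≤ K₀ + K := add_le_add (haK₀ ω) (haK ω)
  have hSint₀ : Integrable (fun ω => (Y1 ω - μ₀ (X ω)) ^ 2) P :=
    sq_int hY1m hY1sq (hμ₀m.comp hX).aestronglyMeasurable haK₀
  have hSint : Integrable (fun ω => (Y1 ω - μ (X ω)) ^ 2) P :=
    sq_int hY1m hY1sq (hμm.comp hX).aestronglyMeasurable haK
  have hc1Sμ₀ : Integrable
      (fun ω => (if D0 ω < D1 ω then (1:ℝ) else 0) * (Y1 ω - μ₀ (X ω)) ^ 2) P :=
    hSint₀.bdd_mul hc1m.aestronglyMeasurable (Filter.Eventually.of_forall hc1b)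
  have hY1c1 : Integrable (fun ω => Y1 ω * (if D0 ω < D1 ω then (1:ℝ) else 0)) P :=
    int_mul_bdd hY1int hc1m.aestronglyMeasurable (Filter.Eventually.of_forall hc1b)
  have hμ₀c1 : Integrable (fun ω => μ₀ (X ω) * (if D0 ω < D1 ω then (1:ℝ) else 0)) P := by
    refine Integrable.mono' (integrable_const K₀)
      ((hμ₀m.comp hX).aestronglyMeasurable.mul hc1m.aestronglyMeasurable) ?_
    refine Filter.Eventually.of_forall fun ω => ?_
    calc ‖μ₀ (X ω) * (if D0 ω < D1 ω then (1:ℝ) else 0)‖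
        = ‖μ₀ (X ω)‖ * ‖(if D0 ω < D1 ω then (1:ℝ) else 0)‖ := norm_mul _ _
      _ ≤ K₀ * 1 := mul_le_mul (haK₀ ω) (hc1b ω) (norm_nonneg _)
          ((abs_nonneg _).trans (haK₀ ω))
      _ = K₀ := mul_one _
  have hc1int : Integrable (fun ω => if D0 ω < D1 ω then (1:ℝ) else 0) P :=
    Integrable.mono' (integrable_const (1:ℝ)) hc1m.aestronglyMeasurable
      (Filter.Eventually.of_forall hc1b)
  -- the cross term vanishes
  have pull1 : ∫ ω, (μ₀ (X ω) - μ (X ω)) * (Y1 ω * (if D0 ω < D1 ω then (1:ℝ) else 0)) ∂P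
      = ∫ ω, (μ₀ (X ω) - μ (X ω))
          * (P[fun ω' => Y1 ω' * (if D0 ω' < D1 ω' then (1:ℝ) else 0)|sigmaX X]) ω ∂P :=
    pullout_int hm P hfSM hfb hY1c1
  have hWSM : StronglyMeasurable[sigmaX X] (fun ω => (μ₀ (X ω) - μ (X ω)) * μ₀ (X ω)) :=
    hfSM.mul ham₀
  have hWb : ∀ᵐ ω ∂P, ‖(μ₀ (X ω) - μ (X ω)) * μ₀ (X ω)‖ ≤ (K₀ + K) * K₀ := by
    refine Filter.Eventually.of_forall fun ω => ?_
    rw [norm_mul]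
    refine mul_le_mul ?_ (haK₀ ω) (norm_nonneg _) ?_
    · calc ‖μ₀ (X ω) - μ (X ω)‖ ≤ ‖μ₀ (X ω)‖ + ‖μ (X ω)‖ := norm_sub_le _ _
        _ ≤ K₀ + K := add_le_add (haK₀ ω) (haK ω)
    · have h0 : (0:ℝ) ≤ K₀ := (abs_nonneg _).trans (haK₀ ω)
      have h1 : (0:ℝ) ≤ K := (abs_nonneg _).trans (haK ω)
      linarith
  have pull2 : ∫ ω, ((μ₀ (X ω) - μ (X ω)) * μ₀ (X ω))
        * (if D0 ω < D1 ω then (1:ℝ) else 0) ∂P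
      = ∫ ω, ((μ₀ (X ω) - μ (X ω)) * μ₀ (X ω))
          * (P[fun ω' => if D0 ω' < D1 ω' then (1:ℝ) else 0|sigmaX X]) ω ∂P :=
    pullout_int hm P hWSM hWb hc1int
  have hcross : ∫ ω, (μ₀ (X ω) - μ (X ω)) * (Y1 ω * (if D0 ω < D1 ω then (1:ℝ) else 0)) ∂P
      = ∫ ω, (μ₀ (X ω) - μ (X ω)) * (μ₀ (X ω) * (if D0 ω < D1 ω then (1:ℝ) else 0)) ∂P := by
    rw [pull1]
    have e1 : ∫ ω, (μ₀ (X ω) - μ (X ω))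
          * (P[fun ω' => Y1 ω' * (if D0 ω' < D1 ω' then (1:ℝ) else 0)|sigmaX X]) ω ∂P
        = ∫ ω, ((μ₀ (X ω) - μ (X ω)) * μ₀ (X ω))
          * (P[fun ω' => if D0 ω' < D1 ω' then (1:ℝ) else 0|sigmaX X]) ω ∂P := by
      refine integral_congr_ae ?_
      filter_upwards [hyp] with ω h
      rw [← h]; ring
    rw [e1, ← pull2]
    exact integral_congr_ae (Filter.Eventually.of_forall fun ω => by ring)
  -- the quadratic term is nonnegative
  have hfq : Integrable
      (fun ω => (if D0 ω < D1 ω then (1:ℝ) else 0) * (μ₀ (X ω) - μ (X ω)) ^ 2) P := by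
    refine Integrable.mono' (integrable_const ((K₀ + K) ^ 2))
      (hc1m.aestronglyMeasurable.mul
        ((((hμ₀m.comp hX).sub (hμm.comp hX)).pow_const 2).aestronglyMeasurable)) ?_
    refine Filter.Eventually.of_forall fun ω => ?_
    have hfKb : |μ₀ (X ω) - μ (X ω)| ≤ K₀ + K := by
      calc |μ₀ (X ω) - μ (X ω)| ≤ |μ₀ (X ω)| + |μ (X ω)| := abs_sub _ _
        _ ≤ K₀ + K := add_le_add (haK₀ ω) (haK ω)
    have h := abs_le.1 hfKb
    rw [norm_mul, Real.norm_eq_abs ((μ₀ (X ω) - μ (X ω)) ^ 2),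
      abs_of_nonneg (sq_nonneg (μ₀ (X ω) - μ (X ω)))]
    calc ‖(if D0 ω < D1 ω then (1:ℝ) else 0)‖ * (μ₀ (X ω) - μ (X ω)) ^ 2
        ≤ 1 * (K₀ + K) ^ 2 :=
          mul_le_mul (hc1b ω) (by nlinarith [h.1, h.2]) (sq_nonneg _) one_pos.le
      _ = (K₀ + K) ^ 2 := one_mul _
  have ht3 : Integrable (fun ω => (μ₀ (X ω) - μ (X ω))
      * (Y1 ω * (if D0 ω < D1 ω then (1:ℝ) else 0))) P :=
    hY1c1.bdd_mul hfaesm hfb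
  have ht4 : Integrable (fun ω => (μ₀ (X ω) - μ (X ω))
      * (μ₀ (X ω) * (if D0 ω < D1 ω then (1:ℝ) else 0))) P :=
    hμ₀c1.bdd_mul hfaesm hfb
  have key : ∫ ω, (if D0 ω < D1 ω then (1:ℝ) else 0) * (Y1 ω - μ (X ω)) ^ 2 ∂P
      = ∫ ω, ((if D0 ω < D1 ω then (1:ℝ) else 0) * (Y1 ω - μ₀ (X ω)) ^ 2
          + ((if D0 ω < D1 ω then (1:ℝ) else 0) * (μ₀ (X ω) - μ (X ω)) ^ 2
            + 2 * ((μ₀ (X ω) - μ (X ω)) * (Y1 ω * (if D0 ω < D1 ω then (1:ℝ) else 0))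
              - (μ₀ (X ω) - μ (X ω)) * (μ₀ (X ω) * (if D0 ω < D1 ω then (1:ℝ) else 0))))) ∂P :=
    integral_congr_ae (Filter.Eventually.of_forall fun ω => by ring)
  have hH : Integrable (fun ω =>
      2 * ((μ₀ (X ω) - μ (X ω)) * (Y1 ω * (if D0 ω < D1 ω then (1:ℝ) else 0))
        - (μ₀ (X ω) - μ (X ω)) * (μ₀ (X ω) * (if D0 ω < D1 ω then (1:ℝ) else 0)))) P :=
    (ht3.sub ht4).const_mul 2
  have hG : Integrable (fun ω =>
      (if D0 ω < D1 ω then (1:ℝ) else 0) * (μ₀ (X ω) - μ (X ω)) ^ 2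
        + 2 * ((μ₀ (X ω) - μ (X ω)) * (Y1 ω * (if D0 ω < D1 ω then (1:ℝ) else 0))
          - (μ₀ (X ω) - μ (X ω)) * (μ₀ (X ω) * (if D0 ω < D1 ω then (1:ℝ) else 0)))) P :=
    hfq.add hH
  rw [key, integral_add hc1Sμ₀ hG, integral_add hfq hH, integral_const_mul 2 _,
    integral_sub ht3 ht4]
  have hz : ∫ ω, (μ₀ (X ω) - μ (X ω)) * (Y1 ω * (if D0 ω < D1 ω then (1:ℝ) else 0)) ∂P
      - ∫ ω, (μ₀ (X ω) - μ (X ω)) * (μ₀ (X ω) * (if D0 ω < D1 ω then (1:ℝ) else 0)) ∂P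
      = 0 := sub_eq_zero.2 hcross
  have hq : 0 ≤ ∫ ω, (if D0 ω < D1 ω then (1:ℝ) else 0) * (μ₀ (X ω) - μ (X ω)) ^ 2 ∂P :=
    integral_nonneg fun ω => mul_nonneg (hc1nn ω) (sq_nonneg _)
  linarith [hz, hq]
end
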